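/- arXiv:2103.11060 — 9 statements merged into one kernel-verified Lean document; each statement's English description precedes it below -/
import Mathlib

section
/- Let U ⊆ ℝ^n be open, a > 0, k ≥ 1, and let f : U × (−a,a) → ℝ^m be of class C^k. Let r be a natural number with 1 ≤ r ≤ k. Define R_r : U × (−a,a) → ℝ^m by R_r(x,h) = (r/h^r)·∫₀^h (h−t)^{r−1} D₂^r f(x,t) dt for h ≠ 0 and R_r(x,0) = D₂^r f(x,0). Then for all (x,h) ∈ U × (−a,a), f(x,h) = Σ_{j=0}^{r−1} (h^j/j!) · D₂^j f(x,0) + (h^r/r!) · R_r(x,h), and moreover R_r is of class C^{k−r} on U × (−a,a). -/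
open Set MeasureTheory intervalIntegral

noncomputable section

/-- Partial derivative in the second (real) variable. -/
def pd2 {E F : Type*} [NormedAddCommGroup E] [NormedSpace ℝ E]
    [NormedAddCommGroup F] [NormedSpace ℝ F] (g : E × ℝ → F) : E × ℝ → F :=
  fun z => fderiv ℝ g z (0, 1)

set_option synthInstance.maxHeartbeats 1000000 in
/-- `C^p` smoothness of parametric interval integrals over `[0,1]`. -/
theorem contDiffOn_parametric_intervalIntegral (p : ℕ) :
    ∀ {E' F' : Type} [NormedAddCommGroup E'] [NormedSpace ℝ E'] [ProperSpace E']
      [NormedAddCommGroup F'] [NormedSpace ℝ F'] [CompleteSpace F']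
      (Ψ : ℝ × E' → F') (W : Set E') (T : Set (ℝ × E')),
      IsOpen W → IsOpen T → (Icc (0:ℝ) 1 ×ˢ W ⊆ T) → ContDiffOn ℝ p Ψ T →
      ContDiffOn ℝ (p : ℕ) (fun z => ∫ s in (0:ℝ)..1, Ψ (s, z)) W := by
  induction p with
  | zero =>
    intro E' F' _ _ _ _ _ _ Ψ W T hW hT hsub hΨ
    rw [Nat.cast_zero, contDiffOn_zero]
    have hmeas : ∀ z ∈ W, AEStronglyMeasurable (fun s => Ψ (s, z))
        (volume.restrict (Ioc (0:ℝ) 1)) := by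
      intro z hz
      have hc : ContinuousOn (fun s => Ψ (s, z)) (Icc (0:ℝ) 1) :=
        hΨ.continuousOn.comp (by fun_prop) (fun s hs => hsub ⟨hs, hz⟩)
      exact (hc.aestronglyMeasurable measurableSet_Icc).mono_measure
        (Measure.restrict_mono Ioc_subset_Icc_self le_rfl)
    intro z₀ hz₀
    apply ContinuousAt.continuousWithinAt
    obtain ⟨ε, hε, hball⟩ := Metric.nhds_basis_closedBall.mem_iff.1 (hW.mem_nhds hz₀)
    have hC : IsCompact (Icc (0:ℝ) 1 ×ˢ Metric.closedBall z₀ ε) :=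
      isCompact_Icc.prod (isCompact_closedBall _ _)
    obtain ⟨M, hM⟩ := hC.exists_bound_of_continuousOn
      (hΨ.continuousOn.mono (fun w hw => hsub ⟨hw.1, hball hw.2⟩))
    simp only [intervalIntegral.integral_of_le (zero_le_one (α := ℝ))]
    apply MeasureTheory.continuousAt_of_dominated (bound := fun _ => M)
    · filter_upwards [hW.mem_nhds hz₀] with z hz using hmeas z hz
    · filter_upwards [Metric.closedBall_mem_nhds z₀ hε] with z hz
      refine (ae_restrict_iff' measurableSet_Ioc).2 (ae_of_all _ fun s hs => ?_)
      exact hM (s, z) ⟨Ioc_subset_Icc_self hs, hz⟩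
    · exact integrableOn_const measure_Ioc_lt_top.ne
    · refine (ae_restrict_iff' measurableSet_Ioc).2 (ae_of_all _ fun s hs => ?_)
      have h1 : ContinuousAt Ψ (s, z₀) :=
        hΨ.continuousOn.continuousAt (hT.mem_nhds (hsub ⟨Ioc_subset_Icc_self hs, hz₀⟩))
      exact h1.comp ((Continuous.prodMk continuous_const continuous_id).continuousAt)
  | succ p IH =>
    intro E' F' _ _ _ _ _ _ Ψ W T hW hT hsub hΨ
    set Ψ' : ℝ × E' → (E' →L[ℝ] F') :=
      fun w => (fderiv ℝ Ψ w).comp (ContinuousLinearMap.inr ℝ ℝ E') with hΨ'def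
    have hfd : ContDiffOn ℝ p (fderiv ℝ Ψ) T :=
      hΨ.fderiv_of_isOpen hT (by exact_mod_cast le_rfl)
    have hΨ' : ContDiffOn ℝ p Ψ' T := hfd.clm_comp contDiffOn_const
    have hdiffΨ : ∀ s (z : E'), (s, z) ∈ T →
        HasFDerivAt (fun y => Ψ (s, y)) (Ψ' (s, z)) z := by
      intro s z hw
      have hd : DifferentiableAt ℝ Ψ (s, z) :=
        ((hΨ.differentiableOn (by simp)).differentiableAt
          (hT.mem_nhds hw))
      exact hd.hasFDerivAt.comp z (hasFDerivAt_prodMk_right s z)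
    have hmeas : ∀ z ∈ W, AEStronglyMeasurable (fun s => Ψ (s, z))
        (volume.restrict (uIoc (0:ℝ) 1)) := by
      intro z hz
      have hc : ContinuousOn (fun s => Ψ (s, z)) (Icc (0:ℝ) 1) :=
        hΨ.continuousOn.comp (by fun_prop) (fun s hs => hsub ⟨hs, hz⟩)
      rw [uIoc_of_le (zero_le_one (α := ℝ))]
      exact (hc.aestronglyMeasurable measurableSet_Icc).mono_measure
        (Measure.restrict_mono Ioc_subset_Icc_self le_rfl)
    have hkey : ∀ z₀ ∈ W, HasFDerivAt (fun z => ∫ s in (0:ℝ)..1, Ψ (s, z))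
        (∫ s in (0:ℝ)..1, Ψ' (s, z₀)) z₀ := by
      intro z₀ hz₀
      obtain ⟨ε, hε, hball⟩ := Metric.nhds_basis_closedBall.mem_iff.1 (hW.mem_nhds hz₀)
      have hC : IsCompact (Icc (0:ℝ) 1 ×ˢ Metric.closedBall z₀ ε) :=
        isCompact_Icc.prod (isCompact_closedBall _ _)
      obtain ⟨M, hM⟩ := hC.exists_bound_of_continuousOn
        (hΨ'.continuousOn.mono (fun w hw => hsub ⟨hw.1, hball hw.2⟩))
      apply intervalIntegral.hasFDerivAt_integral_of_dominated_of_fderiv_le (𝕜 := ℝ)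
        (bound := fun _ => M) (F' := fun z s => Ψ' (s, z)) (Metric.ball_mem_nhds z₀ hε)
      · filter_upwards [hW.mem_nhds hz₀] with z hz using hmeas z hz
      · refine (ContinuousOn.intervalIntegrable ?_)
        rw [uIcc_of_le (zero_le_one (α := ℝ))]
        exact hΨ.continuousOn.comp (by fun_prop) (fun s hs => hsub ⟨hs, hz₀⟩)
      · rw [uIoc_of_le (zero_le_one (α := ℝ))]
        have hc : ContinuousOn (fun s => Ψ' (s, z₀)) (Icc (0:ℝ) 1) :=
          hΨ'.continuousOn.comp (by fun_prop) (fun s hs => hsub ⟨hs, hz₀⟩)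
        exact (hc.aestronglyMeasurable measurableSet_Icc).mono_measure
          (Measure.restrict_mono Ioc_subset_Icc_self le_rfl)
      · refine ae_of_all _ fun s hs z hz => ?_
        rw [uIoc_of_le (zero_le_one (α := ℝ))] at hs
        exact hM (s, z) ⟨Ioc_subset_Icc_self hs, Metric.ball_subset_closedBall hz⟩
      · exact intervalIntegrable_const
      · refine ae_of_all _ fun s hs z hz => ?_
        rw [uIoc_of_le (zero_le_one (α := ℝ))] at hs
        exact hdiffΨ s z (hsub ⟨Ioc_subset_Icc_self hs,
          hball (Metric.ball_subset_closedBall hz)⟩)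
    rw [show ((p + 1 : ℕ) : WithTop ℕ∞) = (p : WithTop ℕ∞) + 1 by push_cast; rfl,
      contDiffOn_succ_iff_fderiv_of_isOpen hW]
    refine ⟨fun z hz => (hkey z hz).differentiableAt.differentiableWithinAt, by simp, ?_⟩
    exact (IH Ψ' W T hW hT hsub hΨ').congr fun z hz => (hkey z hz).fderiv

/-- Parameterized Taylor theorem (Whitney): a `C^k` function `f` on `U × (−a,a)` equals its
Taylor polynomial of order `r−1` in the second variable plus `(h^r/r!)` times the integral
remainder `R_r`, and the remainder is of class `C^{k−r}`. -/
theorem taylor_parameterized_integral_remainder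
    {n m : ℕ} (U : Set (EuclideanSpace ℝ (Fin n))) (hU : IsOpen U)
    (a : ℝ) (ha : 0 < a) (k : ℕ) (hk : 1 ≤ k)
    (f : EuclideanSpace ℝ (Fin n) × ℝ → EuclideanSpace ℝ (Fin m))
    (hf : ContDiffOn ℝ k f (U ×ˢ Ioo (-a) a))
    (r : ℕ) (hr1 : 1 ≤ r) (hrk : r ≤ k)
    (R : EuclideanSpace ℝ (Fin n) × ℝ → EuclideanSpace ℝ (Fin m))
    (hR : ∀ (x : EuclideanSpace ℝ (Fin n)) (h : ℝ), h ≠ 0 →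
      R (x, h) = ((r : ℝ) / h ^ r) •
        ∫ t in (0 : ℝ)..h, ((h - t) ^ (r - 1)) •
          iteratedDerivWithin r (fun s => f (x, s)) (Ioo (-a) a) t)
    (hR0 : ∀ x : EuclideanSpace ℝ (Fin n),
      R (x, 0) = iteratedDerivWithin r (fun s => f (x, s)) (Ioo (-a) a) 0) :
    (∀ x ∈ U, ∀ h ∈ Ioo (-a) a,
      f (x, h) =
        (∑ j ∈ Finset.range r, (h ^ j / (j.factorial : ℝ)) •
            iteratedDerivWithin j (fun s => f (x, s)) (Ioo (-a) a) 0) +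
          (h ^ r / (r.factorial : ℝ)) • R (x, h)) ∧
    ContDiffOn ℝ (k - r : ℕ) R (U ×ˢ Ioo (-a) a) := by
  have h0mem : (0:ℝ) ∈ Ioo (-a) a := ⟨by linarith, ha⟩
  set Ω : Set (EuclideanSpace ℝ (Fin n) × ℝ) := U ×ˢ Ioo (-a) a with hΩdef
  have hΩ : IsOpen Ω := hU.prod isOpen_Ioo
  -- joint smoothness of iterated partial derivatives
  have hg : ∀ j, j ≤ k → ContDiffOn ℝ ((k - j : ℕ)) (pd2^[j] f) Ω := by
    intro j
    induction j with
    | zero => intro _; simpa using hf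
    | succ j IHj =>
      intro hjk
      have IH' := IHj (by omega)
      rw [Function.iterate_succ_apply']
      have h1 : ContDiffOn ℝ ((k - (j+1) : ℕ)) (fun z => fderiv ℝ (pd2^[j] f) z) Ω :=
        IH'.fderiv_of_isOpen hΩ (by exact_mod_cast (by omega : (k - (j+1)) + 1 ≤ k - j))
      exact h1.clm_apply contDiffOn_const
  -- identification with iteratedDerivWithin in the second variable
  have hgB : ∀ j, j ≤ k → ∀ x ∈ U, ∀ t ∈ Ioo (-a) a,
      iteratedDerivWithin j (fun s => f (x, s)) (Ioo (-a) a) t = pd2^[j] f (x, t) := by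
    intro j
    induction j with
    | zero => intro _ x hx t ht; simp
    | succ j IHj =>
      intro hjk x hx t ht
      have hjk' : j ≤ k := by omega
      rw [Function.iterate_succ_apply',
        iteratedDerivWithin_succ,
        derivWithin_of_isOpen isOpen_Ioo ht]
      have heq : (iteratedDerivWithin j (fun s => f (x, s)) (Ioo (-a) a)) =ᶠ[nhds t]
          (fun s => pd2^[j] f (x, s)) :=
        Filter.eventuallyEq_of_mem (isOpen_Ioo.mem_nhds ht) (fun s hs => IHj hjk' x hx s hs)
      rw [heq.deriv_eq]
      have hd : DifferentiableAt ℝ (pd2^[j] f) (x, t) := by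
        have h1 : (1 : WithTop ℕ∞) ≤ ((k - j : ℕ)) := by
          exact_mod_cast (by omega : 1 ≤ k - j)
        exact ((hg j hjk').differentiableOn (by exact_mod_cast (by omega : k - j ≠ 0))).differentiableAt (hΩ.mem_nhds ⟨hx, ht⟩)
      have hder : HasDerivAt (fun s => pd2^[j] f (x, s))
          (fderiv ℝ (pd2^[j] f) (x, t) (0, 1)) t :=
        hd.hasFDerivAt.comp_hasDerivAt t ((hasDerivAt_const t x).prodMk (hasDerivAt_id t))
      exact hder.deriv
  set G : EuclideanSpace ℝ (Fin n) × ℝ → EuclideanSpace ℝ (Fin m) := pd2^[r] f with hGdef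
  have hGsmooth : ContDiffOn ℝ ((k - r : ℕ)) G Ω := hg r hrk
  constructor
  · -- Taylor identity
    intro x hx h hmem
    set φ : ℝ → EuclideanSpace ℝ (Fin m) := fun t => f (x, t) with hφdef
    have hφ : ContDiffOn ℝ k φ (Ioo (-a) a) :=
      hf.comp (by fun_prop) (fun t ht => ⟨hx, ht⟩)
    by_cases hh : h = 0
    · subst hh
      have hsum : ∑ j ∈ Finset.range r, ((0:ℝ) ^ j / (j.factorial : ℝ)) •
          iteratedDerivWithin j φ (Ioo (-a) a) 0 = φ 0 := by
        rw [Finset.sum_eq_single_of_mem 0 (Finset.mem_range.2 hr1)]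
        · simp
        · intro j _ hj
          rw [zero_pow hj]
          simp
      rw [hsum, zero_pow (by omega : r ≠ 0)]
      simp
      rfl
    · have hsub' : uIcc (0:ℝ) h ⊆ Ioo (-a) a := by
        intro t ht
        rw [Set.mem_uIcc] at ht
        rcases hmem with ⟨hm1, hm2⟩
        constructor
        · rcases ht with ⟨h1, _⟩ | ⟨h1, _⟩ <;> linarith
        · rcases ht with ⟨_, h2⟩ | ⟨_, h2⟩ <;> linarith
      set n' := r - 1 with hn'
      have hrn : n' + 1 = r := Nat.sub_add_cancel hr1
      have hderiv : ∀ t ∈ uIcc (0:ℝ) h, HasDerivAt (fun y => taylorWithinEval φ n' (Ioo (-a) a) y h)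
          (((n'.factorial : ℝ)⁻¹ * (h - t) ^ n') • iteratedDerivWithin r φ (Ioo (-a) a) t) t := by
        intro t ht
        have ht' : t ∈ Ioo (-a) a := hsub' ht
        have := hasDerivWithinAt_taylorWithinEval (f := φ) (x := h) (y := t)
          isOpen_Ioo.uniqueDiffOn self_mem_nhdsWithin ht'
          rfl.subset (hφ.of_le (by exact_mod_cast (by omega : n' ≤ k) : ((n' : ℕ) : WithTop ℕ∞) ≤ k))
          ((hφ.differentiableOn_iteratedDerivWithin (by exact_mod_cast (by omega : n' < k))
            isOpen_Ioo.uniqueDiffOn) t ht')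
        rw [hrn] at this
        exact this.hasDerivAt (isOpen_Ioo.mem_nhds ht')
      have hint : IntervalIntegrable
          (fun t => (((n'.factorial : ℝ))⁻¹ * (h - t) ^ n') •
            iteratedDerivWithin r φ (Ioo (-a) a) t) volume 0 h := by
        apply ContinuousOn.intervalIntegrable
        apply ContinuousOn.smul (f := fun t => ((n'.factorial : ℝ))⁻¹ * (h - t) ^ n')
          (g := fun t => iteratedDerivWithin r φ (Ioo (-a) a) t)
        · fun_prop
        · exact (hφ.continuousOn_iteratedDerivWithin (by exact_mod_cast hrk)
            isOpen_Ioo.uniqueDiffOn).mono hsub'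
      have hFTC := intervalIntegral.integral_eq_sub_of_hasDerivAt hderiv hint
      rw [taylorWithinEval_self] at hFTC
      have hφh : φ h = taylorWithinEval φ n' (Ioo (-a) a) 0 h +
          ∫ t in (0:ℝ)..h, (((n'.factorial : ℝ))⁻¹ * (h - t) ^ n') •
            iteratedDerivWithin r φ (Ioo (-a) a) t := by
        rw [hFTC]; abel
      have htay : taylorWithinEval φ n' (Ioo (-a) a) 0 h =
          ∑ j ∈ Finset.range r, (h ^ j / (j.factorial : ℝ)) •
            iteratedDerivWithin j φ (Ioo (-a) a) 0 := by
        rw [taylor_within_apply, hrn]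
        refine Finset.sum_congr rfl fun j _ => ?_
        rw [sub_zero]
        congr 1
        rw [div_eq_inv_mul]
      have hRterm : (h ^ r / (r.factorial : ℝ)) • R (x, h) =
          ∫ t in (0:ℝ)..h, (((n'.factorial : ℝ))⁻¹ * (h - t) ^ n') •
            iteratedDerivWithin r φ (Ioo (-a) a) t := by
        rw [hR x h hh, smul_smul, ← intervalIntegral.integral_smul]
        apply intervalIntegral.integral_congr
        intro t _
        beta_reduce
        rw [smul_smul]
        congr 1
        have hfac : (r.factorial : ℝ) = (r : ℝ) * (n'.factorial : ℝ) := by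
          rw [← hrn, Nat.factorial_succ]
          push_cast [hrn]
          ring
        have hne : (h:ℝ) ^ r ≠ 0 := pow_ne_zero _ hh
        have hfne : (n'.factorial : ℝ) ≠ 0 := Nat.cast_ne_zero.2 (Nat.factorial_ne_zero _)
        have hrne : (r : ℝ) ≠ 0 := Nat.cast_ne_zero.2 (by omega)
        field_simp [hfac]
        rw [hfac]
        ring
      have hfxh : f (x, h) = φ h := rfl
      rw [hfxh, hφh, htay, hRterm]
  · -- smoothness of the remainder
    set T : Set (ℝ × (EuclideanSpace ℝ (Fin n) × ℝ)) :=
      {w | w.2 ∈ Ω ∧ (w.2.1, w.1 * w.2.2) ∈ Ω} with hTdef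
    have hTopen : IsOpen T := by
      have h1 : T = (Prod.snd ⁻¹' Ω) ∩
          ((fun w : ℝ × (EuclideanSpace ℝ (Fin n) × ℝ) => (w.2.1, w.1 * w.2.2)) ⁻¹' Ω) := rfl
      rw [h1]
      exact (hΩ.preimage continuous_snd).inter (hΩ.preimage (by fun_prop))
    have hTsub : Icc (0:ℝ) 1 ×ˢ Ω ⊆ T := by
      rintro ⟨s, z⟩ ⟨hs, hz⟩
      refine ⟨hz, hz.1, ?_⟩
      rcases hz.2 with ⟨hz1, hz2⟩
      rw [mem_Ioo, ← abs_lt] at *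
      calc |s * z.2| = |s| * |z.2| := abs_mul _ _
        _ ≤ 1 * |z.2| := by
            apply mul_le_mul_of_nonneg_right _ (abs_nonneg _)
            rw [abs_le]; exact ⟨by linarith [hs.1], hs.2⟩
        _ < a := by rw [one_mul]; exact abs_lt.2 ⟨hz1, hz2⟩
    set Ψ : ℝ × (EuclideanSpace ℝ (Fin n) × ℝ) → EuclideanSpace ℝ (Fin m) :=
      fun w => ((1 - w.1) ^ (r - 1)) • G (w.2.1, w.1 * w.2.2) with hΨdef
    have hΨ : ContDiffOn ℝ ((k - r : ℕ)) Ψ T := by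
      apply ContDiffOn.smul (f := fun w : ℝ × (EuclideanSpace ℝ (Fin n) × ℝ) => (1 - w.1) ^ (r - 1))
        (g := fun w => G (w.2.1, w.1 * w.2.2))
      · exact ((contDiff_const.sub contDiff_fst).pow (r - 1)).contDiffOn
      · exact hGsmooth.comp
          ((ContDiff.prodMk (contDiff_fst.comp contDiff_snd)
            (contDiff_fst.mul (contDiff_snd.comp contDiff_snd))).contDiffOn)
          (fun w hw => hw.2)
    have hQ : ContDiffOn ℝ ((k - r : ℕ))
        (fun z : EuclideanSpace ℝ (Fin n) × ℝ =>
          (r : ℝ) • ∫ s in (0:ℝ)..1, Ψ (s, z)) Ω :=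
      (contDiffOn_parametric_intervalIntegral (k - r) Ψ Ω T hΩ hTopen hTsub hΨ).const_smul _
    apply hQ.congr
    rintro ⟨x, h⟩ hz
    have hx : x ∈ U := hz.1
    have hmem : h ∈ Ioo (-a) a := hz.2
    by_cases hh : h = 0
    · subst hh
      have hint : ∫ s in (0:ℝ)..1, Ψ (s, (x, 0)) =
          (∫ s in (0:ℝ)..1, (1 - s) ^ (r - 1)) • G (x, 0) := by
        rw [← intervalIntegral.integral_smul_const]
        apply intervalIntegral.integral_congr
        intro s _
        simp [hΨdef]
      have hval : ∫ s in (0:ℝ)..1, ((1:ℝ) - s) ^ (r - 1) = 1 / r := by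
        rw [intervalIntegral.integral_comp_sub_left (fun u => u ^ (r - 1)) 1]
        norm_num [integral_pow]
        push_cast [Nat.cast_sub hr1]
        ring
      rw [hR0 x, hgB r hrk x hx 0 h0mem, hint, hval, smul_smul]
      rw [show (r:ℝ) * (1 / r) = 1 by
        field_simp]
      rw [one_smul]
    · have hsub' : uIcc (0:ℝ) h ⊆ Ioo (-a) a := by
        intro t ht
        rw [Set.mem_uIcc] at ht
        rcases hmem with ⟨hm1, hm2⟩
        constructor
        · rcases ht with ⟨h1, _⟩ | ⟨h1, _⟩ <;> linarith
        · rcases ht with ⟨_, h2⟩ | ⟨_, h2⟩ <;> linarith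
      set w : ℝ → EuclideanSpace ℝ (Fin m) := fun t => (((h - t) / h) ^ (r - 1)) • G (x, t)
        with hwdef
      have h1 : ∫ s in (0:ℝ)..1, Ψ (s, (x, h)) = ∫ s in (0:ℝ)..1, w (s * h) := by
        apply intervalIntegral.integral_congr
        intro s _
        simp only [hΨdef, hwdef]
        congr 2
        field_simp
      have h2 : ∫ s in (0:ℝ)..1, w (s * h) = h⁻¹ • ∫ t in (0:ℝ)..h, w t := by
        rw [intervalIntegral.integral_comp_mul_right w hh, zero_mul, one_mul]
      have h3 : ∫ t in (0:ℝ)..h, w t =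
          (h ^ (r - 1))⁻¹ • ∫ t in (0:ℝ)..h,
            ((h - t) ^ (r - 1)) • G (x, t) := by
        rw [← intervalIntegral.integral_smul]
        apply intervalIntegral.integral_congr
        intro t _
        simp only [hwdef]
        rw [smul_smul]
        congr 1
        rw [div_pow]
        field_simp
      have h4 : (∫ t in (0:ℝ)..h, ((h - t) ^ (r - 1)) •
            iteratedDerivWithin r (fun s => f (x, s)) (Ioo (-a) a) t) =
          ∫ t in (0:ℝ)..h, ((h - t) ^ (r - 1)) • G (x, t) := by
        apply intervalIntegral.integral_congr
        intro t ht
        beta_reduce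
        rw [hgB r hrk x hx t (hsub' ht)]
      rw [hR x h hh, h4, h1, h2, h3, smul_smul, smul_smul]
      congr 1
      have hpow : h ^ r = h ^ (r - 1) * h := by
        conv_lhs => rw [← Nat.sub_add_cancel hr1]
        rw [pow_succ]
      rw [hpow]
      have hne1 : h ^ (r - 1) ≠ 0 := pow_ne_zero _ hh
      field_simp
end
end

section
/- Let U ⊆ ℝ^n be open, a > 0, k ≥ 1, and let f₁, f₂ : U × (−a,a) → ℝ^m be of class C^k. Let r be a natural number with 1 ≤ r ≤ k, and suppose there is a continuous function δf : U × (−a,a) → ℝ^m with f₂(x,h) − f₁(x,h) = h^r · δf(x,h) for all (x,h). Then δf(x,h) = (1/r!)·(R_{r,2}(x,h) − R_{r,1}(x,h)) for all (x,h) ∈ U × (−a,a), where R_{r,j} is the order-r Taylor remainder of f_j in the variable h at h = 0 (given by R_{r,j}(x,h) = (r/h^r)·∫₀^h (h−t)^{r−1} D₂^r f_j(x,t) dt for h ≠ 0 and R_{r,j}(x,0) = D₂^r f_j(x,0)); in particular δf is of class C^{k−r} on U × (−a,a). -/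
open Set

noncomputable section

set_option maxHeartbeats 1000000
set_option synthInstance.maxHeartbeats 1000000

open MeasureTheory intervalIntegral Filter Topology Interval

lemma uIcc_subset_Ioo_of_mem {a : ℝ} {h : ℝ} (ha : 0 < a) (hh : h ∈ Ioo (-a) a) :
    uIcc (0:ℝ) h ⊆ Ioo (-a) a :=
  (ordConnected_Ioo).uIcc_subset ⟨by linarith, ha⟩ hh

lemma avg_tendsto {E : Type*} [NormedAddCommGroup E] [NormedSpace ℝ E] [CompleteSpace E]
    {a : ℝ} (ha : 0 < a) {u : ℝ → E}
    (hu : ContinuousOn u (Ioo (-a) a)) {j : ℕ} (hj : 1 ≤ j) :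
    Tendsto (fun h : ℝ => ((j : ℝ) / h ^ j) • ∫ t in (0:ℝ)..h, ((h - t) ^ (j - 1)) • u t)
      (𝓝[Ioo (-a) a \ {0}] 0) (𝓝 (u 0)) := by
  have h0mem : (0:ℝ) ∈ Ioo (-a) a := ⟨by linarith, ha⟩
  have hjR : (0:ℝ) < (j:ℝ) := by positivity
  rw [Metric.tendsto_nhdsWithin_nhds]
  intro ε hε
  have hu0 : ContinuousAt u 0 := hu.continuousAt (Ioo_mem_nhds (by linarith) ha)
  have hε' : 0 < ε / (2 * j) := by positivity
  obtain ⟨δ₁, hδ₁, hδ⟩ := Metric.continuousAt_iff.1 hu0 (ε / (2 * j)) hε'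
  refine ⟨δ₁, hδ₁, ?_⟩
  rintro h ⟨hI, hne⟩ hdist
  simp only [Real.dist_eq, sub_zero] at hdist
  replace hne : h ≠ 0 := by simpa using hne
  have hsub : uIcc (0:ℝ) h ⊆ Ioo (-a) a := uIcc_subset_Ioo_of_mem ha hI
  have hpow : (h:ℝ) ^ j ≠ 0 := pow_ne_zero _ hne
  have hcontu : ContinuousOn u (uIcc (0:ℝ) h) := hu.mono hsub
  have int1 : IntervalIntegrable (fun t => ((h - t) ^ (j-1)) • u t) volume 0 h :=
    (ContinuousOn.smul (by fun_prop) hcontu).intervalIntegrable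
  have int2 : IntervalIntegrable (fun t => ((h - t) ^ (j-1)) • u 0) volume 0 h :=
    (ContinuousOn.smul (by fun_prop) continuousOn_const).intervalIntegrable
  have key1 : (∫ t in (0:ℝ)..h, ((h - t) ^ (j-1))) = h ^ j / j := by
    rw [intervalIntegral.integral_comp_sub_left (fun s => s ^ (j-1)) h]
    rw [integral_pow, Nat.sub_add_cancel hj, sub_zero, sub_self, zero_pow (by omega : j ≠ 0), sub_zero,
      show ((j-1:ℕ):ℝ) + 1 = j by exact_mod_cast Nat.sub_add_cancel hj]
  have key1' : (∫ t in (0:ℝ)..h, ((h - t) ^ (j-1)) • u 0) = (h ^ j / j) • u 0 := by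
    rw [intervalIntegral.integral_smul_const, key1]
  have split : (∫ t in (0:ℝ)..h, ((h - t) ^ (j-1)) • (u t - u 0))
      = (∫ t in (0:ℝ)..h, ((h - t) ^ (j-1)) • u t) - (h ^ j / j) • u 0 := by
    rw [intervalIntegral.integral_congr
        (g := fun t => ((h - t) ^ (j-1)) • u t - ((h - t) ^ (j-1)) • u 0)
        (fun t _ => smul_sub _ _ _),
      intervalIntegral.integral_sub int1 int2, key1']
  have hone : (j:ℝ) / h ^ j * (h ^ j / j) = 1 := by field_simp
  have keyD : ((j : ℝ) / h ^ j) • (∫ t in (0:ℝ)..h, ((h - t) ^ (j - 1)) • u t) - u 0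
      = ((j:ℝ) / h ^ j) • ∫ t in (0:ℝ)..h, ((h - t) ^ (j-1)) • (u t - u 0) := by
    rw [split, smul_sub, smul_smul, hone, one_smul]
  have bnd : ∀ t ∈ Ι (0:ℝ) h, ‖((h - t) ^ (j-1)) • (u t - u 0)‖ ≤ |h| ^ (j-1) * (ε / (2*j)) := by
    intro t ht
    have ht' : t ∈ uIcc (0:ℝ) h := uIoc_subset_uIcc ht
    have h1 : |t| ≤ |h| := by
      rcases le_total 0 h with hc | hc
      · rw [uIcc_of_le hc] at ht'; rw [abs_of_nonneg ht'.1, abs_of_nonneg hc]; exact ht'.2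
      · rw [uIcc_of_ge hc] at ht'; rw [abs_of_nonpos ht'.2, abs_of_nonpos hc]; linarith [ht'.1]
    have h2 : |h - t| ≤ |h| := by
      rcases le_total 0 h with hc | hc
      · rw [uIcc_of_le hc] at ht'
        rw [abs_of_nonneg (by linarith [ht'.2]), abs_of_nonneg hc]; linarith [ht'.1]
      · rw [uIcc_of_ge hc] at ht'
        rw [abs_of_nonpos (by linarith [ht'.1]), abs_of_nonpos hc]; linarith [ht'.2]
    have h3 : dist (u t) (u 0) < ε / (2*j) :=
      hδ (by rw [Real.dist_eq, sub_zero]; exact lt_of_le_of_lt h1 hdist)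
    rw [norm_smul, Real.norm_eq_abs, abs_pow]
    calc |h - t| ^ (j-1) * ‖u t - u 0‖ ≤ |h| ^ (j-1) * ‖u t - u 0‖ := by gcongr
      _ ≤ |h| ^ (j-1) * (ε / (2*j)) := by
          gcongr
          exact le_of_lt (by rwa [← dist_eq_norm])
  have hnorm : ‖(∫ t in (0:ℝ)..h, ((h - t) ^ (j-1)) • (u t - u 0))‖
      ≤ (|h| ^ (j-1) * (ε / (2*j))) * |h - 0| :=
    intervalIntegral.norm_integral_le_of_norm_le_const bnd
  rw [sub_zero] at hnorm
  have habs : |(j:ℝ) / h ^ j| = (j:ℝ) / |h| ^ j := by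
    rw [abs_div, abs_pow, Nat.abs_cast]
  have hhpos : 0 < |h| := abs_pos.2 hne
  have hme : |h| ^ (j-1) * |h| = |h| ^ j := by
    rw [← pow_succ, Nat.sub_add_cancel hj]
  show dist (((j : ℝ) / h ^ j) • ∫ t in (0:ℝ)..h, ((h - t) ^ (j - 1)) • u t) (u 0) < ε
  rw [dist_eq_norm, keyD, norm_smul, Real.norm_eq_abs]
  calc |(j:ℝ) / h ^ j| * ‖(∫ t in (0:ℝ)..h, ((h - t) ^ (j-1)) • (u t - u 0))‖
      ≤ ((j:ℝ) / |h| ^ j) * ((|h| ^ (j-1) * (ε / (2*j))) * |h|) := by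
        rw [habs]; gcongr
    _ = ((j:ℝ) * (|h| ^ (j-1) * |h|) / |h| ^ j) * (ε / (2*j)) := by ring
    _ = ε / 2 := by
        rw [hme]
        have : |h| ^ j ≠ 0 := pow_ne_zero _ (ne_of_gt hhpos)
        field_simp
    _ < ε := by linarith

lemma contDiffOn_parametric_integral
    {X : Type} [NormedAddCommGroup X] [NormedSpace ℝ X] [FiniteDimensional ℝ X]
    {W : Set X} (hW : IsOpen W) {c d : ℝ} (hc : c < 0) (hd : 1 < d) :
    ∀ (m : ℕ) {E : Type} [NormedAddCommGroup E] [NormedSpace ℝ E] [CompleteSpace E]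
      (F : X × ℝ → E), ContDiffOn ℝ m F (W ×ˢ Ioo c d) →
      ContDiffOn ℝ m (fun p => ∫ s in (0:ℝ)..1, F (p, s)) W := by
  have hIoc : Ι (0:ℝ) 1 ⊆ Ioo c d := by
    rw [uIoc_of_le zero_le_one]
    exact fun t ht => ⟨lt_of_lt_of_le hc (le_of_lt ht.1), lt_of_le_of_lt ht.2 hd⟩
  have hIcc : Icc (0:ℝ) 1 ⊆ Ioo c d := fun t ht =>
    ⟨lt_of_lt_of_le hc ht.1, lt_of_le_of_lt ht.2 hd⟩
  have huIcc : uIcc (0:ℝ) 1 ⊆ Ioo c d := by rwa [uIcc_of_le zero_le_one]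
  intro m
  induction m with
  | zero =>
    intro E _ _ _ F hF
    have hS : IsOpen (W ×ˢ Ioo c d) := hW.prod isOpen_Ioo
    simp only [Nat.cast_zero, contDiffOn_zero] at hF ⊢
    intro p₀ hp₀
    apply ContinuousAt.continuousWithinAt
    obtain ⟨ρ, hρpos, hρ⟩ : ∃ ρ > 0, Metric.closedBall p₀ ρ ⊆ W := by
      obtain ⟨ρ', hρ', hsub⟩ := Metric.isOpen_iff.1 hW p₀ hp₀
      exact ⟨ρ'/2, by linarith, (Metric.closedBall_subset_ball (by linarith)).trans hsub⟩
    have hKS : Metric.closedBall p₀ ρ ×ˢ Icc (0:ℝ) 1 ⊆ W ×ˢ Ioo c d :=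
      prod_mono hρ hIcc
    obtain ⟨C, hC⟩ := (((isCompact_closedBall p₀ ρ).prod isCompact_Icc)).exists_bound_of_continuousOn
      (hF.mono hKS)
    apply intervalIntegral.continuousAt_of_dominated_interval (bound := fun _ => C)
    · filter_upwards [hW.mem_nhds hp₀] with x hx
      refine (ContinuousOn.mono ?_ hIoc).aestronglyMeasurable measurableSet_uIoc
      exact hF.comp (Continuous.continuousOn (by fun_prop)) (fun t ht => ⟨hx, ht⟩)
    · filter_upwards [Metric.closedBall_mem_nhds p₀ hρpos] with x hx
      exact Eventually.of_forall fun t ht =>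
        hC (x, t) ⟨hx, by rw [uIoc_of_le zero_le_one] at ht; exact ⟨le_of_lt ht.1, ht.2⟩⟩
    · exact intervalIntegrable_const
    · refine Eventually.of_forall fun t ht => ?_
      exact (hF.continuousAt (hS.mem_nhds ⟨hp₀, hIoc ht⟩)).comp
        ((continuous_id.prodMk continuous_const).continuousAt)
  | succ m ih =>
    intro E _ _ _ F hF
    have hS : IsOpen (W ×ˢ Ioo c d) := hW.prod isOpen_Ioo
    have hF1 : ContDiffOn ℝ ((m : WithTop ℕ∞) + 1) F (W ×ˢ Ioo c d) := by
      exact_mod_cast hF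
    set G : X × ℝ → (X →L[ℝ] E) :=
      fun q => (fderivWithin ℝ F (W ×ˢ Ioo c d) q).comp (ContinuousLinearMap.inl ℝ X ℝ) with hGdef
    have hG : ContDiffOn ℝ m G (W ×ˢ Ioo c d) :=
      ContDiffOn.clm_comp ((contDiffOn_succ_iff_fderivWithin hS.uniqueDiffOn).1 hF1).2.2
        contDiffOn_const
    have hFc : ContinuousOn F (W ×ˢ Ioo c d) := hF1.continuousOn
    have hGc : ContinuousOn G (W ×ˢ Ioo c d) := hG.continuousOn
    have hdiffF : ∀ q ∈ W ×ˢ Ioo c d, HasFDerivAt F (fderivWithin ℝ F (W ×ˢ Ioo c d) q) q := by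
      intro q hq
      have := ((hF1.differentiableOn (by simp)) q hq).differentiableAt (hS.mem_nhds hq)
      rw [fderivWithin_of_isOpen hS hq]
      exact this.hasFDerivAt
    have key : ∀ p₀ ∈ W, HasFDerivAt (fun p => ∫ s in (0:ℝ)..1, F (p, s))
        (∫ s in (0:ℝ)..1, G (p₀, s)) p₀ := by
      intro p₀ hp₀
      obtain ⟨ρ, hρpos, hρ⟩ : ∃ ρ > 0, Metric.closedBall p₀ ρ ⊆ W := by
        obtain ⟨ρ', hρ', hsub⟩ := Metric.isOpen_iff.1 hW p₀ hp₀
        exact ⟨ρ'/2, by linarith, (Metric.closedBall_subset_ball (by linarith)).trans hsub⟩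
      have hKS : Metric.closedBall p₀ ρ ×ˢ Icc (0:ℝ) 1 ⊆ W ×ˢ Ioo c d :=
        prod_mono hρ hIcc
      obtain ⟨C, hC⟩ :=
        (((isCompact_closedBall p₀ ρ).prod isCompact_Icc)).exists_bound_of_continuousOn
        (hGc.mono hKS)
      apply intervalIntegral.hasFDerivAt_integral_of_dominated_of_fderiv_le
        (F := fun x t => F (x, t)) (F' := fun x t => G (x, t)) (bound := fun _ => C)
        (s := Metric.ball p₀ ρ) (Metric.ball_mem_nhds p₀ hρpos)
      · filter_upwards [hW.mem_nhds hp₀] with x hx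
        refine (ContinuousOn.mono ?_ hIoc).aestronglyMeasurable measurableSet_uIoc
        exact hFc.comp (Continuous.continuousOn (by fun_prop)) (fun t ht => ⟨hx, ht⟩)
      · refine ContinuousOn.intervalIntegrable ?_
        exact (hFc.comp (Continuous.continuousOn (by fun_prop))
          (fun t ht => ⟨hp₀, huIcc ht⟩))
      · refine (ContinuousOn.mono ?_ hIoc).aestronglyMeasurable measurableSet_uIoc
        exact hGc.comp (Continuous.continuousOn (by fun_prop)) (fun t ht => ⟨hp₀, ht⟩)
      · refine Eventually.of_forall fun t ht => fun x hx => ?_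
        exact hC (x, t) ⟨Metric.ball_subset_closedBall hx,
          by rw [uIoc_of_le zero_le_one] at ht; exact ⟨le_of_lt ht.1, ht.2⟩⟩
      · exact intervalIntegrable_const
      · refine Eventually.of_forall fun t ht => fun x hx => ?_
        have hq : (x, t) ∈ W ×ˢ Ioo c d :=
          ⟨hρ (Metric.ball_subset_closedBall hx), hIoc ht⟩
        exact (hdiffF (x, t) hq).comp x (hasFDerivAt_prodMk_left x t)
    have hdiffΦ : DifferentiableOn ℝ (fun p => ∫ s in (0:ℝ)..1, F (p, s)) W :=
      fun p hp => ((key p hp).differentiableAt).differentiableWithinAt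
    have hIH : ContDiffOn ℝ m (fun p => ∫ s in (0:ℝ)..1, G (p, s)) W := ih G hG
    have : ((m + 1 : ℕ) : WithTop ℕ∞) = (m : WithTop ℕ∞) + 1 := by push_cast; rfl
    rw [this, contDiffOn_succ_iff_fderiv_of_isOpen hW]
    refine ⟨hdiffΦ, by simp, ?_⟩
    exact hIH.congr fun p hp => (key p hp).fderiv


/-- If two `C^k` maps on `U × (−a,a)` have order-`h^r` contact witnessed by a continuous
factor `δf`, then `δf` equals `(1/r!)` times the difference of the order-`r` integral Taylor
remainders of the two maps in the variable `h`; in particular `δf` is of class `C^{k−r}`. -/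
theorem contact_factor_eq_remainder_difference
    {n m : ℕ} (U : Set (EuclideanSpace ℝ (Fin n))) (hU : IsOpen U)
    (a : ℝ) (ha : 0 < a) (k : ℕ) (hk : 1 ≤ k)
    (f₁ f₂ : EuclideanSpace ℝ (Fin n) × ℝ → EuclideanSpace ℝ (Fin m))
    (hf₁ : ContDiffOn ℝ k f₁ (U ×ˢ Ioo (-a) a))
    (hf₂ : ContDiffOn ℝ k f₂ (U ×ˢ Ioo (-a) a))
    (r : ℕ) (hr1 : 1 ≤ r) (hrk : r ≤ k)
    (δf : EuclideanSpace ℝ (Fin n) × ℝ → EuclideanSpace ℝ (Fin m))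
    (hδf : ContinuousOn δf (U ×ˢ Ioo (-a) a))
    (hfac : ∀ x ∈ U, ∀ h ∈ Ioo (-a) a, f₂ (x, h) - f₁ (x, h) = h ^ r • δf (x, h))
    (R₁ R₂ : EuclideanSpace ℝ (Fin n) × ℝ → EuclideanSpace ℝ (Fin m))
    (hR₁ : ∀ (x : EuclideanSpace ℝ (Fin n)) (h : ℝ), h ≠ 0 →
      R₁ (x, h) = ((r : ℝ) / h ^ r) •
        ∫ t in (0 : ℝ)..h, ((h - t) ^ (r - 1)) •
          iteratedDerivWithin r (fun s => f₁ (x, s)) (Ioo (-a) a) t)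
    (hR₁0 : ∀ x : EuclideanSpace ℝ (Fin n),
      R₁ (x, 0) = iteratedDerivWithin r (fun s => f₁ (x, s)) (Ioo (-a) a) 0)
    (hR₂ : ∀ (x : EuclideanSpace ℝ (Fin n)) (h : ℝ), h ≠ 0 →
      R₂ (x, h) = ((r : ℝ) / h ^ r) •
        ∫ t in (0 : ℝ)..h, ((h - t) ^ (r - 1)) •
          iteratedDerivWithin r (fun s => f₂ (x, s)) (Ioo (-a) a) t)
    (hR₂0 : ∀ x : EuclideanSpace ℝ (Fin n),
      R₂ (x, 0) = iteratedDerivWithin r (fun s => f₂ (x, s)) (Ioo (-a) a) 0) :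
    (∀ x ∈ U, ∀ h ∈ Ioo (-a) a,
      δf (x, h) = ((r.factorial : ℝ))⁻¹ • (R₂ (x, h) - R₁ (x, h))) ∧
    ContDiffOn ℝ (k - r : ℕ) δf (U ×ˢ Ioo (-a) a) := by
  classical
  have hIopen : IsOpen (Ioo (-a) a) := isOpen_Ioo
  have hIuniq : UniqueDiffOn ℝ (Ioo (-a) a) := hIopen.uniqueDiffOn
  have h0I : (0:ℝ) ∈ Ioo (-a) a := ⟨by linarith, ha⟩
  have hVopen : IsOpen (U ×ˢ Ioo (-a) a) := hU.prod hIopen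
  have hg : ContDiffOn ℝ k (fun p : EuclideanSpace ℝ (Fin n) × ℝ => f₂ p - f₁ p)
      (U ×ˢ Ioo (-a) a) := hf₂.sub hf₁
  have hrk' : (r : WithTop ℕ∞) ≤ (k : WithTop ℕ∞) := by exact_mod_cast hrk
  have hfacR : (r.factorial : ℝ) ≠ 0 := by exact_mod_cast r.factorial_ne_zero
  -- the punctured neighborhood filter
  have hpunct : 𝓝[Ioo (-a) a \ {0}] (0:ℝ) = 𝓝[≠] (0:ℝ) := by
    rw [diff_eq]
    exact nhdsWithin_inter_of_mem (mem_nhdsWithin_of_mem_nhds (hIopen.mem_nhds h0I))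
  have hNeBot : (𝓝[Ioo (-a) a \ {0}] (0:ℝ)).NeBot := by
    rw [hpunct]; infer_instance
  -- ### Part A: the pointwise identity
  have partA : ∀ x ∈ U, ∀ h ∈ Ioo (-a) a,
      δf (x, h) = ((r.factorial : ℝ))⁻¹ • (R₂ (x, h) - R₁ (x, h)) := by
    intro x hx
    set gx : ℝ → EuclideanSpace ℝ (Fin m) := fun s => f₂ (x, s) - f₁ (x, s) with hgxdef
    have hmaps : MapsTo (fun s : ℝ => ((x, s) : EuclideanSpace ℝ (Fin n) × ℝ))
        (Ioo (-a) a) (U ×ˢ Ioo (-a) a) := fun s hs => ⟨hx, hs⟩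
    have hxs : ContDiff ℝ (k : WithTop ℕ∞) (fun s : ℝ => ((x, s) : EuclideanSpace ℝ (Fin n) × ℝ)) :=
      contDiff_const.prodMk contDiff_id
    have hgx : ContDiffOn ℝ k gx (Ioo (-a) a) := hg.comp hxs.contDiffOn hmaps
    have hf1x : ContDiffOn ℝ k (fun s => f₁ (x, s)) (Ioo (-a) a) :=
      hf₁.comp hxs.contDiffOn hmaps
    have hf2x : ContDiffOn ℝ k (fun s => f₂ (x, s)) (Ioo (-a) a) :=
      hf₂.comp hxs.contDiffOn hmaps
    have hfacx : ∀ h ∈ Ioo (-a) a, gx h = h ^ r • δf (x, h) := fun h hh => hfac x hx h hh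
    have hgx0 : gx 0 = 0 := by
      rw [hfacx 0 h0I, zero_pow (by omega : r ≠ 0), zero_smul]
    -- continuity of iterated derivatives
    have hDcont : ∀ j : ℕ, j ≤ k → ContinuousOn (iteratedDerivWithin j gx (Ioo (-a) a))
        (Ioo (-a) a) := fun j hj =>
      hgx.continuousOn_iteratedDerivWithin (by exact_mod_cast hj) hIuniq
    -- derivative of iterated derivatives
    have hDj : ∀ j : ℕ, j + 1 ≤ k → ∀ t ∈ Ioo (-a) a,
        HasDerivAt (iteratedDerivWithin j gx (Ioo (-a) a))
          (iteratedDerivWithin (j+1) gx (Ioo (-a) a) t) t := by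
      intro j hj t ht
      have hdiff : DifferentiableWithinAt ℝ (iteratedDerivWithin j gx (Ioo (-a) a))
          (Ioo (-a) a) t :=
        (hgx.differentiableOn_iteratedDerivWithin
          (by exact_mod_cast (by omega : j < k)) hIuniq) t ht
      have h2 := hdiff.hasDerivWithinAt
      rw [← iteratedDerivWithin_succ] at h2
      exact h2.hasDerivAt (hIopen.mem_nhds ht)
    -- continuity of h ↦ δf (x, h) at 0
    have hδx : ContinuousAt (fun h : ℝ => δf (x, h)) 0 :=
      (hδf.continuousAt (hVopen.mem_nhds ⟨hx, h0I⟩)).comp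
        ((continuous_const.prodMk continuous_id).continuousAt)
    -- the main induction
    have main : ∀ j : ℕ, 1 ≤ j → j ≤ r →
        (∀ i < j, iteratedDerivWithin i gx (Ioo (-a) a) 0 = 0) ∧
        (∀ h ∈ Ioo (-a) a,
          (∫ t in (0:ℝ)..h, ((h - t) ^ (j-1)) • iteratedDerivWithin j gx (Ioo (-a) a) t)
            = ((j-1).factorial : ℝ) • gx h) := by
      intro j hj1
      induction j, hj1 using Nat.le_induction with
      | base =>
        intro _
        constructor
        · intro i hi
          interval_cases i
          rw [iteratedDerivWithin_zero, hgx0]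
        · intro h hh
          have hsub : uIcc (0:ℝ) h ⊆ Ioo (-a) a := uIcc_subset_Ioo_of_mem ha hh
          have hder : ∀ t ∈ uIcc (0:ℝ) h,
              HasDerivAt gx (iteratedDerivWithin 1 gx (Ioo (-a) a) t) t := by
            intro t ht
            have := hDj 0 (by omega) t (hsub ht)
            rwa [iteratedDerivWithin_zero] at this
          have hint : IntervalIntegrable (iteratedDerivWithin 1 gx (Ioo (-a) a)) volume 0 h :=
            ((hDcont 1 hk).mono hsub).intervalIntegrable
          have := intervalIntegral.integral_eq_sub_of_hasDerivAt hder hint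
          rw [hgx0, sub_zero] at this
          simpa using this
      | succ j hj1' ihj =>
        intro hjr
        obtain ⟨hzero, hT⟩ := ihj (by omega)
        have hjk : j + 1 ≤ k := by omega
        have hucont : ContinuousOn (iteratedDerivWithin j gx (Ioo (-a) a)) (Ioo (-a) a) :=
          hDcont j (by omega)
        -- the j-th derivative at 0 vanishes
        have hcj : iteratedDerivWithin j gx (Ioo (-a) a) 0 = 0 := by
          have t1 := avg_tendsto ha hucont hj1'
          have t2 : Tendsto (fun h : ℝ => ((j : ℝ) / h ^ j) •
              ∫ t in (0:ℝ)..h, ((h - t) ^ (j - 1)) • iteratedDerivWithin j gx (Ioo (-a) a) t)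
              (𝓝[Ioo (-a) a \ {0}] 0) (𝓝 0) := by
            have heq : ∀ h ∈ Ioo (-a) a \ {0},
                ((j : ℝ) / h ^ j) •
                  (∫ t in (0:ℝ)..h, ((h - t) ^ (j - 1)) •
                    iteratedDerivWithin j gx (Ioo (-a) a) t)
                = ((j.factorial : ℝ) * h ^ (r - j)) • δf (x, h) := by
              rintro h ⟨hh, hne⟩
              replace hne : h ≠ 0 := by simpa using hne
              rw [hT h hh, hfacx h hh, smul_smul, smul_smul]
              congr 1
              rw [div_mul_eq_mul_div, pow_sub₀ h hne (by omega : j ≤ r)]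
              have : (j.factorial : ℝ) = (j : ℝ) * ((j-1).factorial : ℝ) := by
                exact_mod_cast (Nat.mul_factorial_pred (by omega)).symm
              rw [this]
              field_simp [pow_ne_zero j hne]
              try ring
            have t3 : Tendsto (fun h : ℝ => ((j.factorial : ℝ) * h ^ (r - j)) • δf (x, h))
                (𝓝[Ioo (-a) a \ {0}] 0) (𝓝 0) := by
              have hs : Tendsto (fun h : ℝ => (j.factorial : ℝ) * h ^ (r - j)) (𝓝 0)
                  (𝓝 0) := by
                have hcont : Continuous fun h : ℝ => (j.factorial : ℝ) * h ^ (r - j) := by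
                  continuity
                simpa [zero_pow (show r - j ≠ 0 by omega)] using hcont.tendsto 0
              have := (hs.smul hδx.tendsto)
              rw [zero_smul] at this
              exact this.mono_left nhdsWithin_le_nhds
            exact t3.congr' (by
              filter_upwards [self_mem_nhdsWithin] with h hh
              exact (heq h hh).symm)
          exact tendsto_nhds_unique t1 t2
        refine ⟨?_, ?_⟩
        · intro i hi
          rcases Nat.lt_succ_iff_lt_or_eq.1 hi with hi' | rfl
          · exact hzero i hi'
          · exact hcj
        · intro h hh
          have hsub : uIcc (0:ℝ) h ⊆ Ioo (-a) a := uIcc_subset_Ioo_of_mem ha hh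
          have hvc : ContinuousOn (iteratedDerivWithin j gx (Ioo (-a) a)) (uIcc (0:ℝ) h) :=
            hucont.mono hsub
          have hv'c : ContinuousOn (iteratedDerivWithin (j+1) gx (Ioo (-a) a)) (uIcc (0:ℝ) h) :=
            (hDcont (j+1) hjk).mono hsub
          have hw : ∀ t ∈ uIcc (0:ℝ) h,
              HasDerivAt (fun t => (h - t) ^ j • iteratedDerivWithin j gx (Ioo (-a) a) t)
                ((h - t) ^ j • iteratedDerivWithin (j+1) gx (Ioo (-a) a) t
                  + (((j:ℝ) * (h - t) ^ (j-1)) * (-1)) • iteratedDerivWithin j gx (Ioo (-a) a) t)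
                t := by
            intro t ht
            have h1 : HasDerivAt (fun t : ℝ => h - t) (-1) t := (hasDerivAt_id t).const_sub h
            have hu : HasDerivAt (fun t : ℝ => (h - t) ^ j)
                (((j:ℝ) * (h - t) ^ (j-1)) * (-1)) t :=
              (hasDerivAt_pow j (h - t)).comp t h1
            exact hu.smul (hDj j hjk t (hsub ht))
          have hint2 : IntervalIntegrable
              (fun t => (h - t) ^ j • iteratedDerivWithin (j+1) gx (Ioo (-a) a) t) volume 0 h :=
            (ContinuousOn.smul (f := fun t => (h - t) ^ j) (by fun_prop) hv'c).intervalIntegrable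
          have hint1 : IntervalIntegrable
              (fun t => (((j:ℝ) * (h - t) ^ (j-1)) * (-1)) •
                iteratedDerivWithin j gx (Ioo (-a) a) t) volume 0 h :=
            (ContinuousOn.smul (f := fun t => ((j:ℝ) * (h - t) ^ (j-1)) * (-1)) (by fun_prop) hvc).intervalIntegrable
          have hFTC := intervalIntegral.integral_eq_sub_of_hasDerivAt hw (hint2.add hint1)
          rw [sub_self, zero_pow (by omega : j ≠ 0), zero_smul, hcj, smul_zero, zero_sub,
            neg_zero, intervalIntegral.integral_add hint2 hint1] at hFTC
          have hA : (∫ t in (0:ℝ)..h, (((j:ℝ) * (h - t) ^ (j-1)) * (-1)) •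
                iteratedDerivWithin j gx (Ioo (-a) a) t)
              = (-(j:ℝ)) • ∫ t in (0:ℝ)..h, ((h - t) ^ (j-1)) •
                iteratedDerivWithin j gx (Ioo (-a) a) t := by
            rw [← intervalIntegral.integral_smul]
            refine intervalIntegral.integral_congr fun t ht => ?_
            rw [smul_smul]
            congr 1
            ring
          rw [hA, hT h hh] at hFTC
          have hgoal : (∫ t in (0:ℝ)..h, ((h - t) ^ j) •
                iteratedDerivWithin (j+1) gx (Ioo (-a) a) t)
              = ((j:ℝ) * ((j-1).factorial : ℝ)) • gx h := by
            have h4 := eq_neg_of_add_eq_zero_left hFTC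
            rw [h4, smul_smul, ← neg_smul]
            congr 1
            ring
          have h5 : (j + 1 - 1 : ℕ) = j := by omega
          have hfact : ((j + 1 - 1).factorial : ℝ) = (j:ℝ) * ((j-1).factorial : ℝ) := by
            rw [h5]
            exact_mod_cast (Nat.mul_factorial_pred (by omega)).symm
          rw [hfact, h5, hgoal]
    obtain ⟨hzeros, hTr⟩ := main r hr1 le_rfl
    -- identify the r-th derivative at 0
    have hcr : iteratedDerivWithin r gx (Ioo (-a) a) 0 = (r.factorial : ℝ) • δf (x, 0) := by
      have t1 := avg_tendsto ha (hDcont r hrk) hr1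
      have t2 : Tendsto (fun h : ℝ => ((r : ℝ) / h ^ r) •
          ∫ t in (0:ℝ)..h, ((h - t) ^ (r - 1)) • iteratedDerivWithin r gx (Ioo (-a) a) t)
          (𝓝[Ioo (-a) a \ {0}] 0) (𝓝 ((r.factorial : ℝ) • δf (x, 0))) := by
        have heq : ∀ h ∈ Ioo (-a) a \ {0},
            ((r : ℝ) / h ^ r) •
              (∫ t in (0:ℝ)..h, ((h - t) ^ (r - 1)) •
                iteratedDerivWithin r gx (Ioo (-a) a) t)
            = (r.factorial : ℝ) • δf (x, h) := by
          rintro h ⟨hh, hne⟩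
          replace hne : h ≠ 0 := by simpa using hne
          rw [hTr h hh, hfacx h hh, smul_smul, smul_smul]
          congr 1
          have : (r.factorial : ℝ) = (r : ℝ) * ((r-1).factorial : ℝ) := by
            exact_mod_cast (Nat.mul_factorial_pred (by omega)).symm
          rw [this]
          field_simp [pow_ne_zero r hne]
          try ring
        have t3 : Tendsto (fun h : ℝ => (r.factorial : ℝ) • δf (x, h))
            (𝓝[Ioo (-a) a \ {0}] 0) (𝓝 ((r.factorial : ℝ) • δf (x, 0))) :=
          ((hδx.tendsto.const_smul (r.factorial : ℝ))).mono_left nhdsWithin_le_nhds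
        exact t3.congr' (by
          filter_upwards [self_mem_nhdsWithin] with h hh
          exact (heq h hh).symm)
      exact tendsto_nhds_unique t1 t2
    -- difference of iterated derivatives
    have hsubD : ∀ t ∈ Ioo (-a) a,
        iteratedDerivWithin r (fun s => f₂ (x, s)) (Ioo (-a) a) t
          - iteratedDerivWithin r (fun s => f₁ (x, s)) (Ioo (-a) a) t
        = iteratedDerivWithin r gx (Ioo (-a) a) t := by
      intro t ht
      rw [← iteratedDerivWithin_sub ht hIuniq (hf2x.of_le hrk' t ht) (hf1x.of_le hrk' t ht)]
      exact iteratedDerivWithin_congr (fun y _ => rfl) ht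
    intro h hh
    by_cases h0 : h = 0
    · subst h0
      rw [hR₂0 x, hR₁0 x, hsubD 0 h0I, hcr, smul_smul, inv_mul_cancel₀ hfacR, one_smul]
    · rw [hR₂ x h h0, hR₁ x h h0, ← smul_sub]
      have hsub : uIcc (0:ℝ) h ⊆ Ioo (-a) a := uIcc_subset_Ioo_of_mem ha hh
      have hint1 : IntervalIntegrable
          (fun t => ((h - t) ^ (r-1)) • iteratedDerivWithin r (fun s => f₂ (x, s)) (Ioo (-a) a) t)
          volume 0 h :=
        (ContinuousOn.smul (f := fun t => (h - t) ^ (r-1)) (by fun_prop)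
          ((hf2x.continuousOn_iteratedDerivWithin (by exact_mod_cast hrk) hIuniq).mono
            hsub)).intervalIntegrable
      have hint2 : IntervalIntegrable
          (fun t => ((h - t) ^ (r-1)) • iteratedDerivWithin r (fun s => f₁ (x, s)) (Ioo (-a) a) t)
          volume 0 h :=
        (ContinuousOn.smul (f := fun t => (h - t) ^ (r-1)) (by fun_prop)
          ((hf1x.continuousOn_iteratedDerivWithin (by exact_mod_cast hrk) hIuniq).mono
            hsub)).intervalIntegrable
      have hcomb : (∫ t in (0:ℝ)..h, ((h - t) ^ (r-1)) •
            iteratedDerivWithin r (fun s => f₂ (x, s)) (Ioo (-a) a) t)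
          - (∫ t in (0:ℝ)..h, ((h - t) ^ (r-1)) •
            iteratedDerivWithin r (fun s => f₁ (x, s)) (Ioo (-a) a) t)
          = ∫ t in (0:ℝ)..h, ((h - t) ^ (r-1)) • iteratedDerivWithin r gx (Ioo (-a) a) t := by
        rw [← intervalIntegral.integral_sub hint1 hint2]
        refine intervalIntegral.integral_congr fun t ht => ?_
        rw [← smul_sub, hsubD t (hsub ht)]
      rw [hcomb, hTr h hh, hfacx h hh]
      rw [smul_smul, smul_smul, smul_smul]
      have hone : ((r.factorial : ℝ))⁻¹ * ((r:ℝ) / h ^ r) * ((r-1).factorial : ℝ) * h ^ r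
          = 1 := by
        have hfr : (r.factorial : ℝ) = (r : ℝ) * ((r-1).factorial : ℝ) := by
          exact_mod_cast (Nat.mul_factorial_pred (by omega)).symm
        have h1 : ((r-1).factorial : ℝ) ≠ 0 := by exact_mod_cast (r-1).factorial_ne_zero
        have h2 : (r:ℝ) ≠ 0 := by positivity
        rw [hfr]
        field_simp [pow_ne_zero r h0]
        try ring
      rw [hone, one_smul]
  refine ⟨partA, ?_⟩
  -- ### Part B: smoothness
  haveI : (𝓝[Ioo (-a) a \ {0}] (0:ℝ)).NeBot := hNeBot
  have hVmem : ∀ p : EuclideanSpace ℝ (Fin n) × ℝ, p ∈ U ×ˢ Ioo (-a) a →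
      ∀ s ∈ uIcc (0:ℝ) 1, ((p.1, s * p.2) : EuclideanSpace ℝ (Fin n) × ℝ) ∈ U ×ˢ Ioo (-a) a := by
    intro p hp s hs
    rw [uIcc_of_le zero_le_one] at hs
    refine ⟨hp.1, ?_⟩
    have h2 := hp.2
    simp only [mem_Ioo] at h2 ⊢
    rcases le_total 0 p.2 with hσ | hσ
    · have h9 := mul_nonneg hs.1 hσ
      have h10 := mul_le_mul_of_nonneg_right hs.2 hσ
      rw [one_mul] at h10
      exact ⟨by linarith, by linarith⟩
    · have h9 := mul_nonpos_of_nonneg_of_nonpos hs.1 hσ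
      have h10 := mul_le_mul_of_nonpos_right hs.2 hσ
      rw [one_mul] at h10
      exact ⟨by linarith, by linarith⟩
  have chain : ∀ j : ℕ, j ≤ r →
      ∃ η : EuclideanSpace ℝ (Fin n) × ℝ → EuclideanSpace ℝ (Fin m),
      ContDiffOn ℝ ((k - j : ℕ)) η (U ×ˢ Ioo (-a) a) ∧
      ∀ p ∈ U ×ˢ Ioo (-a) a, η p = p.2 ^ (r - j) • δf p := by
    intro j
    induction j with
    | zero =>
      intro _
      refine ⟨fun p => f₂ p - f₁ p, by simpa using hg, ?_⟩
      intro p hp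
      have := hfac p.1 hp.1 p.2 hp.2
      simpa using this
    | succ j ihj =>
      intro hj
      obtain ⟨η, hη, hηeq⟩ := ihj (by omega)
      have hjk : j < k := by omega
      have hjr : j < r := by omega
      set Dη : EuclideanSpace ℝ (Fin n) × ℝ → EuclideanSpace ℝ (Fin m) :=
        fun q => (fderiv ℝ η q) ((0 : EuclideanSpace ℝ (Fin n)), (1:ℝ)) with hDηdef
      have hcast : ((k - j : ℕ) : WithTop ℕ∞) = ((k - (j+1) : ℕ) : WithTop ℕ∞) + 1 := by
        have h6 : (k - j : ℕ) = (k - (j+1) : ℕ) + 1 := by omega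
        rw [h6]; push_cast; rfl
    -- smoothness of the partial derivative
      have hDη : ContDiffOn ℝ ((k - (j+1) : ℕ)) Dη (U ×ˢ Ioo (-a) a) := by
        have h1 := ((contDiffOn_succ_iff_fderiv_of_isOpen hVopen).1
          (by rw [← hcast]; exact hη)).2.2
        exact h1.clm_apply contDiffOn_const
      have hηdiff : DifferentiableOn ℝ η (U ×ˢ Ioo (-a) a) :=
        hη.differentiableOn (by rw [hcast]; simp)
      have hη0 : ∀ x ∈ U, η (x, 0) = 0 := by
        intro x hx
        rw [hηeq (x,0) ⟨hx, h0I⟩]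
        simp [zero_pow (show r - j ≠ 0 by omega)]
      set η' : EuclideanSpace ℝ (Fin n) × ℝ → EuclideanSpace ℝ (Fin m) :=
        fun p => ∫ s in (0:ℝ)..1, Dη (p.1, s * p.2) with hη'def
      -- smoothness of η' via the parametric integral lemma
      have hη'smooth : ContDiffOn ℝ ((k - (j+1) : ℕ)) η' (U ×ˢ Ioo (-a) a) := by
        intro p₀ hp₀
        have habs : |p₀.2| < a := abs_lt.2 ⟨hp₀.2.1, hp₀.2.2⟩
        set b : ℝ := (|p₀.2| + a)/2 with hbdef
        have hb1 : |p₀.2| < b := by rw [hbdef]; linarith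
        have hb2 : b < a := by rw [hbdef]; linarith
        have hbpos : (0:ℝ) < b := lt_of_le_of_lt (abs_nonneg _) hb1
        set ε : ℝ := (a - b)/(2*b) with hεdef
        have hεpos : 0 < ε := by
          rw [hεdef]
          apply div_pos (by linarith) (by linarith)
        have hW : IsOpen (U ×ˢ Ioo (-b) b) := hU.prod isOpen_Ioo
        have hmaps : MapsTo
            (fun q : (EuclideanSpace ℝ (Fin n) × ℝ) × ℝ =>
              ((q.1.1, q.2 * q.1.2) : EuclideanSpace ℝ (Fin n) × ℝ))
            ((U ×ˢ Ioo (-b) b) ×ˢ Ioo (-ε) (1+ε)) (U ×ˢ Ioo (-a) a) := by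
          rintro ⟨⟨y, t⟩, s⟩ ⟨⟨hy, ht⟩, hs⟩
          refine ⟨hy, ?_⟩
          have h1 : |t| < b := abs_lt.2 ⟨ht.1, ht.2⟩
          have h2 : |s| < 1 + ε := abs_lt.2 ⟨by linarith [hs.1, hεpos], hs.2⟩
          have h3 : |s * t| < (1 + ε) * b := by
            rw [abs_mul]
            exact mul_lt_mul'' h2 h1 (abs_nonneg _) (abs_nonneg _)
          have h4 : (1 + ε) * b = b + (a - b)/2 := by
            rw [hεdef]; field_simp
          have h5 : |s * t| < a := by
            rw [h4] at h3; linarith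
          exact abs_lt.1 h5
        have hΨ : ContDiff ℝ ((k - (j+1) : ℕ))
            (fun q : (EuclideanSpace ℝ (Fin n) × ℝ) × ℝ =>
              ((q.1.1, q.2 * q.1.2) : EuclideanSpace ℝ (Fin n) × ℝ)) := by
          apply ContDiff.prodMk
          · exact contDiff_fst.fst
          · exact contDiff_snd.mul contDiff_fst.snd
        have hF : ContDiffOn ℝ ((k - (j+1) : ℕ))
            (fun q : (EuclideanSpace ℝ (Fin n) × ℝ) × ℝ => Dη (q.1.1, q.2 * q.1.2))
            ((U ×ˢ Ioo (-b) b) ×ˢ Ioo (-ε) (1+ε)) :=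
          hDη.comp hΨ.contDiffOn hmaps
        have hres := contDiffOn_parametric_integral hW
          (by linarith : -ε < 0) (by linarith : (1:ℝ) < 1 + ε) (k - (j+1))
          (fun q : (EuclideanSpace ℝ (Fin n) × ℝ) × ℝ => Dη (q.1.1, q.2 * q.1.2)) hF
        have hp₀' : p₀ ∈ U ×ˢ Ioo (-b) b := ⟨hp₀.1, abs_lt.1 hb1⟩
        exact ((hres.contDiffAt (hW.mem_nhds hp₀')).contDiffWithinAt)
      -- FTC identity
      have hFTC : ∀ p ∈ U ×ˢ Ioo (-a) a, p.2 • η' p = η p := by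
        rintro ⟨x, h⟩ hp
        have hder : ∀ s ∈ uIcc (0:ℝ) 1,
            HasDerivAt (fun s : ℝ => η (x, s * h)) (h • Dη (x, s * h)) s := by
          intro s hs
          have hmem : ((x, s * h) : EuclideanSpace ℝ (Fin n) × ℝ) ∈ U ×ˢ Ioo (-a) a :=
            hVmem (x,h) hp s hs
          have hd : HasFDerivAt η (fderiv ℝ η (x, s*h)) (x, s*h) :=
            ((hηdiff (x, s*h) hmem).differentiableAt (hVopen.mem_nhds hmem)).hasFDerivAt
          have hγ : HasDerivAt (fun s : ℝ => ((x, s * h) : EuclideanSpace ℝ (Fin n) × ℝ))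
              (((0 : EuclideanSpace ℝ (Fin n)), h)) s := by
            refine (hasDerivAt_const s x).prodMk ?_
            simpa using (hasDerivAt_id s).mul_const h
          have hcomp := hd.comp_hasDerivAt s hγ
          have heq : (fderiv ℝ η (x, s*h)) ((0 : EuclideanSpace ℝ (Fin n)), h)
              = h • Dη (x, s*h) := by
            rw [hDηdef]
            have h7 : (((0 : EuclideanSpace ℝ (Fin n)), h) : EuclideanSpace ℝ (Fin n) × ℝ)
                = h • (((0 : EuclideanSpace ℝ (Fin n)), (1:ℝ))) := by
              rw [Prod.smul_mk, smul_zero, smul_eq_mul, mul_one]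
            rw [h7, ContinuousLinearMap.map_smul]
          rwa [heq] at hcomp
        have hcontD : ContinuousOn (fun s : ℝ => Dη (x, s * h)) (uIcc (0:ℝ) 1) := by
          apply hDη.continuousOn.comp
          · exact (Continuous.continuousOn (by fun_prop))
          · exact fun s hs => hVmem (x,h) hp s hs
        have hint : IntervalIntegrable (fun s : ℝ => h • Dη (x, s*h)) volume 0 1 :=
          (hcontD.const_smul h).intervalIntegrable
        have hFTC' := intervalIntegral.integral_eq_sub_of_hasDerivAt hder hint
        simp only [one_mul, zero_mul] at hFTC'
        rw [hη0 x hp.1, sub_zero] at hFTC'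
        show h • η' (x, h) = η (x, h)
        rw [hη'def]
        simp only
        rw [← intervalIntegral.integral_smul]
        exact hFTC'
      -- continuity of δf along the h-axis
      have hδx' : ∀ x ∈ U, ContinuousAt (fun h : ℝ => δf (x, h)) 0 := fun x hx =>
        (hδf.continuousAt (hVopen.mem_nhds ⟨hx, h0I⟩)).comp
          ((continuous_const.prodMk continuous_id).continuousAt)
      have hps : ∀ h : ℝ, h ^ (r - j) = h * h ^ (r - (j+1)) := by
        intro h
        have h8 : r - j = (r - (j+1)) + 1 := by omega
        rw [h8, pow_succ']
      have hη'eq : ∀ p ∈ U ×ˢ Ioo (-a) a, η' p = p.2 ^ (r - (j+1)) • δf p := by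
        rintro ⟨x, h⟩ hp
        by_cases h0 : h = 0
        · subst h0
          have hcont1 : ContinuousAt (fun h : ℝ => η' (x, h)) 0 :=
            (hη'smooth.continuousOn.continuousAt (hVopen.mem_nhds hp)).comp
              ((continuous_const.prodMk continuous_id).continuousAt)
          have t1 : Tendsto (fun h : ℝ => η' (x,h)) (𝓝[Ioo (-a) a \ {0}] 0) (𝓝 (η' (x,0))) :=
            hcont1.tendsto.mono_left nhdsWithin_le_nhds
          have t2 : Tendsto (fun h : ℝ => η' (x,h)) (𝓝[Ioo (-a) a \ {0}] 0)
              (𝓝 ((0:ℝ) ^ (r - (j+1)) • δf (x, 0))) := by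
            have hc2 : Tendsto (fun h : ℝ => h ^ (r - (j+1)) • δf (x, h)) (𝓝 0)
                (𝓝 ((0:ℝ) ^ (r - (j+1)) • δf (x, 0))) := by
              exact ((continuous_id.pow _).continuousAt).smul (hδx' x hp.1)
            refine (hc2.mono_left nhdsWithin_le_nhds).congr' ?_
            filter_upwards [self_mem_nhdsWithin] with h' hh'
            rcases hh' with ⟨hI', hne'⟩
            replace hne' : h' ≠ 0 := by simpa using hne'
            have e1 : h' • η' (x, h') = η (x, h') := hFTC (x,h') ⟨hp.1, hI'⟩
            rw [hηeq (x,h') ⟨hp.1, hI'⟩] at e1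
            simp only at e1
            rw [hps h', mul_smul] at e1
            exact (smul_right_injective _ hne' e1).symm
          exact tendsto_nhds_unique t1 t2
        · have e1 : h • η' (x, h) = η (x, h) := hFTC (x,h) hp
          rw [hηeq (x,h) hp] at e1
          simp only at e1
          rw [hps h, mul_smul] at e1
          exact smul_right_injective _ h0 e1
      exact ⟨η', hη'smooth, hη'eq⟩
  obtain ⟨η, hηs, hηe⟩ := chain r le_rfl
  refine hηs.congr ?_
  intro p hp
  rw [hηe p hp]
  simp
end
end

section
/- Let U ⊆ ℝ^n be open, a > 0, k ≥ 1, and let f₁, f₂ : U × (−a,a) → ℝ^m be of class C^k. Let r be a natural number with 1 ≤ r < k, and suppose there is a continuous function δf : U × (−a,a) → ℝ^m with f₂(x,h) − f₁(x,h) = h^r · δf(x,h) for all (x,h), and that δf(x,0) = 0 for all x ∈ U. Then there exists a continuous function δ′f : U × (−a,a) → ℝ^m with f₂(x,h) − f₁(x,h) = h^{r+1} · δ′f(x,h) for all (x,h) ∈ U × (−a,a). -/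
open Set
open scoped Nat

noncomputable section

section Aux

variable {E : Type*} [NormedAddCommGroup E] [NormedSpace ℝ E]

/-- Derivative of the Taylor-type telescoping sum. -/
lemma taylor_sum_hasDerivAt {ψ : ℕ → ℝ → E} {t h : ℝ} {M : ℕ}
    (hd : ∀ i ≤ M, HasDerivAt (ψ i) (ψ (i + 1) t) t) :
    HasDerivAt (fun u => ∑ i ∈ Finset.range (M + 1), ((h - u) ^ i / i !) • ψ i u)
      (((h - t) ^ M / M !) • ψ (M + 1) t) t := by
  induction M with
  | zero =>
    simpa using hd 0 (le_refl 0)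
  | succ M IH =>
    have IH' := IH (fun i hi => hd i (hi.trans (Nat.le_succ M)))
    have hcoef : HasDerivAt (fun u : ℝ => (h - u) ^ (M + 1) / ((M + 1)! : ℝ))
        ((((M : ℝ) + 1) * (h - t) ^ M * (-1)) / ((M + 1)! : ℝ)) t := by
      have h1 : HasDerivAt (fun u : ℝ => h - u) (-1) t := (hasDerivAt_id t).const_sub h
      have h2 := h1.pow (M + 1)
      simp only [Nat.add_sub_cancel, Nat.cast_add, Nat.cast_one] at h2
      exact h2.div_const _
    have hterm := hcoef.smul (hd (M + 1) le_rfl)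
    have hsum := IH'.add hterm
    have hfun : (fun u => ∑ i ∈ Finset.range (M + 1 + 1), ((h - u) ^ i / i !) • ψ i u)
        = fun u => (∑ i ∈ Finset.range (M + 1), ((h - u) ^ i / i !) • ψ i u)
          + ((h - u) ^ (M + 1) / ((M + 1)! : ℝ)) • ψ (M + 1) u := by
      funext u; rw [Finset.sum_range_succ]
    rw [hfun]
    convert hsum using 1
    · rfl
    have hfact : ((M + 1)! : ℝ) = ((M : ℝ) + 1) * (M ! : ℝ) := by
      rw [Nat.factorial_succ]; push_cast; ring
    have hM : (M ! : ℝ) ≠ 0 := Nat.cast_ne_zero.mpr (Nat.factorial_ne_zero M)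
    have hM1 : ((M + 1)! : ℝ) ≠ 0 := Nat.cast_ne_zero.mpr (Nat.factorial_ne_zero (M + 1))
    have hc : ((h - t) ^ M / (M ! : ℝ))
        + ((((M : ℝ) + 1) * (h - t) ^ M * (-1)) / ((M + 1)! : ℝ)) = 0 := by
      rw [hfact]; field_simp; ring
    calc ((h - t) ^ (M + 1) / ((M + 1)! : ℝ)) • ψ (M + 1 + 1) t
        = (((h - t) ^ M / (M ! : ℝ))
            + ((((M : ℝ) + 1) * (h - t) ^ M * (-1)) / ((M + 1)! : ℝ))) • ψ (M + 1) t
          + ((h - t) ^ (M + 1) / ((M + 1)! : ℝ)) • ψ (M + 1 + 1) t := by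
          rw [hc, zero_smul, zero_add]
      _ = _ := by rw [add_smul]; abel

/-- One–variable Taylor formula with integral remainder when all lower derivatives vanish
at `0`. -/
lemma taylor_integral_vanish [CompleteSpace E] {a : ℝ} {ψ : ℕ → ℝ → E} {J : ℕ}
    (hd : ∀ i ≤ J, ∀ t ∈ Ioo (-a) a, HasDerivAt (ψ i) (ψ (i + 1) t) t)
    (hc : ContinuousOn (ψ (J + 1)) (Ioo (-a) a))
    (h0 : ∀ i ≤ J, ψ i 0 = 0) (ha0 : (0 : ℝ) ∈ Ioo (-a) a) {h : ℝ} (hh : h ∈ Ioo (-a) a) :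
    ψ 0 h = h ^ (J + 1) • ∫ s in (0 : ℝ)..1, (((1 : ℝ) - s) ^ J / (J !)) • ψ (J + 1) (s * h) := by
  set G : ℝ → E := fun t => (((h - t) ^ J / (J ! : ℝ)) • ψ (J + 1) t) with hG
  have hsub : uIcc (0 : ℝ) h ⊆ Ioo (-a) a := Set.ordConnected_Ioo.uIcc_subset ha0 hh
  have hF' : ∀ t ∈ uIcc (0 : ℝ) h,
      HasDerivAt (fun u => ∑ i ∈ Finset.range (J + 1), ((h - u) ^ i / i !) • ψ i u) (G t) t :=
    fun t ht => taylor_sum_hasDerivAt (fun i hi => hd i hi t (hsub ht))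
  have hGc : ContinuousOn G (uIcc (0 : ℝ) h) := by
    apply ContinuousOn.smul
    · exact ((continuous_const.sub continuous_id).pow J).continuousOn.div_const _
    · exact hc.mono hsub
  have hInt : IntervalIntegrable G MeasureTheory.volume 0 h := hGc.intervalIntegrable
  have hFTC := intervalIntegral.integral_eq_sub_of_hasDerivAt hF' hInt
  have hFh : (∑ i ∈ Finset.range (J + 1), ((h - h) ^ i / i !) • ψ i h) = ψ 0 h := by
    rw [Finset.sum_eq_single_of_mem 0 (Finset.mem_range.mpr (Nat.succ_pos J))]
    · simp
    · intro i _ hi; simp [sub_self, zero_pow hi]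
  have hF0 : (∑ i ∈ Finset.range (J + 1), ((h - 0) ^ i / i !) • ψ i 0) = 0 := by
    apply Finset.sum_eq_zero
    intro i hi
    rw [h0 i (Nat.lt_succ_iff.mp (Finset.mem_range.mp hi)), smul_zero]
  rw [hFh, hF0, sub_zero] at hFTC
  -- substitution t = s * h
  have hsub2 : (h : ℝ) • ∫ s in (0 : ℝ)..1, G (s * h) = ∫ t in (0 : ℝ)..h, G t := by
    have := intervalIntegral.smul_integral_comp_mul_right (a := 0) (b := 1) G h
    simpa using this
  have hint : ∀ s : ℝ, G (s * h)
      = h ^ J • ((((1 : ℝ) - s) ^ J / (J ! : ℝ)) • ψ (J + 1) (s * h)) := by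
    intro s
    show ((h - s * h) ^ J / (J ! : ℝ)) • ψ (J + 1) (s * h) = _
    rw [show h - s * h = h * (1 - s) from by ring, mul_pow, mul_div_assoc, mul_smul]
  have : (∫ s in (0 : ℝ)..1, G (s * h))
      = h ^ J • ∫ s in (0 : ℝ)..1, (((1 : ℝ) - s) ^ J / (J !)) • ψ (J + 1) (s * h) := by
    simp_rw [hint]
    rw [intervalIntegral.integral_smul]
  rw [this] at hsub2
  rw [← hFTC, ← hsub2, smul_smul, ← pow_succ']

end Aux

section Param

variable {X E : Type*} [NormedAddCommGroup X] [NormedSpace ℝ X] [ProperSpace X]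
  [NormedAddCommGroup E] [NormedSpace ℝ E]

/-- Joint continuity of the parametric integral `∫₀¹ c s • ψ (x, s h) ds`. -/
lemma continuousOn_parametric_integral {U : Set X} (hU : IsOpen U) {a : ℝ}
    {ψ : X × ℝ → E} (hψ : ContinuousOn ψ (U ×ˢ Ioo (-a) a))
    {c : ℝ → ℝ} (hc : Continuous c) :
    ContinuousOn (fun p : X × ℝ => ∫ s in (0 : ℝ)..1, c s • ψ (p.1, s * p.2))
      (U ×ˢ Ioo (-a) a) := by
  have hS : IsOpen (U ×ˢ Ioo (-a) a) := hU.prod isOpen_Ioo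
  have hmap : ∀ p : X × ℝ, p ∈ U ×ˢ Ioo (-a) a → ∀ s ∈ Icc (0 : ℝ) 1,
      ((p.1, s * p.2) : X × ℝ) ∈ U ×ˢ Ioo (-a) a := by
    intro p hp s hs
    refine ⟨hp.1, ?_⟩
    have h2 : |p.2| < a := abs_lt.mpr ⟨hp.2.1, hp.2.2⟩
    have : |s * p.2| ≤ |p.2| := by
      rw [abs_mul]
      calc |s| * |p.2| ≤ 1 * |p.2| :=
        mul_le_mul_of_nonneg_right (abs_le.mpr ⟨by linarith [hs.1], hs.2⟩) (abs_nonneg _)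
      _ = |p.2| := one_mul _
    exact abs_lt.mp (lt_of_le_of_lt this h2)
  intro p₀ hp₀
  apply ContinuousAt.continuousWithinAt
  obtain ⟨ε, hε, hball⟩ := Metric.isOpen_iff.mp hS p₀ hp₀
  set K := Metric.closedBall p₀ (ε / 2) with hKdef
  have hK : K ⊆ U ×ˢ Ioo (-a) a :=
    (Metric.closedBall_subset_ball (by linarith)).trans hball
  have hKc : IsCompact K := isCompact_closedBall _ _
  set K' : Set (X × ℝ) := (fun q : (X × ℝ) × ℝ => ((q.1.1, q.2 * q.1.2) : X × ℝ)) ''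
    (K ×ˢ Icc (0 : ℝ) 1) with hK'def
  have hK'c : IsCompact K' := by
    apply IsCompact.image (hKc.prod isCompact_Icc)
    exact (continuous_fst.fst.prodMk (continuous_snd.mul continuous_fst.snd))
  have hK'S : K' ⊆ U ×ˢ Ioo (-a) a := by
    rintro q ⟨⟨p, s⟩, ⟨hpK, hs⟩, rfl⟩
    exact hmap p (hK hpK) s hs
  obtain ⟨M, hM⟩ := hK'c.exists_bound_of_continuousOn (hψ.mono hK'S)
  have hIoc : Set.uIoc (0 : ℝ) 1 = Ioc (0 : ℝ) 1 := Set.uIoc_of_le zero_le_one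
  apply intervalIntegral.continuousAt_of_dominated_interval
    (bound := fun t => |c t| * M)
  · filter_upwards [Metric.closedBall_mem_nhds p₀ (half_pos hε)] with p hp
    rw [hIoc]
    apply ContinuousOn.aestronglyMeasurable _ measurableSet_Ioc
    apply ContinuousOn.smul hc.continuousOn
    apply hψ.comp (Continuous.continuousOn (by fun_prop))
    intro s hs
    exact hmap p (hK hp) s (Ioc_subset_Icc_self hs)
  · filter_upwards [Metric.closedBall_mem_nhds p₀ (half_pos hε)] with p hp
    apply MeasureTheory.ae_of_all
    intro t ht
    rw [norm_smul, Real.norm_eq_abs]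
    apply mul_le_mul_of_nonneg_left _ (abs_nonneg _)
    apply hM
    rw [hIoc] at ht
    exact ⟨(p, t), ⟨hp, Ioc_subset_Icc_self ht⟩, rfl⟩
  · exact ((hc.abs.mul continuous_const)).intervalIntegrable _ _
  · apply MeasureTheory.ae_of_all
    intro t ht
    rw [hIoc] at ht
    have hpt : ((p₀.1, t * p₀.2) : X × ℝ) ∈ U ×ˢ Ioo (-a) a :=
      hmap p₀ hp₀ t (Ioc_subset_Icc_self ht)
    have hψat : ContinuousAt ψ (p₀.1, t * p₀.2) := hψ.continuousAt (hS.mem_nhds hpt)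
    have hm2 : Continuous (fun p : X × ℝ => ((p.1, t * p.2) : X × ℝ)) := by fun_prop
    have hcomp : ContinuousAt (fun p : X × ℝ => ψ (p.1, t * p.2)) p₀ :=
      ContinuousAt.comp (x := p₀) hψat hm2.continuousAt
    exact hcomp.const_smul _

end Param

/-- If two `C^k` maps on `U × (−a,a)` have order-`h^r` contact with `r < k` and the continuous
factor vanishes at `h = 0`, then they have order-`h^{r+1}` contact. -/
theorem order_contact_improves_of_vanishing_residual
    {n m : ℕ} (U : Set (EuclideanSpace ℝ (Fin n))) (hU : IsOpen U)
    (a : ℝ) (ha : 0 < a) (k : ℕ) (hk : 1 ≤ k)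
    (f₁ f₂ : EuclideanSpace ℝ (Fin n) × ℝ → EuclideanSpace ℝ (Fin m))
    (hf₁ : ContDiffOn ℝ k f₁ (U ×ˢ Ioo (-a) a))
    (hf₂ : ContDiffOn ℝ k f₂ (U ×ˢ Ioo (-a) a))
    (r : ℕ) (hr1 : 1 ≤ r) (hrk : r < k)
    (δf : EuclideanSpace ℝ (Fin n) × ℝ → EuclideanSpace ℝ (Fin m))
    (hδf : ContinuousOn δf (U ×ˢ Ioo (-a) a))
    (hfac : ∀ x ∈ U, ∀ h ∈ Ioo (-a) a, f₂ (x, h) - f₁ (x, h) = h ^ r • δf (x, h))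
    (hres : ∀ x ∈ U, δf (x, 0) = 0) :
    ∃ δ'f : EuclideanSpace ℝ (Fin n) × ℝ → EuclideanSpace ℝ (Fin m),
      ContinuousOn δ'f (U ×ˢ Ioo (-a) a) ∧
      ∀ x ∈ U, ∀ h ∈ Ioo (-a) a, f₂ (x, h) - f₁ (x, h) = h ^ (r + 1) • δ'f (x, h) := by
  have hS : IsOpen (U ×ˢ Ioo (-a) a) := hU.prod isOpen_Ioo
  have h0mem : (0 : ℝ) ∈ Ioo (-a) a := Set.mem_Ioo.mpr ⟨neg_lt_zero.mpr ha, ha⟩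
  set g : EuclideanSpace ℝ (Fin n) × ℝ → EuclideanSpace ℝ (Fin m) :=
    fun p => f₂ p - f₁ p with hgdef
  have hg : ContDiffOn ℝ ((r + 1 : ℕ)) g (U ×ˢ Ioo (-a) a) := by
    apply (hf₂.sub hf₁).of_le
    exact_mod_cast Nat.succ_le_of_lt hrk
  set D : ℕ → EuclideanSpace ℝ (Fin n) × ℝ → EuclideanSpace ℝ (Fin m) :=
    fun j => (fun (G : EuclideanSpace ℝ (Fin n) × ℝ → EuclideanSpace ℝ (Fin m)) p =>
      fderiv ℝ G p ((0 : EuclideanSpace ℝ (Fin n)), (1 : ℝ)))^[j] g with hDdef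
  have hD0 : D 0 = g := rfl
  have hDsucc : ∀ j, D (j + 1)
      = fun p => fderiv ℝ (D j) p ((0 : EuclideanSpace ℝ (Fin n)), (1 : ℝ)) := by
    intro j
    simp only [hDdef]
    exact Function.iterate_succ_apply' _ _ _
  have hDs : ∀ j, j ≤ r + 1 → ContDiffOn ℝ ((r + 1 - j : ℕ)) (D j) (U ×ˢ Ioo (-a) a) := by
    intro j
    induction j with
    | zero => intro _; simpa [hD0] using hg
    | succ j IH =>
      intro hj
      have hIH := IH (by omega)
      have he : r + 1 - j = (r + 1 - (j + 1)) + 1 := by omega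
      rw [he] at hIH
      have hcast : ((r + 1 - (j + 1) + 1 : ℕ) : WithTop ℕ∞)
          = ((r + 1 - (j + 1) : ℕ) : WithTop ℕ∞) + 1 := by norm_cast
      rw [hcast] at hIH
      have hfd := ((contDiffOn_succ_iff_fderiv_of_isOpen hS).mp hIH).2.2
      rw [hDsucc j]
      exact hfd.clm_apply contDiffOn_const
  have hDc : ∀ j, j ≤ r + 1 → ContinuousOn (D j) (U ×ˢ Ioo (-a) a) :=
    fun j hj => (hDs j hj).continuousOn
  have hDdiff : ∀ j, j ≤ r → ∀ p ∈ U ×ˢ Ioo (-a) a, DifferentiableAt ℝ (D j) p := by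
    intro j hj p hp
    have h1 : (1 : WithTop ℕ∞) ≤ ((r + 1 - j : ℕ) : WithTop ℕ∞) := by
      exact_mod_cast (by omega : 1 ≤ r + 1 - j)
    exact ((hDs j (by omega)).differentiableOn (zero_lt_one.trans_le h1).ne').differentiableAt (hS.mem_nhds hp)
  have hDslice : ∀ j, j ≤ r → ∀ x ∈ U, ∀ h ∈ Ioo (-a) a,
      HasDerivAt (fun s => D j (x, s)) (D (j + 1) (x, h)) h := by
    intro j hj x hx h hh
    have hp : ((x, h) : EuclideanSpace ℝ (Fin n) × ℝ) ∈ U ×ˢ Ioo (-a) a := ⟨hx, hh⟩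
    have h1 := (hDdiff j hj (x, h) hp).hasFDerivAt
    have h2 : HasDerivAt (fun s : ℝ => ((x, s) : EuclideanSpace ℝ (Fin n) × ℝ))
        ((0 : EuclideanSpace ℝ (Fin n)), (1 : ℝ)) h :=
      HasDerivAt.prodMk (hasDerivAt_const h x) (hasDerivAt_id h)
    have h3 := h1.comp_hasDerivAt h h2
    rw [hDsucc j]
    exact h3
  set Φ : ℕ → EuclideanSpace ℝ (Fin n) × ℝ → EuclideanSpace ℝ (Fin m) :=
    fun J p => ∫ s in (0 : ℝ)..1, (((1 : ℝ) - s) ^ J / (J !)) • D (J + 1) (p.1, s * p.2)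
    with hΦdef
  have hΦcont : ∀ J, J ≤ r → ContinuousOn (Φ J) (U ×ˢ Ioo (-a) a) := by
    intro J hJ
    exact continuousOn_parametric_integral hU (hDc (J + 1) (by omega))
      (c := fun s => ((1 : ℝ) - s) ^ J / (J !)) (by fun_prop)
  have htaylor : ∀ J, J ≤ r → (∀ i, i ≤ J → ∀ x ∈ U, D i (x, 0) = 0) →
      ∀ x ∈ U, ∀ h ∈ Ioo (-a) a, g (x, h) = h ^ (J + 1) • Φ J (x, h) := by
    intro J hJ h0 x hx h hh
    have hslicecont : ContinuousOn (fun s => D (J + 1) (x, s)) (Ioo (-a) a) := by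
      apply (hDc (J + 1) (by omega)).comp (Continuous.continuousOn (by fun_prop))
      intro s hs
      exact ⟨hx, hs⟩
    have := taylor_integral_vanish (a := a) (ψ := fun i s => D i (x, s)) (J := J)
      (fun i hi t ht => hDslice i (hi.trans hJ) x hx t ht)
      hslicecont
      (fun i hi => h0 i hi x hx) h0mem hh
    simpa [hD0, hΦdef] using this
  have key : ∀ j, j ≤ r → ∀ x ∈ U, D j (x, 0) = 0 := by
    intro j
    induction j using Nat.strong_induction_on with
    | _ j IH =>
      intro hjr x hx
      match j, hjr, IH with
      | 0, hjr, IH =>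
        have h1 := hfac x hx 0 h0mem
        have : g (x, 0) = 0 := by
          rw [hgdef]
          simp only [h1]
          rw [zero_pow (by omega : r ≠ 0), zero_smul]
        rw [hD0]
        exact this
      | (J + 1), hjr, IH =>
        have hJr : J ≤ r := by omega
        have h0' : ∀ i, i ≤ J → ∀ x' ∈ U, D i (x', 0) = 0 :=
          fun i hi => IH i (by omega) (by omega)
        -- the sequence tₙ → 0 inside (0, a)
        set t : ℕ → ℝ := fun N => a / (2 * (N + 1)) with htdef
        have htpos : ∀ N, 0 < t N := fun N => by
          apply div_pos ha
          positivity
        have htlt : ∀ N, t N < a := fun N => by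
          rw [htdef]
          rw [div_lt_iff₀ (by positivity)]
          nlinarith [htpos N]
        have htmem : ∀ N, t N ∈ Ioo (-a) a := fun N => ⟨by linarith [htpos N], htlt N⟩
        have htne : ∀ N, t N ≠ 0 := fun N => (htpos N).ne'
        have ht0 : Filter.Tendsto t Filter.atTop (nhds 0) := by
          have h1 : Filter.Tendsto (fun N : ℕ => (a / 2) * (1 / (N + 1))) Filter.atTop
              (nhds ((a / 2) * 0)) :=
            tendsto_one_div_add_atTop_nhds_zero_nat.const_mul (a / 2)
          rw [mul_zero] at h1
          convert h1 using 2 with N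
          rw [htdef]
          field_simp
        -- identify Φ J along the sequence
        have hval : ∀ N, Φ J (x, t N) = (t N) ^ (r - (J + 1)) • δf (x, t N) := by
          intro N
          have hfeq : g (x, t N) = (t N) ^ (J + 1) • Φ J (x, t N) :=
            htaylor J hJr h0' x hx (t N) (htmem N)
          have hfeq2 : g (x, t N) = (t N) ^ r • δf (x, t N) := hfac x hx (t N) (htmem N)
          have hpow : (t N) ^ r = (t N) ^ (J + 1) * (t N) ^ (r - (J + 1)) := by
            rw [← pow_add]
            congr 1
            omega
          apply smul_right_injective (EuclideanSpace ℝ (Fin m))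
            (pow_ne_zero (J + 1) (htne N))
          show (t N) ^ (J + 1) • Φ J (x, t N)
            = (t N) ^ (J + 1) • ((t N) ^ (r - (J + 1)) • δf (x, t N))
          rw [← hfeq, hfeq2, hpow, mul_smul]
        have hseqS : ∀ N, ((x, t N) : EuclideanSpace ℝ (Fin n) × ℝ) ∈ U ×ˢ Ioo (-a) a :=
          fun N => ⟨hx, htmem N⟩
        have hx0S : ((x, (0 : ℝ)) : EuclideanSpace ℝ (Fin n) × ℝ) ∈ U ×ˢ Ioo (-a) a :=
          ⟨hx, h0mem⟩
        have hseqtend : Filter.Tendsto (fun N => ((x, t N) : EuclideanSpace ℝ (Fin n) × ℝ))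
            Filter.atTop (nhdsWithin (x, (0 : ℝ)) (U ×ˢ Ioo (-a) a)) := by
          rw [tendsto_nhdsWithin_iff]
          exact ⟨Filter.Tendsto.prodMk_nhds tendsto_const_nhds ht0,
            Filter.Eventually.of_forall hseqS⟩
        have lim1 : Filter.Tendsto (fun N => Φ J (x, t N)) Filter.atTop
            (nhds (Φ J (x, 0))) :=
          (((hΦcont J hJr) _ hx0S).tendsto).comp hseqtend
        have lim2 : Filter.Tendsto (fun N => Φ J (x, t N)) Filter.atTop (nhds 0) := by
          have hδtend : Filter.Tendsto (fun N => δf (x, t N)) Filter.atTop (nhds 0) := by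
            have := ((hδf _ hx0S).tendsto).comp hseqtend
            rwa [hres x hx] at this
          have hptend : Filter.Tendsto (fun N => (t N) ^ (r - (J + 1))) Filter.atTop
              (nhds ((0 : ℝ) ^ (r - (J + 1)))) :=
            ((continuous_pow (r - (J + 1))).tendsto 0).comp ht0
          have := hptend.smul hδtend
          rw [smul_zero] at this
          simp only [hval]
          exact this
        have hΦ0 : Φ J (x, 0) = 0 := tendsto_nhds_unique lim1 lim2
        -- compute Φ J (x, 0) in terms of D (J+1) (x, 0)
        have hcomp : Φ J (x, 0) = (∫ s in (0 : ℝ)..1, (((1 : ℝ) - s) ^ J / (J !))) •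
            D (J + 1) (x, 0) := by
          rw [hΦdef]
          simp only [mul_zero]
          rw [← intervalIntegral.integral_smul_const]
        have hcval : (∫ s in (0 : ℝ)..1, (((1 : ℝ) - s) ^ J / (J !)))
            = (1 / (J + 1)) / (J !) := by
          rw [intervalIntegral.integral_div]
          congr 1
          rw [intervalIntegral.integral_comp_sub_left (fun u => u ^ J) 1]
          norm_num [integral_pow]
        have hcne : ((1 : ℝ) / (J + 1)) / (J !) ≠ 0 := by
          apply div_ne_zero
          · positivity
          · exact_mod_cast Nat.factorial_ne_zero J
        rw [hcomp, hcval] at hΦ0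
        rcases smul_eq_zero.mp hΦ0 with h | h
        · exact absurd h hcne
        · exact h
  refine ⟨Φ r, hΦcont r le_rfl, ?_⟩
  intro x hx h hh
  have := htaylor r le_rfl (fun i hi => key i hi) x hx h hh
  exact this

end
end

section
/- There is no open subset W ⊆ ℝ × ℝ × ℝ with the following two properties: (1) (0, q, q) ∈ W for every q ∈ ℝ; and (2) every (h, q⁺, q⁻) ∈ W with h ≠ 0 satisfies |q⁺ − q⁻| < √|h|. -/
noncomputable section

/-- There is no open set `W ⊆ ℝ × ℝ × ℝ` containing `(0,q,q)` for every `q` all of whose points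
`(h, q⁺, q⁻)` with `h ≠ 0` satisfy `|q⁺ − q⁻| < √|h|`. -/
theorem no_open_wedge_neighborhood :
    ¬ ∃ W : Set (ℝ × ℝ × ℝ), IsOpen W ∧ (∀ q : ℝ, ((0 : ℝ), q, q) ∈ W) ∧
      ∀ h qp qm : ℝ, (h, qp, qm) ∈ W → h ≠ 0 → |qp - qm| < Real.sqrt |h| := by
  rintro ⟨W, hW, hzero, hcond⟩
  obtain ⟨ε, hε, hball⟩ := Metric.isOpen_iff.mp hW _ (hzero 0)
  set δ : ℝ := min ε 1 / 2 with hδdef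
  have hδ0 : 0 < δ := by positivity
  have hδε : δ < ε := by
    have : min ε 1 ≤ ε := min_le_left _ _
    nlinarith
  have hδ1 : δ < 1 := by
    have : min ε 1 ≤ 1 := min_le_right _ _
    nlinarith
  have hmem : ((δ ^ 2 : ℝ), δ / 2, -(δ / 2)) ∈ W := by
    apply hball
    simp only [Metric.mem_ball, Prod.dist_eq, Real.dist_eq, sub_zero, max_lt_iff]
    refine ⟨?_, ?_, ?_⟩
    · rw [abs_of_pos (by positivity)]; nlinarith
    · rw [abs_of_pos (by positivity)]; nlinarith
    · rw [abs_neg, abs_of_pos (by positivity)]; nlinarith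
  have := hcond _ _ _ hmem (by positivity)
  rw [abs_of_pos (by positivity : (0:ℝ) < δ ^ 2), Real.sqrt_sq hδ0.le] at this
  have : |δ / 2 - -(δ / 2)| = δ := by rw [sub_neg_eq_add, abs_of_pos (by positivity)]; ring
  linarith [abs_of_pos hδ0 ▸ this]
end
end

section
/- Let U ⊆ ℝ × ℝ × ℝ^d be open, let r ≥ 0 be a natural number, and let ψ₁, ψ₂ : U → ℝ^n be continuous functions such that ψ₂(h,t,v) − ψ₁(h,t,v) = t^{r+1} · δψ(h,t,v) for all (h,t,v) ∈ U, where δψ : U → ℝ^n is continuous. Let a > 0 and let α : (−a,a) → ℝ be continuously differentiable with α(0) = 0. Define U″ = {(h,v) ∈ ℝ × ℝ^d : |h| < a and (h, α(h), v) ∈ U}, and define ∂^j : U″ → ℝ^n by ∂^j(h,v) = ψ_j(h, α(h), v) for j = 1, 2. Then there exists a continuous function δ∂ : U″ → ℝ^n with ∂²(h,v) − ∂¹(h,v) = h^{r+1} · δ∂(h,v) for all (h,v) ∈ U″. -/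
open Set

noncomputable section

/-- Quotient function `α h / h`, extended by the derivative at `0`. -/
private lemma quot_continuousOn {a : ℝ} (ha : 0 < a) (α : ℝ → ℝ)
    (hα : ContDiffOn ℝ 1 α (Ioo (-a) a)) (hα0 : α 0 = 0) :
    ∃ g : ℝ → ℝ, ContinuousOn g (Ioo (-a) a) ∧
      ∀ h ∈ Ioo (-a) a, α h = h * g h := by
  classical
  set g : ℝ → ℝ := fun h => if h = 0 then deriv α 0 else α h / h with hg
  have h0mem : (0 : ℝ) ∈ Ioo (-a) a := ⟨neg_lt_zero.mpr ha, ha⟩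
  have hopen : IsOpen (Ioo (-a) a) := isOpen_Ioo
  have hαc : ContinuousOn α (Ioo (-a) a) := hα.continuousOn
  refine ⟨g, ?_, ?_⟩
  · intro x hx
    rcases eq_or_ne x 0 with rfl | hx0
    · -- continuity at 0 via the derivative
      have hdiff : DifferentiableAt ℝ α 0 := by
        have := (hα.differentiableOn one_ne_zero).differentiableAt
          (hopen.mem_nhds h0mem)
        exact this
      have hder : HasDerivAt α (deriv α 0) 0 := hdiff.hasDerivAt
      have hslope : Filter.Tendsto (slope α 0) (nhdsWithin 0 {(0:ℝ)}ᶜ)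
          (nhds (deriv α 0)) := hasDerivAt_iff_tendsto_slope.mp hder
      have hto : Filter.Tendsto g (nhds 0) (nhds (g 0)) := by
        have hgs : ∀ h : ℝ, h ≠ 0 → g h = slope α 0 h := by
          intro h hh
          simp [hg, hh, slope, hα0, div_eq_inv_mul]
        have : Filter.Tendsto g (nhdsWithin 0 {(0:ℝ)}ᶜ) (nhds (deriv α 0)) := by
          refine hslope.congr' ?_
          filter_upwards [self_mem_nhdsWithin] with h hh
          exact (hgs h hh).symm
        have hg0 : g 0 = deriv α 0 := by simp [hg]
        rw [hg0]
        rw [← nhdsNE_sup_pure 0]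
        rw [Filter.tendsto_sup]
        exact ⟨this, by simpa [hg0] using tendsto_pure_nhds g 0⟩
      exact ContinuousAt.continuousWithinAt hto
    · -- continuity at x ≠ 0
      have : ContinuousWithinAt (fun h => α h / h) (Ioo (-a) a) x :=
        (hαc x hx).div continuousWithinAt_id hx0
      refine this.congr_of_eventuallyEq ?_ (by simp [hg, hx0])
      have hmem : {h : ℝ | h ≠ 0} ∈ nhdsWithin x (Ioo (-a) a) :=
        mem_nhdsWithin_of_mem_nhds (isOpen_compl_singleton.mem_nhds hx0)
      filter_upwards [hmem] with h hh
      simp [hg, hh]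
  · intro h hh
    rcases eq_or_ne h 0 with rfl | hh0
    · simp [hα0]
    · simp [hg, hh0, mul_div_cancel₀ _ hh0]

/-- If two discretizations `ψ₁, ψ₂` have order-`t^{r+1}` contact in the second variable, then
the boundary maps `∂^j(h,v) = ψ_j(h, α(h), v)` obtained from a `C¹` reparametrization `α` with
`α(0) = 0` have order-`h^{r+1}` contact in the first variable. -/
theorem boundary_maps_contact_order
    {d n : ℕ} (U : Set (ℝ × ℝ × (Fin d → ℝ))) (hU : IsOpen U)
    (r : ℕ)
    (ψ₁ ψ₂ : ℝ × ℝ × (Fin d → ℝ) → Fin n → ℝ)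
    (hψ₁ : ContinuousOn ψ₁ U) (hψ₂ : ContinuousOn ψ₂ U)
    (δψ : ℝ × ℝ × (Fin d → ℝ) → Fin n → ℝ) (hδψ : ContinuousOn δψ U)
    (hfac : ∀ z ∈ U, ψ₂ z - ψ₁ z = z.2.1 ^ (r + 1) • δψ z)
    (a : ℝ) (ha : 0 < a) (α : ℝ → ℝ)
    (hα : ContDiffOn ℝ 1 α (Ioo (-a) a)) (hα0 : α 0 = 0)
    (U'' : Set (ℝ × (Fin d → ℝ)))
    (hU'' : U'' = {p : ℝ × (Fin d → ℝ) | |p.1| < a ∧ (p.1, α p.1, p.2) ∈ U}) :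
    ∃ δ : ℝ × (Fin d → ℝ) → Fin n → ℝ,
      ContinuousOn δ U'' ∧
      ∀ p ∈ U'',
        ψ₂ (p.1, α p.1, p.2) - ψ₁ (p.1, α p.1, p.2) = p.1 ^ (r + 1) • δ p := by
  obtain ⟨g, hgc, hgα⟩ := quot_continuousOn ha α hα hα0
  set Φ : ℝ × (Fin d → ℝ) → ℝ × ℝ × (Fin d → ℝ) :=
    fun p => (p.1, α p.1, p.2) with hΦ
  have hsub : ∀ p ∈ U'', p.1 ∈ Ioo (-a) a := by
    intro p hp
    rw [hU''] at hp
    exact abs_lt.mp hp.1 |> fun h => ⟨h.1, h.2⟩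
  have hΦc : ContinuousOn Φ U'' := by
    refine ContinuousOn.prodMk continuousOn_fst (ContinuousOn.prodMk ?_ continuousOn_snd)
    exact hα.continuousOn.comp continuousOn_fst hsub
  have hΦmaps : ∀ p ∈ U'', Φ p ∈ U := by
    intro p hp; rw [hU''] at hp; exact hp.2
  refine ⟨fun p => (g p.1) ^ (r + 1) • δψ (Φ p), ?_, ?_⟩
  · refine ContinuousOn.smul (?_ : ContinuousOn (fun p : ℝ × (Fin d → ℝ) => (g p.1) ^ (r + 1)) U'') (hδψ.comp hΦc hΦmaps)
    exact (hgc.comp continuousOn_fst hsub).pow _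
  · intro p hp
    have hz := hfac (Φ p) (hΦmaps p hp)
    have hαp : α p.1 = p.1 * g p.1 := hgα p.1 (hsub p hp)
    calc ψ₂ (p.1, α p.1, p.2) - ψ₁ (p.1, α p.1, p.2)
        = (α p.1) ^ (r + 1) • δψ (Φ p) := hz
      _ = p.1 ^ (r + 1) • (g p.1) ^ (r + 1) • δψ (Φ p) := by
          rw [hαp, mul_pow, smul_smul]
end
end

section
/- Let U ⊆ ℝ^n be open, a > 0, and let f₁, f₂ : U × (−a,a) → ℝ^m be smooth (C^∞). Let r ≥ 1 be a natural number, and suppose there is a continuous function δf : U × (−a,a) → ℝ^m with f₂(x,h) − f₁(x,h) = h^r · δf(x,h) for all (x,h). Then there exists a continuous map Δ : U × (−a,a) → Hom(ℝ^n × ℝ, ℝ^m) such that Df₂(x,h) − Df₁(x,h) = h^{r−1} · Δ(x,h) for all (x,h) ∈ U × (−a,a), where Df_j(x,h) denotes the total (Fréchet) derivative of f_j at (x,h). -/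
set_option synthInstance.maxHeartbeats 1000000
set_option maxHeartbeats 1000000


open Set

noncomputable section

open MeasureTheory Metric Filter Topology intervalIntegral

section Aux

variable {P : Type} [NormedAddCommGroup P] [NormedSpace ℝ P]
  {F : Type} [NormedAddCommGroup F] [NormedSpace ℝ F] [CompleteSpace F]

private lemma clamp_mem (t : ℝ) : max 0 (min 1 t) ∈ Icc (0:ℝ) 1 :=
  ⟨le_max_left _ _, max_le zero_le_one (min_le_left _ _)⟩

private lemma clamp_eq {t : ℝ} (ht : t ∈ Icc (0:ℝ) 1) : max 0 (min 1 t) = t := by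
  rw [max_eq_right (le_min zero_le_one ht.1), min_eq_right ht.2]

private lemma tube_lemma_aux {W : Set (P × ℝ)} (hW : IsOpen W)
    {Ω : Set P} (hΩ : IsOpen Ω)
    (hsub : ∀ p ∈ Ω, ∀ t ∈ Icc (0:ℝ) 1, ((p, t) : P × ℝ) ∈ W)
    {p₀ : P} (hp₀ : p₀ ∈ Ω) :
    ∃ ε > 0, ball p₀ ε ⊆ Ω ∧
      ∀ p ∈ closedBall p₀ ε, ∀ t ∈ Icc (0:ℝ) 1, ((p, t) : P × ℝ) ∈ W := by
  have hcpt : IsCompact ({p₀} ×ˢ Icc (0:ℝ) 1 : Set (P × ℝ)) :=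
    isCompact_singleton.prod isCompact_Icc
  have hsub' : ({p₀} ×ˢ Icc (0:ℝ) 1 : Set (P × ℝ)) ⊆ W := by
    rintro ⟨p, t⟩ ⟨hp, ht⟩
    rw [mem_singleton_iff] at hp
    subst hp
    exact hsub _ hp₀ t ht
  obtain ⟨δ, hδ, hth⟩ := hcpt.exists_thickening_subset_open hW hsub'
  obtain ⟨δ', hδ', hball⟩ := Metric.isOpen_iff.1 hΩ p₀ hp₀
  refine ⟨min (δ/2) (δ'/2), by positivity, ?_, ?_⟩
  · exact fun q hq => hball (lt_of_lt_of_le (mem_ball.1 hq)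
      (le_trans (min_le_right _ _) (by linarith)))
  · intro p hp t ht
    apply hth
    rw [Metric.mem_thickening_iff]
    refine ⟨(p₀, t), ⟨mem_singleton _, ht⟩, ?_⟩
    have : dist ((p, t) : P × ℝ) (p₀, t) = dist p p₀ := by
      rw [Prod.dist_eq]; simp [dist_nonneg]
    rw [this]
    calc dist p p₀ ≤ min (δ/2) (δ'/2) := mem_closedBall.1 hp
    _ ≤ δ/2 := min_le_left _ _
    _ < δ := by linarith

private theorem contDiffOn_param_integral [ProperSpace P] {W : Set (P × ℝ)} (hW : IsOpen W)
    {Ω : Set P} (hΩ : IsOpen Ω)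
    (hsub : ∀ p ∈ Ω, ∀ t ∈ Icc (0:ℝ) 1, ((p, t) : P × ℝ) ∈ W) (n : ℕ) :
    ∀ (F : Type) [NormedAddCommGroup F] [NormedSpace ℝ F] [CompleteSpace F]
      (K : P × ℝ → F), ContDiffOn ℝ n K W →
      ContDiffOn ℝ n (fun p => ∫ t in (0:ℝ)..(1:ℝ), K (p, t)) Ω := by
  induction n with
  | zero =>
    intro F _ _ _ K hK
    rw [Nat.cast_zero, contDiffOn_zero] at hK ⊢
    intro p₀ hp₀
    obtain ⟨ε, hε, hballΩ, htube⟩ := tube_lemma_aux hW hΩ hsub hp₀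
    set c : ℝ → ℝ := fun t => max 0 (min 1 t) with hc
    have hccont : Continuous c := continuous_const.max (continuous_const.min continuous_id)
    have key : Continuous fun q : (ball p₀ ε) => ∫ t in (0:ℝ)..(1:ℝ), K (q.1, c t) := by
      apply continuous_parametric_intervalIntegral_of_continuous' (μ := volume)
        (f := fun (q : ball p₀ ε) t => K (q.1, c t)) ?_ 0 1
      have hmap : Continuous fun z : (ball p₀ ε) × ℝ => ((z.1.1, c z.2) : P × ℝ) :=
        (continuous_subtype_val.comp continuous_fst).prodMk (hccont.comp continuous_snd)
      exact hK.comp_continuous hmap fun z =>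
        htube z.1.1 (ball_subset_closedBall z.1.2) (c z.2) (clamp_mem _)
    have key2 : (fun q : (ball p₀ ε) => ∫ t in (0:ℝ)..(1:ℝ), K (q.1, c t))
        = fun q : (ball p₀ ε) => ∫ t in (0:ℝ)..(1:ℝ), K (q.1, t) := by
      funext q
      apply intervalIntegral.integral_congr
      intro t ht
      rw [uIcc_of_le (zero_le_one' ℝ)] at ht
      simp only [hc, clamp_eq ht]
    rw [key2] at key
    have hco : ContinuousOn (fun p => ∫ t in (0:ℝ)..(1:ℝ), K (p, t)) (ball p₀ ε) :=
      continuousOn_iff_continuous_restrict.2 key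
    exact (hco.continuousAt (isOpen_ball.mem_nhds (mem_ball_self hε))).continuousWithinAt
  | succ n IH =>
    intro F _ _ _ K hK
    set K' : P × ℝ → (P →L[ℝ] F) :=
      fun z => (fderiv ℝ K z).comp (ContinuousLinearMap.inl ℝ P ℝ) with hK'def
    have hfd : ContDiffOn ℝ n (fderiv ℝ K) W :=
      hK.fderiv_of_isOpen hW (le_of_eq (by norm_cast))
    have hK's : ContDiffOn ℝ n K' W := by
      have hA : ContDiff ℝ n
          (fun L : (P × ℝ) →L[ℝ] F => L.comp (ContinuousLinearMap.inl ℝ P ℝ)) :=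
        ((ContinuousLinearMap.compL ℝ P (P × ℝ) F).flip
          (ContinuousLinearMap.inl ℝ P ℝ)).contDiff
      exact hA.comp_contDiffOn hfd
    have hIoc : uIoc (0:ℝ) 1 = Ioc 0 1 := uIoc_of_le (zero_le_one' ℝ)
    have hasF : ∀ p₀ ∈ Ω, HasFDerivAt (fun p => ∫ t in (0:ℝ)..(1:ℝ), K (p, t))
        (∫ t in (0:ℝ)..(1:ℝ), K' (p₀, t)) p₀ := by
      intro p₀ hp₀
      obtain ⟨ε, hε, hballΩ, htube⟩ := tube_lemma_aux hW hΩ hsub hp₀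
      have hcpt : IsCompact ((closedBall p₀ ε) ×ˢ Icc (0:ℝ) 1) :=
        (isCompact_closedBall _ _).prod isCompact_Icc
      have hsubW : (closedBall p₀ ε) ×ˢ Icc (0:ℝ) 1 ⊆ W := by
        rintro ⟨p, t⟩ ⟨hp, ht⟩
        exact htube p hp t ht
      obtain ⟨M, hM⟩ := hcpt.exists_bound_of_continuousOn (hK's.continuousOn.mono hsubW)
      have contK : ∀ p ∈ closedBall p₀ ε, ContinuousOn (fun t => K (p, t)) (Icc (0:ℝ) 1) := by
        intro p hp
        apply hK.continuousOn.comp (Continuous.continuousOn (by fun_prop))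
        intro t ht
        exact htube p hp t ht
      have contK' : ContinuousOn (fun t => K' (p₀, t)) (Icc (0:ℝ) 1) := by
        apply hK's.continuousOn.comp (Continuous.continuousOn (by fun_prop))
        intro t ht
        exact htube p₀ (mem_closedBall_self hε.le) t ht
      apply intervalIntegral.hasFDerivAt_integral_of_dominated_of_fderiv_le
        (F := fun x t => K (x, t)) (F' := fun x t => K' (x, t))
        (bound := fun _ => M) (ball_mem_nhds p₀ hε)
      · filter_upwards [Metric.closedBall_mem_nhds p₀ hε] with x hx
        rw [hIoc]
        exact ((contK x hx).mono Ioc_subset_Icc_self).aestronglyMeasurable measurableSet_Ioc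
      · apply ContinuousOn.intervalIntegrable
        rw [uIcc_of_le (zero_le_one' ℝ)]
        exact contK p₀ (mem_closedBall_self hε.le)
      · rw [hIoc]
        exact (contK'.mono Ioc_subset_Icc_self).aestronglyMeasurable measurableSet_Ioc
      · apply Eventually.of_forall
        intro t ht x hx
        exact hM _ ⟨ball_subset_closedBall hx, Ioc_subset_Icc_self (hIoc ▸ ht)⟩
      · exact intervalIntegrable_const
      · apply Eventually.of_forall
        intro t ht x hx
        have hmem : ((x, t) : P × ℝ) ∈ W :=
          htube x (ball_subset_closedBall hx) t (Ioc_subset_Icc_self (hIoc ▸ ht))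
        have hdiff : DifferentiableAt ℝ K (x, t) :=
          (hK.differentiableOn (by simp)).differentiableAt
            (hW.mem_nhds hmem)
        have h1 : HasFDerivAt (fun y : P => ((y, t) : P × ℝ))
            (ContinuousLinearMap.inl ℝ P ℝ) x :=
          (hasFDerivAt_id x).prodMk (hasFDerivAt_const t x)
        exact hdiff.hasFDerivAt.comp x h1
    have hIH := IH (P →L[ℝ] F) K' hK's
    have hcast : ((n + 1 : ℕ) : WithTop ℕ∞) = (n : WithTop ℕ∞) + 1 := by norm_cast
    rw [hcast, contDiffOn_succ_iff_fderiv_of_isOpen hΩ]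
    refine ⟨fun p hp => ((hasF p hp).differentiableAt).differentiableWithinAt, ?_, ?_⟩
    · intro h
      exact absurd h (by simp)
    · exact hIH.congr fun p hp => (hasF p hp).fderiv

variable {E : Type} [NormedAddCommGroup E] [NormedSpace ℝ E] [ProperSpace E]

private theorem hadamard_div {U : Set E} (hU : IsOpen U) {a : ℝ} (ha : 0 < a)
    {g : E × ℝ → F} (hg : ContDiffOn ℝ (⊤ : ℕ∞) g (U ×ˢ Ioo (-a) a))
    (hg0 : ∀ x ∈ U, g (x, 0) = 0) :
    ∃ g₁ : E × ℝ → F, ContDiffOn ℝ (⊤ : ℕ∞) g₁ (U ×ˢ Ioo (-a) a) ∧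
      ∀ p ∈ U ×ˢ Ioo (-a) a, g p = p.2 • g₁ p := by
  have hΩ : IsOpen (U ×ˢ Ioo (-a) a) := hU.prod isOpen_Ioo
  set Ω := U ×ˢ Ioo (-a) a with hΩdef
  -- membership facts
  have hmem : ∀ p ∈ Ω, ∀ t ∈ Icc (0:ℝ) 1, ((p.1, t * p.2) : E × ℝ) ∈ Ω := by
    rintro ⟨x, h⟩ hp t ht
    refine ⟨hp.1, ?_⟩
    have h1 : |h| < a := abs_lt.2 ⟨hp.2.1, hp.2.2⟩
    have h2 : |t * h| ≤ |h| := by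
      rw [abs_mul]
      exact mul_le_of_le_one_left (abs_nonneg _) (by rw [abs_of_nonneg ht.1]; exact ht.2)
    exact abs_lt.1 (lt_of_le_of_lt h2 h1)
  set W : Set ((E × ℝ) × ℝ) := {z | z.1 ∈ Ω ∧ ((z.1.1, z.2 * z.1.2) : E × ℝ) ∈ Ω} with hWdef
  have hψ : Continuous fun z : (E × ℝ) × ℝ => ((z.1.1, z.2 * z.1.2) : E × ℝ) := by fun_prop
  have hWopen : IsOpen W := (hΩ.preimage continuous_fst).inter (hΩ.preimage hψ)
  have hsub : ∀ p ∈ Ω, ∀ t ∈ Icc (0:ℝ) 1, ((p, t) : (E × ℝ) × ℝ) ∈ W :=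
    fun p hp t ht => ⟨hp, hmem p hp t ht⟩
  set K : (E × ℝ) × ℝ → F := fun z => (fderiv ℝ g (z.1.1, z.2 * z.1.2)) (0, 1) with hKdef
  have hKsmooth : ∀ N : ℕ, ContDiffOn ℝ N K W := by
    intro N
    have hfd : ContDiffOn ℝ N (fderiv ℝ g) Ω := hg.fderiv_of_isOpen hΩ (by exact_mod_cast le_top)
    have hψ' : ContDiff ℝ N fun z : (E × ℝ) × ℝ => ((z.1.1, z.2 * z.1.2) : E × ℝ) := by
      apply ContDiff.prodMk
      · exact contDiff_fst.fst
      · exact contDiff_snd.mul contDiff_fst.snd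
    have hcomp : ContDiffOn ℝ N (fun z : (E × ℝ) × ℝ => fderiv ℝ g (z.1.1, z.2 * z.1.2)) W :=
      hfd.comp hψ'.contDiffOn fun z hz => hz.2
    exact (ContinuousLinearMap.apply ℝ F ((0 : E), (1 : ℝ))).contDiff.comp_contDiffOn hcomp
  refine ⟨fun p => ∫ t in (0:ℝ)..(1:ℝ), K (p, t), ?_, ?_⟩
  · rw [contDiffOn_infty]
    intro N
    exact contDiffOn_param_integral hWopen hΩ hsub N F K (hKsmooth N)
  · intro p hp
    have hgc : ∀ t ∈ uIcc (0:ℝ) 1,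
        HasDerivAt (fun s => g (p.1, s * p.2)) (fderiv ℝ g (p.1, t * p.2) (0, p.2)) t := by
      intro t ht
      rw [uIcc_of_le (zero_le_one' ℝ)] at ht
      have hγ : HasDerivAt (fun s : ℝ => ((p.1, s * p.2) : E × ℝ)) ((0 : E), p.2) t :=
        (hasDerivAt_const t p.1).prodMk (hasDerivAt_mul_const p.2)
      have hdg : DifferentiableAt ℝ g (p.1, t * p.2) :=
        (hg.differentiableOn (by simp)).differentiableAt (hΩ.mem_nhds (hmem p hp t ht))
      exact hdg.hasFDerivAt.comp_hasDerivAt t hγ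
    have hcont : ContinuousOn (fun t => fderiv ℝ g (p.1, t * p.2) ((0 : E), p.2))
        (uIcc (0:ℝ) 1) := by
      rw [uIcc_of_le (zero_le_one' ℝ)]
      have h1 : ContinuousOn (fun t : ℝ => fderiv ℝ g (p.1, t * p.2)) (Icc (0:ℝ) 1) := by
        apply (hg.continuousOn_fderiv_of_isOpen hΩ (by exact_mod_cast le_top)).comp
          (Continuous.continuousOn (by fun_prop))
        intro t ht
        exact hmem p hp t ht
      exact h1.clm_apply continuousOn_const
    have hFTC := intervalIntegral.integral_eq_sub_of_hasDerivAt hgc hcont.intervalIntegrable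
    have hsmul : ∀ t : ℝ, fderiv ℝ g (p.1, t * p.2) ((0 : E), p.2) = p.2 • K (p, t) := by
      intro t
      have : ((0 : E), p.2) = p.2 • (((0 : E), (1 : ℝ)) : E × ℝ) := by
        simp [Prod.smul_mk]
      rw [this, ContinuousLinearMap.map_smul]
    calc g p = g (p.1, 1 * p.2) - g (p.1, 0 * p.2) := by
          rw [one_mul, zero_mul, hg0 p.1 hp.1, sub_zero]
        _ = ∫ t in (0:ℝ)..(1:ℝ), fderiv ℝ g (p.1, t * p.2) ((0 : E), p.2) := hFTC.symm
        _ = ∫ t in (0:ℝ)..(1:ℝ), p.2 • K (p, t) := by simp_rw [hsmul]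
        _ = p.2 • ∫ t in (0:ℝ)..(1:ℝ), K (p, t) := intervalIntegral.integral_smul _ _

private theorem hadamard_pow {U : Set E} (hU : IsOpen U) {a : ℝ} (ha : 0 < a) (r : ℕ) :
    ∀ g : E × ℝ → F, ContDiffOn ℝ (⊤ : ℕ∞) g (U ×ˢ Ioo (-a) a) →
    ∀ δ : E × ℝ → F, ContinuousOn δ (U ×ˢ Ioo (-a) a) →
    (∀ p ∈ U ×ˢ Ioo (-a) a, g p = p.2 ^ r • δ p) →
    ∃ g' : E × ℝ → F, ContDiffOn ℝ (⊤ : ℕ∞) g' (U ×ˢ Ioo (-a) a) ∧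
      ∀ p ∈ U ×ˢ Ioo (-a) a, g p = p.2 ^ r • g' p := by
  induction r with
  | zero => exact fun g hg δ hδ hfac => ⟨g, hg, fun p hp => by simp⟩
  | succ r IH =>
    intro g hg δ hδ hfac
    have hΩ : IsOpen (U ×ˢ Ioo (-a) a) := hU.prod isOpen_Ioo
    have h0mem : ∀ x ∈ U, ((x, 0) : E × ℝ) ∈ U ×ˢ Ioo (-a) a :=
      fun x hx => ⟨hx, by constructor <;> simp <;> linarith⟩
    have hg0 : ∀ x ∈ U, g (x, 0) = 0 := by
      intro x hx
      have := hfac (x, 0) (h0mem x hx)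
      simpa using this
    obtain ⟨g₁, hg₁, hfac₁⟩ := hadamard_div hU ha hg hg0
    have hu : ContinuousOn (fun q : E × ℝ => q.2 ^ r • δ q) (U ×ˢ Ioo (-a) a) :=
      ((continuous_snd.pow r).continuousOn).smul hδ
    have hagree' : ∀ q ∈ (U ×ˢ Ioo (-a) a) ∩ {q : E × ℝ | q.2 ≠ 0},
        g₁ q = q.2 ^ r • δ q := by
      rintro q ⟨hq, hq2⟩
      have e1 : q.2 • g₁ q = q.2 • (q.2 ^ r • δ q) := by
        rw [← hfac₁ q hq, hfac q hq, pow_succ, mul_comm, mul_smul]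
      exact smul_right_injective F hq2 e1
    have hagree : ∀ p ∈ U ×ˢ Ioo (-a) a, g₁ p = p.2 ^ r • δ p := by
      intro p hp
      rcases eq_or_ne p.2 0 with h2 | h2
      · have hclos : p ∈ closure {q : E × ℝ | q.2 ≠ 0} := by
          apply mem_closure_iff_seq_limit.2
          refine ⟨fun k => (p.1, p.2 + 1 / (k + 1)), fun k => ?_, ?_⟩
          · show p.2 + 1 / ((k : ℝ) + 1) ≠ 0
            rw [h2, zero_add]
            positivity
          · have h1 : Tendsto (fun k : ℕ => p.2 + 1 / ((k : ℝ) + 1)) atTop (𝓝 p.2) := by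
              have := tendsto_one_div_add_atTop_nhds_zero_nat (𝕜 := ℝ)
              simpa using tendsto_const_nhds.add this
            have h0 : Tendsto (fun _ : ℕ => p.1) atTop (𝓝 p.1) := tendsto_const_nhds
            have h2 := h0.prodMk h1
            rw [← nhds_prod_eq] at h2
            exact h2
        have hVmem : (𝓝[{q : E × ℝ | q.2 ≠ 0}] p).NeBot :=
          mem_closure_iff_nhdsWithin_neBot.1 hclos
        have hrw : 𝓝[(U ×ˢ Ioo (-a) a) ∩ {q : E × ℝ | q.2 ≠ 0}] p
            = 𝓝[{q : E × ℝ | q.2 ≠ 0}] p := by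
          exact nhdsWithin_inter_of_mem
            (mem_nhdsWithin_of_mem_nhds (hΩ.mem_nhds hp))
        haveI : (𝓝[(U ×ˢ Ioo (-a) a) ∩ {q : E × ℝ | q.2 ≠ 0}] p).NeBot := by
          rw [hrw]; exact hVmem
        have l1 : Tendsto g₁ (𝓝[(U ×ˢ Ioo (-a) a) ∩ {q : E × ℝ | q.2 ≠ 0}] p)
            (𝓝 (g₁ p)) :=
          (hg₁.continuousOn p hp).mono_left (nhdsWithin_mono p inter_subset_left)
        have l2 : Tendsto (fun q : E × ℝ => q.2 ^ r • δ q)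
            (𝓝[(U ×ˢ Ioo (-a) a) ∩ {q : E × ℝ | q.2 ≠ 0}] p)
            (𝓝 (p.2 ^ r • δ p)) :=
          (hu p hp).mono_left (nhdsWithin_mono p inter_subset_left)
        have l3 : Tendsto g₁ (𝓝[(U ×ˢ Ioo (-a) a) ∩ {q : E × ℝ | q.2 ≠ 0}] p)
            (𝓝 (p.2 ^ r • δ p)) :=
          l2.congr' (eventually_mem_nhdsWithin.mono fun q hq => (hagree' q hq).symm)
        exact tendsto_nhds_unique l1 l3
      · exact hagree' p ⟨hp, h2⟩
    obtain ⟨g', hg', hfacg⟩ := IH g₁ hg₁ δ hδ hagree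
    refine ⟨g', hg', fun p hp => ?_⟩
    rw [hfac₁ p hp, hfacg p hp, smul_smul, ← pow_succ']

end Aux

/-- If two smooth maps on `U × (−a,a)` have order-`h^r` contact, then their total Fréchet
derivatives have order-`h^{r−1}` contact. -/
theorem tangent_maps_contact_order_drops_one
    {n m : ℕ} (U : Set (EuclideanSpace ℝ (Fin n))) (hU : IsOpen U)
    (a : ℝ) (ha : 0 < a)
    (f₁ f₂ : EuclideanSpace ℝ (Fin n) × ℝ → EuclideanSpace ℝ (Fin m))
    (hf₁ : ContDiffOn ℝ (⊤ : ℕ∞) f₁ (U ×ˢ Ioo (-a) a))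
    (hf₂ : ContDiffOn ℝ (⊤ : ℕ∞) f₂ (U ×ˢ Ioo (-a) a))
    (r : ℕ) (hr : 1 ≤ r)
    (δf : EuclideanSpace ℝ (Fin n) × ℝ → EuclideanSpace ℝ (Fin m))
    (hδf : ContinuousOn δf (U ×ˢ Ioo (-a) a))
    (hfac : ∀ x ∈ U, ∀ h ∈ Ioo (-a) a, f₂ (x, h) - f₁ (x, h) = h ^ r • δf (x, h)) :
    ∃ Δ : EuclideanSpace ℝ (Fin n) × ℝ →
        (EuclideanSpace ℝ (Fin n) × ℝ →L[ℝ] EuclideanSpace ℝ (Fin m)),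
      ContinuousOn Δ (U ×ˢ Ioo (-a) a) ∧
      ∀ p ∈ U ×ˢ Ioo (-a) a,
        fderiv ℝ f₂ p - fderiv ℝ f₁ p = p.2 ^ (r - 1) • Δ p := by
  have hΩ : IsOpen (U ×ˢ Ioo (-a) a) := hU.prod isOpen_Ioo
  set g : EuclideanSpace ℝ (Fin n) × ℝ → EuclideanSpace ℝ (Fin m) :=
    fun p => f₂ p - f₁ p with hgdef
  have hg : ContDiffOn ℝ (⊤ : ℕ∞) g (U ×ˢ Ioo (-a) a) := hf₂.sub hf₁
  have hfac' : ∀ p ∈ U ×ˢ Ioo (-a) a, g p = p.2 ^ r • δf p := by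
    rintro ⟨x, h⟩ ⟨hx, hh⟩
    exact hfac x hx h hh
  obtain ⟨g', hg', hfacg⟩ := hadamard_pow hU ha r g hg δf hδf hfac'
  set S : EuclideanSpace ℝ (Fin n) × ℝ →L[ℝ] ℝ :=
    ContinuousLinearMap.snd ℝ (EuclideanSpace ℝ (Fin n)) ℝ with hS
  refine ⟨fun p => (r : ℝ) • S.smulRight (g' p) + p.2 • fderiv ℝ g' p, ?_, ?_⟩
  · apply ContinuousOn.add
    · apply ContinuousOn.fun_smul continuousOn_const
      exact ((ContinuousLinearMap.smulRightL ℝ (EuclideanSpace ℝ (Fin n) × ℝ)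
        (EuclideanSpace ℝ (Fin m)) S).continuous).comp_continuousOn hg'.continuousOn
    · exact continuous_snd.continuousOn.smul
        (hg'.continuousOn_fderiv_of_isOpen hΩ (by exact_mod_cast le_top))
  · intro p hp
    have hd1 : DifferentiableAt ℝ f₁ p :=
      (hf₁.differentiableOn (by simp)).differentiableAt (hΩ.mem_nhds hp)
    have hd2 : DifferentiableAt ℝ f₂ p :=
      (hf₂.differentiableOn (by simp)).differentiableAt (hΩ.mem_nhds hp)
    have hsubd : fderiv ℝ g p = fderiv ℝ f₂ p - fderiv ℝ f₁ p := fderiv_sub hd2 hd1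
    have heq : g =ᶠ[𝓝 p] fun q => q.2 ^ r • g' q :=
      Filter.eventuallyEq_of_mem (hΩ.mem_nhds hp) hfacg
    have hdg' : HasFDerivAt g' (fderiv ℝ g' p) p :=
      ((hg'.differentiableOn (by simp)).differentiableAt
        (hΩ.mem_nhds hp)).hasFDerivAt
    have hc : HasFDerivAt (fun q : EuclideanSpace ℝ (Fin n) × ℝ => q.2 ^ r)
        (((r : ℝ) * p.2 ^ (r - 1)) • S) p := by
      have h1 : HasDerivAt (fun y : ℝ => y ^ r) ((r : ℝ) * p.2 ^ (r - 1)) p.2 :=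
        hasDerivAt_pow r p.2
      have h2 : HasFDerivAt (fun q : EuclideanSpace ℝ (Fin n) × ℝ => q.2) S p :=
        S.hasFDerivAt
      exact h1.comp_hasFDerivAt p h2
    have hprod : HasFDerivAt (fun q : EuclideanSpace ℝ (Fin n) × ℝ => q.2 ^ r • g' q)
        ((p.2 ^ r) • fderiv ℝ g' p + (((r : ℝ) * p.2 ^ (r - 1)) • S).smulRight (g' p)) p :=
      hc.smul hdg'
    have hfg : fderiv ℝ g p
        = (p.2 ^ r) • fderiv ℝ g' p + (((r : ℝ) * p.2 ^ (r - 1)) • S).smulRight (g' p) := by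
      rw [heq.fderiv_eq]
      exact hprod.fderiv
    rw [← hsubd, hfg]
    have hpow : p.2 ^ r = p.2 ^ (r - 1) * p.2 := by
      conv_lhs => rw [← Nat.sub_add_cancel hr]
      rw [pow_succ]
    apply ContinuousLinearMap.ext
    intro w
    simp only [ContinuousLinearMap.add_apply, ContinuousLinearMap.smul_apply,
      ContinuousLinearMap.smulRight_apply, hpow, smul_smul, smul_eq_mul]
    match_scalars <;> ring
end
end

section
/- Let U ⊆ ℝ^n be open, a > 0, and let f₁, f₂ : U × (−a,a) → ℝ^m be smooth (C^∞). Let r ≥ 1 be a natural number, and suppose there is a continuous function δf : U × (−a,a) → ℝ^m with f₂(x,h) − f₁(x,h) = h^r · δf(x,h) for all (x,h). Then there exists a continuous map Δ₂ : U × (−a,a) → Hom(ℝ^n, ℝ^m) such that D_x f₂(x,h) − D_x f₁(x,h) = h^r · Δ₂(x,h) for all (x,h) ∈ U × (−a,a), where D_x f_j(x,h) denotes the partial Fréchet derivative of f_j at (x,h) with respect to the first (ℝ^n) variable. -/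
open Set Filter Nat Topology

variable {F : Type*} [NormedAddCommGroup F] [NormedSpace ℝ F]

lemma abs_le_of_mem_uIcc {t h : ℝ} (ht : t ∈ uIcc (0:ℝ) h) : |t| ≤ |h| := by
  rcases mem_uIcc.1 ht with ⟨h1, h2⟩ | ⟨h1, h2⟩ <;>
    rcases abs_cases h with ⟨e1, s1⟩ | ⟨e1, s1⟩ <;>
      rcases abs_cases t with ⟨e2, s2⟩ | ⟨e2, s2⟩ <;> linarith

private noncomputable def ρfun (ψ : ℕ → ℝ → F) (r k : ℕ) (t : ℝ) : F :=
  ψ k t - (t ^ (r - k) / ((r - k)! : ℝ)) • ψ r 0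

/-- Uniform Taylor estimate via iterated mean value inequality. -/
lemma taylor_est (ψ : ℕ → ℝ → F) (r : ℕ) (h ε : ℝ)
    (hd : ∀ k < r, ∀ t ∈ uIcc (0:ℝ) h, HasDerivAt (ψ k) (ψ (k+1) t) t)
    (h0 : ∀ k < r, ψ k 0 = 0)
    (hb : ∀ t ∈ uIcc (0:ℝ) h, ‖ψ r t - ψ r 0‖ ≤ ε) :
    ‖ψ 0 h - (h ^ r / (r ! : ℝ)) • ψ r 0‖ ≤ ε * |h| ^ r := by
  have hmem0 : (0:ℝ) ∈ uIcc (0:ℝ) h := left_mem_uIcc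
  have key : ∀ j, ∀ k, k + j = r → ∀ t ∈ uIcc (0:ℝ) h, ‖ρfun ψ r k t‖ ≤ ε * |h| ^ j := by
    intro j
    induction j with
    | zero =>
      intro k hk t ht
      obtain rfl : k = r := by omega
      simpa [ρfun] using hb t ht
    | succ j IH =>
      intro k hk t ht
      have hkr : k < r := by omega
      have hrk : r - k = (r - (k+1)) + 1 := by omega
      have hder : ∀ s ∈ uIcc (0:ℝ) h, HasDerivAt (ρfun ψ r k) (ρfun ψ r (k+1) s) s := by
        intro s hs
        have h1 : HasDerivAt (fun t : ℝ => (t ^ (r-k) / ((r-k)! : ℝ)) • ψ r 0)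
            ((s ^ (r-(k+1)) / ((r-(k+1))! : ℝ)) • ψ r 0) s := by
          have := ((hasDerivAt_pow (r-k) s).div_const ((r-k)! : ℝ)).smul_const (ψ r 0)
          convert this using 2
          rw [hrk, Nat.factorial_succ]
          push_cast
          have h2 : ((r - (k+1))! : ℝ) ≠ 0 := by positivity
          field_simp
        exact (hd k hkr s hs).sub h1
      have h00 : ρfun ψ r k 0 = 0 := by
        simp [ρfun, h0 k hkr, zero_pow (by omega : r - k ≠ 0)]
      have hmvt := Convex.norm_image_sub_le_of_norm_hasDerivWithin_le
        (f := ρfun ψ r k) (f' := ρfun ψ r (k+1)) (s := uIcc (0:ℝ) h) (C := ε * |h| ^ j)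
        (fun s hs => (hder s hs).hasDerivWithinAt)
        (fun s hs => IH (k+1) (by omega) s hs)
        (convex_uIcc _ _) hmem0 ht
      rw [h00, sub_zero] at hmvt
      calc ‖ρfun ψ r k t‖ ≤ ε * |h| ^ j * ‖t - 0‖ := hmvt
        _ ≤ ε * |h| ^ j * |h| := by
            have hε : 0 ≤ ε := le_trans (norm_nonneg (ψ r 0 - ψ r 0)) (hb 0 hmem0)
            have := abs_le_of_mem_uIcc ht
            simp only [sub_zero, Real.norm_eq_abs]
            gcongr
        _ = ε * |h| ^ (j+1) := by ring
  have := key r 0 (by omega) h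
    right_mem_uIcc
  simpa [ρfun] using this

lemma vanish (ψ : ℕ → ℝ → F) (r : ℕ) (a : ℝ) (ha : 0 < a)
    (hd : ∀ k, ∀ t ∈ Ioo (-a) a, HasDerivAt (ψ k) (ψ (k+1) t) t)
    (c : ℝ → F) (hc : ContinuousOn c (Ioo (-a) a))
    (hfac : ∀ t ∈ Ioo (-a) a, ψ 0 t = t ^ r • c t) :
    ∀ k < r, ψ k 0 = 0 := by
  intro k
  induction k using Nat.strong_induction_on with
  | _ k IH =>
  intro hk
  have h0mem : (0:ℝ) ∈ Ioo (-a) a := by constructor <;> linarith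
  have hψkc : ContinuousAt (ψ k) 0 := (hd k 0 h0mem).continuousAt
  have hcc : ContinuousAt c 0 := hc.continuousAt (Ioo_mem_nhds (by linarith) ha)
  set M : ℝ := ‖c 0‖ + 1 with hM
  have hMpos : 0 < M := by positivity
  have hkf : (0:ℝ) < (k ! : ℝ) := by positivity
  suffices hsuf : ∀ ε > 0, ‖ψ k 0‖ ≤ ε by
    have h1 : ‖ψ k 0‖ ≤ 0 :=
      le_of_forall_pos_le_add (by intro ε hε; simpa using hsuf ε hε)
    simpa using le_antisymm h1 (norm_nonneg _)
  intro ε hε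
  set ε₁ : ℝ := ε / (2 * (k ! : ℝ)) with hε₁def
  have hε₁ : 0 < ε₁ := by positivity
  -- δ₁ : continuity of ψ k
  obtain ⟨δ₁, hδ₁pos, hδ₁⟩ := Metric.continuousAt_iff.1 hψkc ε₁ hε₁
  -- δ₂ : bound on c
  obtain ⟨δ₂, hδ₂pos, hδ₂⟩ := Metric.continuousAt_iff.1 hcc 1 one_pos
  set h : ℝ := min a (min δ₁ (min δ₂ (min 1 (ε / (2 * (k ! : ℝ) * M))))) / 2 with hhdef
  have hhpos : 0 < h := by positivity
  have hha : h < a := by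
    have : h ≤ a / 2 := by
      rw [hhdef]; gcongr; exact min_le_left _ _
    linarith
  have hhδ₁ : h < δ₁ := by
    have : h ≤ δ₁ / 2 := by
      rw [hhdef]; gcongr; exact le_trans (min_le_right _ _) (min_le_left _ _)
    linarith
  have hhδ₂ : h < δ₂ := by
    have : h ≤ δ₂ / 2 := by
      rw [hhdef]; gcongr
      exact le_trans (min_le_right _ _) (le_trans (min_le_right _ _) (min_le_left _ _))
    linarith
  have hh1 : h ≤ 1 := by
    have : h ≤ 1 / 2 := by
      rw [hhdef]; gcongr
      exact le_trans (min_le_right _ _) (le_trans (min_le_right _ _)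
        (le_trans (min_le_right _ _) (min_le_left _ _)))
    linarith
  have hhε : h * M ≤ ε / (2 * (k ! : ℝ)) := by
    have h2 : h ≤ ε / (2 * (k ! : ℝ) * M) := by
      have : h ≤ ε / (2 * (k ! : ℝ) * M) / 2 := by
        rw [hhdef]; gcongr
        exact le_trans (min_le_right _ _) (le_trans (min_le_right _ _)
          (le_trans (min_le_right _ _) (min_le_right _ _)))
      have hd2 : 0 < ε / (2 * (k ! : ℝ) * M) := by positivity
      linarith
    calc h * M ≤ ε / (2 * (k ! : ℝ) * M) * M := by gcongr
      _ = ε / (2 * (k ! : ℝ)) := by field_simp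
  have hsub : ∀ t ∈ uIcc (0:ℝ) h, t ∈ Ioo (-a) a := by
    intro t ht
    have := abs_le_of_mem_uIcc ht
    rw [abs_of_pos hhpos] at this
    have := abs_le.1 this
    constructor <;> [linarith; linarith]
  -- apply taylor_est with order k
  have hest := taylor_est ψ k h ε₁
    (fun j hj t ht => hd j t (hsub t ht))
    (fun j hj => IH j hj (lt_trans hj hk))
    (by
      intro t ht
      have habs : |t| ≤ |h| := abs_le_of_mem_uIcc ht
      rw [abs_of_pos hhpos] at habs
      have : dist (ψ k t) (ψ k 0) < ε₁ := hδ₁ (by simpa [Real.dist_eq] using lt_of_le_of_lt habs hhδ₁)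
      rw [dist_eq_norm] at this
      exact this.le)
  -- bound ‖ψ 0 h‖
  have hmemh : h ∈ Ioo (-a) a := by constructor <;> linarith
  have hch : ‖c h‖ ≤ M := by
    have : dist (c h) (c 0) < 1 := hδ₂ (by simp [Real.dist_eq, abs_of_pos hhpos, hhδ₂])
    rw [dist_eq_norm] at this
    have := norm_sub_norm_le (c h) (c 0)
    rw [hM]; linarith
  have hpow : h ^ r ≤ h ^ (k+1) := pow_le_pow_of_le_one hhpos.le hh1 hk
  have hψ0h : ‖ψ 0 h‖ ≤ h ^ (k+1) * M := by
    rw [hfac h hmemh, norm_smul, Real.norm_eq_abs, abs_pow, abs_of_pos hhpos]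
    exact mul_le_mul hpow hch (norm_nonneg _) (pow_nonneg hhpos.le _)
  -- combine
  set T : F := (h ^ k / (k ! : ℝ)) • ψ k 0 with hT
  have h3 : ‖T‖ ≤ ‖ψ 0 h‖ + ε₁ * h ^ k := by
    have h4 := norm_sub_norm_le T (ψ 0 h)
    rw [norm_sub_rev] at h4
    rw [abs_of_pos hhpos] at hest
    linarith
  have h5 : ‖T‖ = h ^ k / (k ! : ℝ) * ‖ψ k 0‖ := by
    rw [hT, norm_smul, Real.norm_eq_abs, abs_of_pos (by positivity)]
  have hpk : (0:ℝ) < h ^ k := by positivity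
  have e0 : h ^ k / (k ! : ℝ) * ‖ψ k 0‖ ≤ h ^ k * (h * M) + ε₁ * h ^ k := by
    rw [← h5]
    calc ‖T‖ ≤ ‖ψ 0 h‖ + ε₁ * h ^ k := h3
      _ ≤ h ^ (k+1) * M + ε₁ * h ^ k := by gcongr
      _ = h ^ k * (h * M) + ε₁ * h ^ k := by ring
  have e2 : h ^ k * ‖ψ k 0‖ ≤ h ^ k * ((k ! : ℝ) * (h * M + ε₁)) := by
    rw [div_mul_eq_mul_div, div_le_iff₀ hkf] at e0
    calc h ^ k * ‖ψ k 0‖ ≤ (h ^ k * (h * M) + ε₁ * h ^ k) * (k ! : ℝ) := e0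
      _ = h ^ k * ((k ! : ℝ) * (h * M + ε₁)) := by ring
  have h7 : ‖ψ k 0‖ ≤ (k ! : ℝ) * (h * M + ε₁) := le_of_mul_le_mul_left e2 hpk
  calc ‖ψ k 0‖ ≤ (k ! : ℝ) * (h * M + ε₁) := h7
    _ ≤ (k ! : ℝ) * (ε / (2 * (k ! : ℝ)) + ε / (2 * (k ! : ℝ))) := by
        gcongr
    _ = ε := by field_simp; ring

section Master

variable {E : Type*} [NormedAddCommGroup E] [NormedSpace ℝ E]
variable {F' : Type*} [NormedAddCommGroup F'] [NormedSpace ℝ F']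

noncomputable def Gder (g : E × ℝ → F') : ℕ → E × ℝ → F'
  | 0 => g
  | k+1 => fun q => fderiv ℝ (Gder g k) q ((0 : E), (1 : ℝ))

lemma hone' : (1 : WithTop ℕ∞) ≤ ((⊤ : ℕ∞) : WithTop ℕ∞) := by
  exact_mod_cast le_top

lemma hinf' : ((⊤ : ℕ∞) : WithTop ℕ∞) + 1 ≤ ((⊤ : ℕ∞) : WithTop ℕ∞) := by
  exact le_of_eq (by rfl)

set_option maxHeartbeats 1000000 in
lemma master (U : Set E) (hU : IsOpen U) (a : ℝ) (ha : 0 < a)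
    (g : E × ℝ → F') (hg : ContDiffOn ℝ (⊤ : ℕ∞) g (U ×ˢ Ioo (-a) a))
    (r : ℕ) (hr : 1 ≤ r)
    (δf : E × ℝ → F') (hδf : ContinuousOn δf (U ×ˢ Ioo (-a) a))
    (hfac : ∀ x ∈ U, ∀ h ∈ Ioo (-a) a, g (x, h) = h ^ r • δf (x, h)) :
    ∃ Δ : E × ℝ → (E →L[ℝ] F'),
      ContinuousOn Δ (U ×ˢ Ioo (-a) a) ∧
      ∀ p ∈ U ×ˢ Ioo (-a) a,
        (fderiv ℝ g p).comp (ContinuousLinearMap.inl ℝ E ℝ) = p.2 ^ r • Δ p := by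
  classical
  set V := U ×ˢ Ioo (-a) a with hVdef
  have hV : IsOpen V := hU.prod isOpen_Ioo
  -- the iterated partial derivatives of `g` in the second variable
  set G : ℕ → E × ℝ → F' := Gder g with hGdef
  have hGsucc : ∀ k, G (k+1) = fun q => fderiv ℝ (G k) q ((0 : E), (1 : ℝ)) := fun _ => rfl
  have hGsm : ∀ k, ContDiffOn ℝ (⊤ : ℕ∞) (G k) V := by
    intro k; induction k with
    | zero => exact hg
    | succ k IH =>
      rw [hGsucc]
      exact (IH.fderiv_of_isOpen hV hinf').clm_apply contDiffOn_const
  have hGd : ∀ k, ∀ p ∈ V, HasFDerivAt (G k) (fderiv ℝ (G k) p) p := fun k p hp =>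
    (((hGsm k).differentiableOn (zero_lt_one.trans_le hone').ne').differentiableAt (hV.mem_nhds hp)).hasFDerivAt
  have hA : ∀ k, ContDiffOn ℝ (⊤ : ℕ∞) (fderiv ℝ (G k)) V := fun k =>
    (hGsm k).fderiv_of_isOpen hV hinf'
  have hAd : ∀ k, ∀ p ∈ V, HasFDerivAt (fderiv ℝ (G k)) (fderiv ℝ (fderiv ℝ (G k)) p) p :=
    fun k p hp => (((hA k).differentiableOn (zero_lt_one.trans_le hone').ne').differentiableAt (hV.mem_nhds hp)).hasFDerivAt
  set inl := ContinuousLinearMap.inl ℝ E ℝ with hinldef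
  set Λ : (E × ℝ →L[ℝ] F') →L[ℝ] (E →L[ℝ] F') :=
    (ContinuousLinearMap.compL ℝ E (E × ℝ) F').flip inl with hΛdef
  have hΛ : ∀ A : E × ℝ →L[ℝ] F', Λ A = A.comp inl := fun A => rfl
  set Ψ : ℕ → E × ℝ → (E →L[ℝ] F') := fun k p => Λ (fderiv ℝ (G k) p) with hΨdef
  clear_value Ψ
  have hΨc : ∀ k, ContinuousOn (Ψ k) V := by
    intro k
    simp only [hΨdef]
    exact Λ.continuous.comp_continuousOn ((hA k).continuousOn)
  -- derivative of G in the h-direction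
  have hGt : ∀ k (x : E) (t : ℝ), (x, t) ∈ V →
      HasDerivAt (fun s => G k (x, s)) (G (k+1) (x, t)) t := by
    intro k x t hp
    exact (hGd k _ hp).comp_hasDerivAt t ((hasDerivAt_const t x).prodMk (hasDerivAt_id t))
  -- vanishing of G at h = 0
  have hGzero : ∀ x ∈ U, ∀ k < r, G k (x, 0) = 0 := by
    intro x hx
    refine vanish (fun k t => G k (x, t)) r a ha
      (fun k t ht => hGt k x t ⟨hx, ht⟩)
      (fun t => δf (x, t))
      (hδf.comp ((continuous_const.prodMk continuous_id).continuousOn)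
        (fun t ht => ⟨hx, ht⟩))
      (fun t ht => hfac x hx t ht)
  have h0I : (0 : ℝ) ∈ Ioo (-a) a := ⟨by linarith, ha⟩
  have hinl2 : (ContinuousLinearMap.id ℝ E).prod (0 : E →L[ℝ] ℝ) = inl := by
    ext v <;> simp [hinldef]
  -- vanishing of Ψ at h = 0
  have hΨzero : ∀ x ∈ U, ∀ k < r, Ψ k (x, 0) = 0 := by
    intro x hx k hk
    have hp : ((x, (0:ℝ)) : E × ℝ) ∈ V := ⟨hx, h0I⟩
    have hincl : HasFDerivAt (fun x' : E => ((x', (0:ℝ)) : E × ℝ)) inl x := by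
      rw [← hinl2]
      exact (hasFDerivAt_id x).prodMk (hasFDerivAt_const (0:ℝ) x)
    have h1 : HasFDerivAt (fun x' : E => G k (x', 0))
        ((fderiv ℝ (G k) (x, 0)).comp inl) x :=
      HasFDerivAt.comp (𝕜 := ℝ) x (hGd k _ hp) hincl
    have h2 : HasFDerivAt (fun x' : E => G k (x', 0)) (0 : E →L[ℝ] F') x := by
      apply (hasFDerivAt_const (𝕜 := ℝ) (0 : F') x).congr_of_eventuallyEq
      filter_upwards [hU.mem_nhds hx] with y hy
      exact hGzero y hy k hk
    rw [hΨdef]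
    simp only [hΛ]
    exact h1.unique h2
  -- derivative of Ψ in the h-direction (Schwarz symmetry)
  have hΨt : ∀ k (x : E) (t : ℝ), (x, t) ∈ V →
      HasDerivAt (fun s => Ψ k (x, s)) (Ψ (k+1) (x, t)) t := by
    intro k x t hp
    set p : E × ℝ := (x, t) with hpdef
    set B := fderiv ℝ (fderiv ℝ (G k)) p with hBdef
    have hB : HasFDerivAt (fderiv ℝ (G k)) B p := hAd k p hp
    have h1 : HasDerivAt (fun s => fderiv ℝ (G k) (x, s)) (B ((0:E), (1:ℝ))) t :=
      hB.comp_hasDerivAt t ((hasDerivAt_const t x).prodMk (hasDerivAt_id t))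
    have h2 : HasDerivAt (fun s => Λ (fderiv ℝ (G k) (x, s))) (Λ (B ((0:E), (1:ℝ)))) t :=
      Λ.hasFDerivAt.comp_hasDerivAt t h1
    have h3 : HasFDerivAt (G (k+1))
        (((fderiv ℝ (G k) p).comp (0 : E × ℝ →L[ℝ] E × ℝ)) + B.flip ((0:E), (1:ℝ))) p := by
      rw [hGsucc]
      exact hB.clm_apply (hasFDerivAt_const _ _)
    have hsym := second_derivative_symmetric_of_eventually (𝕜 := ℝ)
      (f := G k) (f' := fderiv ℝ (G k)) (f'' := B)
      (Filter.eventually_of_mem (hV.mem_nhds hp) (fun q hq => hGd k q hq)) hB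
    have h5 : Λ (B ((0:E), (1:ℝ))) = Ψ (k+1) p := by
      ext v
      rw [hΨdef]
      simp only [hΛ, ContinuousLinearMap.comp_apply]
      rw [h3.fderiv]
      simp only [ContinuousLinearMap.add_apply, ContinuousLinearMap.comp_apply,
        ContinuousLinearMap.zero_apply, map_zero, zero_add,
        ContinuousLinearMap.flip_apply, hinldef, ContinuousLinearMap.inl_apply]
      exact hsym ((0:E), (1:ℝ)) ((v, (0:ℝ)))
    rw [show (fun s => Ψ k (x, s)) = (fun s => Λ (fderiv ℝ (G k) (x, s))) by
      simp only [hΨdef], ← h5]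
    exact h2
  have hfact : (0:ℝ) < (r ! : ℝ) := by positivity
  have hf1 : (1:ℝ) ≤ (r ! : ℝ) := by exact_mod_cast (Nat.factorial_pos r)
  have hinv1 : (r ! : ℝ)⁻¹ ≤ 1 := by
    rw [← one_div]
    exact div_le_one_of_le₀ hf1 (by positivity)
  -- the quotient map
  set Δ : E × ℝ → (E →L[ℝ] F') := fun p =>
    if p.2 = 0 then ((r ! : ℝ))⁻¹ • Ψ r p else (p.2 ^ r)⁻¹ • Ψ 0 p with hΔdef
  -- the equation
  have heq : ∀ p ∈ V, (fderiv ℝ g p).comp inl = p.2 ^ r • Δ p := by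
    intro p hp
    have hΨ0g : (fderiv ℝ g p).comp inl = Ψ 0 p := by
      simp only [hΨdef]; exact (hΛ _).symm
    by_cases hz : p.2 = 0
    · rw [hΨ0g, hz, zero_pow (by omega : r ≠ 0), zero_smul]
      obtain ⟨x, t⟩ := p
      simp only at hz
      subst hz
      exact hΨzero x hp.1 0 hr
    · have hΔq : Δ p = (p.2 ^ r)⁻¹ • Ψ 0 p := by simp [hΔdef, hz]
      rw [hΨ0g, hΔq, smul_smul, mul_inv_cancel₀ (pow_ne_zero r hz), one_smul]
  -- continuity
  have hCA : ∀ p ∈ V, ContinuousAt Δ p := by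
    intro p hp
    by_cases hz : p.2 = 0
    · -- at points with second coordinate zero
      obtain ⟨x₀, t₀⟩ := p
      simp only at hz
      subst hz
      have hx₀ : x₀ ∈ U := hp.1
      have hΔp : Δ (x₀, 0) = (r ! : ℝ)⁻¹ • Ψ r (x₀, 0) := by
        simp [hΔdef]
      show Filter.Tendsto Δ (𝓝 ((x₀, 0) : E × ℝ)) (𝓝 (Δ (x₀, 0)))
      rw [hΔp, Metric.tendsto_nhds]
      intro ε hε
      set ε₁ := ε / 4 with hε₁def
      have hε₁ : 0 < ε₁ := by positivity
      have hS : Ψ r ⁻¹' (Metric.ball (Ψ r (x₀, 0)) ε₁) ∈ 𝓝 ((x₀, 0) : E × ℝ) :=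
        (hΨc r).continuousAt (hV.mem_nhds hp) (Metric.ball_mem_nhds _ hε₁)
      obtain ⟨W, hW, I', hI', hWI⟩ :=
        mem_nhds_prod_iff.1 (Filter.inter_mem hS (hV.mem_nhds hp))
      obtain ⟨η, hηpos, hball⟩ := Metric.mem_nhds_iff.1 hI'
      filter_upwards [prod_mem_nhds hW (Metric.ball_mem_nhds (0:ℝ) hηpos)] with q hq
      obtain ⟨x, t⟩ := q
      have hxW : x ∈ W := hq.1
      have htb : |t| < η := by simpa [Real.dist_eq] using hq.2
      have hkey : ∀ s : ℝ, |s| ≤ |t| →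
          dist (Ψ r (x, s)) (Ψ r (x₀, 0)) < ε₁ ∧ ((x, s) : E × ℝ) ∈ V := by
        intro s hs
        have hmem : ((x, s) : E × ℝ) ∈ W ×ˢ I' :=
          ⟨hxW, hball (by simpa [Real.dist_eq] using lt_of_le_of_lt hs htb)⟩
        have h2 := hWI hmem
        exact ⟨h2.1, h2.2⟩
      have hxU : x ∈ U := ((hkey 0 (by simp)).2).1
      by_cases htz : t = 0
      · subst htz
        have hq0 : Δ (x, 0) = (r ! : ℝ)⁻¹ • Ψ r (x, 0) := by simp [hΔdef]
        rw [hq0, dist_eq_norm, ← smul_sub]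
        have h6 := (hkey 0 (by simp)).1
        rw [dist_eq_norm] at h6
        calc ‖(r ! : ℝ)⁻¹ • (Ψ r (x, 0) - Ψ r (x₀, 0))‖
            = (r ! : ℝ)⁻¹ * ‖Ψ r (x, 0) - Ψ r (x₀, 0)‖ := by
              rw [norm_smul ((r ! : ℝ))⁻¹ (Ψ r (x, 0) - Ψ r (x₀, 0)), Real.norm_eq_abs,
                abs_of_pos (by positivity)]
          _ ≤ ‖Ψ r (x, 0) - Ψ r (x₀, 0)‖ :=
              mul_le_of_le_one_left (norm_nonneg _) hinv1
          _ < ε₁ := h6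
          _ < ε := by rw [hε₁def]; linarith
      · -- t ≠ 0
        have hTE := taylor_est (fun k s => Ψ k (x, s)) r t (2 * ε₁)
          (fun k _ s hs => hΨt k x s (hkey s (abs_le_of_mem_uIcc hs)).2)
          (fun k hk => hΨzero x hxU k hk)
          (by
            intro s hs
            have h1 := (hkey s (abs_le_of_mem_uIcc hs)).1
            have h2 := (hkey 0 (by simp)).1
            have h3 := dist_triangle (Ψ r (x, s)) (Ψ r (x₀, 0)) (Ψ r (x, 0))
            rw [dist_comm (Ψ r (x₀,0))] at h3
            rw [show ‖Ψ r (x, s) - Ψ r (x, 0)‖ = dist (Ψ r (x, s)) (Ψ r (x, 0)) from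
              (dist_eq_norm _ _).symm]
            linarith)
        have hqt : Δ (x, t) = (t ^ r)⁻¹ • Ψ 0 (x, t) := by simp [hΔdef, htz]
        rw [hqt, dist_eq_norm]
        have htr : t ^ r ≠ 0 := pow_ne_zero r htz
        have htpos : (0:ℝ) < |t| ^ r := by positivity
        have hsplit : (t ^ r)⁻¹ • Ψ 0 (x, t) - (r ! : ℝ)⁻¹ • Ψ r (x₀, 0)
            = (t ^ r)⁻¹ • (Ψ 0 (x, t) - (t ^ r / (r ! : ℝ)) • Ψ r (x₀, 0)) := by
          rw [smul_sub, smul_smul]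
          congr 2
          field_simp
        rw [hsplit, norm_smul ((t ^ r)⁻¹) (Ψ 0 (x, t) - (t ^ r / (r ! : ℝ)) • Ψ r (x₀, 0)),
          Real.norm_eq_abs, abs_inv, abs_pow]
        have h2 := (hkey 0 (by simp)).1
        rw [dist_eq_norm] at h2
        have htri : ‖Ψ 0 (x, t) - (t ^ r / (r ! : ℝ)) • Ψ r (x₀, 0)‖
            ≤ 2 * ε₁ * |t| ^ r + |t| ^ r * ε₁ := by
          have e1 : Ψ 0 (x, t) - (t ^ r / (r ! : ℝ)) • Ψ r (x₀, 0)
              = (Ψ 0 (x, t) - (t ^ r / (r ! : ℝ)) • Ψ r (x, 0))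
                + (t ^ r / (r ! : ℝ)) • (Ψ r (x, 0) - Ψ r (x₀, 0)) := by
            rw [smul_sub]; abel
          rw [e1]
          refine le_trans (norm_add_le _ _) ?_
          have e2 : ‖(t ^ r / (r ! : ℝ)) • (Ψ r (x, 0) - Ψ r (x₀, 0))‖ ≤ |t| ^ r * ε₁ := by
            rw [norm_smul (t ^ r / (r ! : ℝ)) (Ψ r (x, 0) - Ψ r (x₀, 0)), Real.norm_eq_abs,
              abs_div, abs_pow, abs_of_pos hfact]
            calc |t| ^ r / (r ! : ℝ) * ‖Ψ r (x, 0) - Ψ r (x₀, 0)‖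
                ≤ |t| ^ r / (r ! : ℝ) * ε₁ := by gcongr
              _ ≤ |t| ^ r * ε₁ := by
                  have hds : |t| ^ r / (r ! : ℝ) ≤ |t| ^ r :=
                    div_le_self (by positivity) hf1
                  exact mul_le_mul_of_nonneg_right hds hε₁.le
          linarith [hTE]
        calc (|t| ^ r)⁻¹ * ‖Ψ 0 (x, t) - (t ^ r / (r ! : ℝ)) • Ψ r (x₀, 0)‖
            ≤ (|t| ^ r)⁻¹ * (3 * ε₁ * |t| ^ r) := by
              gcongr
              linarith
          _ = 3 * ε₁ := by field_simp
          _ < ε := by rw [hε₁def]; linarith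
    · -- at points with nonzero second coordinate
      have hc1 : ContinuousAt (fun q : E × ℝ => (q.2 ^ r)⁻¹ • Ψ 0 q) p :=
        ((continuous_snd.continuousAt.pow r).inv₀ (pow_ne_zero r hz)).smul
          ((hΨc 0).continuousAt (hV.mem_nhds hp))
      apply hc1.congr
      filter_upwards [(isOpen_compl_singleton.preimage continuous_snd).mem_nhds hz] with q hq
      have hq' : ¬ q.2 = 0 := by simpa using hq
      simp [hΔdef, hq']
  exact ⟨Δ, fun p hp => (hCA p hp).continuousWithinAt, heq⟩

end Master

open Set

noncomputable section

/-- If two smooth maps on `U × (−a,a)` have order-`h^r` contact, then their partial Fréchet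
derivatives in the first (`ℝ^n`) variable have order-`h^r` contact (no drop). -/
theorem partial_tangent_maps_keep_contact_order
    {n m : ℕ} (U : Set (EuclideanSpace ℝ (Fin n))) (hU : IsOpen U)
    (a : ℝ) (ha : 0 < a)
    (f₁ f₂ : EuclideanSpace ℝ (Fin n) × ℝ → EuclideanSpace ℝ (Fin m))
    (hf₁ : ContDiffOn ℝ (⊤ : ℕ∞) f₁ (U ×ˢ Ioo (-a) a))
    (hf₂ : ContDiffOn ℝ (⊤ : ℕ∞) f₂ (U ×ˢ Ioo (-a) a))
    (r : ℕ) (hr : 1 ≤ r)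
    (δf : EuclideanSpace ℝ (Fin n) × ℝ → EuclideanSpace ℝ (Fin m))
    (hδf : ContinuousOn δf (U ×ˢ Ioo (-a) a))
    (hfac : ∀ x ∈ U, ∀ h ∈ Ioo (-a) a, f₂ (x, h) - f₁ (x, h) = h ^ r • δf (x, h)) :
    ∃ Δ₂ : EuclideanSpace ℝ (Fin n) × ℝ →
        (EuclideanSpace ℝ (Fin n) →L[ℝ] EuclideanSpace ℝ (Fin m)),
      ContinuousOn Δ₂ (U ×ˢ Ioo (-a) a) ∧
      ∀ p ∈ U ×ˢ Ioo (-a) a,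
        fderiv ℝ (fun x => f₂ (x, p.2)) p.1 - fderiv ℝ (fun x => f₁ (x, p.2)) p.1 =
          p.2 ^ r • Δ₂ p := by
  obtain ⟨Δ, hΔc, hΔeq⟩ := master U hU a ha (fun p => f₂ p - f₁ p) (hf₂.sub hf₁) r hr δf hδf
    (fun x hx h hh => hfac x hx h hh)
  refine ⟨Δ, hΔc, ?_⟩
  intro p hp
  obtain ⟨x, h⟩ := p
  obtain ⟨hx, hh⟩ := hp
  rw [← hΔeq (x, h) ⟨hx, hh⟩]
  have hV : IsOpen (U ×ˢ Ioo (-a) a) := hU.prod isOpen_Ioo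
  have hmem : (U ×ˢ Ioo (-a) a) ∈ 𝓝 ((x, h) : EuclideanSpace ℝ (Fin n) × ℝ) :=
    hV.mem_nhds ⟨hx, hh⟩
  have hd1 : DifferentiableAt ℝ f₁ (x, h) := (hf₁.differentiableOn (zero_lt_one.trans_le hone').ne').differentiableAt hmem
  have hd2 : DifferentiableAt ℝ f₂ (x, h) := (hf₂.differentiableOn (zero_lt_one.trans_le hone').ne').differentiableAt hmem
  set inl := ContinuousLinearMap.inl ℝ (EuclideanSpace ℝ (Fin n)) ℝ with hinldef
  have hincl : HasFDerivAt (fun x' : EuclideanSpace ℝ (Fin n) =>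
      ((x', h) : EuclideanSpace ℝ (Fin n) × ℝ)) inl x := by
    have h1 := (hasFDerivAt_id (𝕜 := ℝ) x).prodMk (hasFDerivAt_const (𝕜 := ℝ) h x)
    have h2 : (ContinuousLinearMap.id ℝ (EuclideanSpace ℝ (Fin n))).prod
        (0 : EuclideanSpace ℝ (Fin n) →L[ℝ] ℝ) = inl := by
      ext v <;> simp [hinldef]
    rwa [h2] at h1
  have e1 : HasFDerivAt (fun x' => f₁ (x', h)) ((fderiv ℝ f₁ (x, h)).comp inl) x :=
    HasFDerivAt.comp (𝕜 := ℝ) x hd1.hasFDerivAt hincl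
  have e2 : HasFDerivAt (fun x' => f₂ (x', h)) ((fderiv ℝ f₂ (x, h)).comp inl) x :=
    HasFDerivAt.comp (𝕜 := ℝ) x hd2.hasFDerivAt hincl
  have e3 : fderiv ℝ (fun p => f₂ p - f₁ p) (x, h) = fderiv ℝ f₂ (x, h) - fderiv ℝ f₁ (x, h) :=
    (hd2.hasFDerivAt.sub hd1.hasFDerivAt).fderiv
  show fderiv ℝ (fun x' => f₂ (x', h)) x - fderiv ℝ (fun x' => f₁ (x', h)) x = _
  rw [e1.fderiv, e2.fderiv, e3]
  ext v
  simp

end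
end

section
/- Let M be a topological space that is Hausdorff and paracompact, let ĥ : M → ℝ be continuous, let E be a topological real vector bundle over M, let r ≥ 0 be a natural number, and let f₁, f₂ be continuous sections of E. Then the following are equivalent: (1) for every m₀ ∈ M with ĥ(m₀) = 0 there exist an open neighborhood U of m₀ in M and a continuous local section δf_U of E over U with f₂(m) − f₁(m) = ĥ(m)^r · δf_U(m) for all m ∈ U; (2) there exists a global continuous section δf of E over M with f₂(m) − f₁(m) = ĥ(m)^r · δf(m) for all m ∈ M. -/
open Set Bundle

noncomputable section

section Aux

variable {M : Type*} [TopologicalSpace M]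
    {F : Type*} [NormedAddCommGroup F] [NormedSpace ℝ F]
    {E : M → Type*} [∀ x, AddCommGroup (E x)] [∀ x, Module ℝ (E x)]
    [TopologicalSpace (Bundle.TotalSpace F E)] [∀ x, TopologicalSpace (E x)]
    [FiberBundle F E] [VectorBundle ℝ F E]

/-- Read a section through a trivialization: continuity of the `F`-component. -/
lemma aux_snd_continuousOn {s : ∀ x, E x} {U : Set M}
    (hs : ContinuousOn (fun x => (⟨x, s x⟩ : Bundle.TotalSpace F E)) U)
    (e : Trivialization F (π F E)) :
    ContinuousOn (fun x => (e ⟨x, s x⟩).2) (U ∩ e.baseSet) := by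
  apply continuous_snd.comp_continuousOn
  exact e.continuousOn.comp (hs.mono inter_subset_left)
    fun y hy => e.mem_source.mpr hy.2

/-- A pointwise linear combination `u • f₁ + v • f₂` of continuous sections with
coefficients continuous on `U` is continuous on `U`. -/
lemma aux_comb_continuousOn {f₁ f₂ : ∀ x, E x}
    (hf₁ : Continuous fun x => (⟨x, f₁ x⟩ : Bundle.TotalSpace F E))
    (hf₂ : Continuous fun x => (⟨x, f₂ x⟩ : Bundle.TotalSpace F E))
    {u v : M → ℝ} {U : Set M} (hu : ContinuousOn u U) (hv : ContinuousOn v U) :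
    ContinuousOn (fun x => (⟨x, u x • f₁ x + v x • f₂ x⟩ : Bundle.TotalSpace F E)) U := by
  intro x₀ hx₀
  rw [FiberBundle.continuousWithinAt_totalSpace]
  refine ⟨continuousWithinAt_id, ?_⟩
  set e := trivializationAt F E x₀ with he
  have hbase : x₀ ∈ e.baseSet := FiberBundle.mem_baseSet_trivializationAt' x₀
  have hcong : ∀ y ∈ e.baseSet,
      (e ⟨y, u y • f₁ y + v y • f₂ y⟩).2
        = u y • (e ⟨y, f₁ y⟩).2 + v y • (e ⟨y, f₂ y⟩).2 := by
    intro y hy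
    have hl := e.linear ℝ hy
    rw [hl.map_add, hl.map_smul, hl.map_smul]
  have hf₁' : ContinuousWithinAt (fun y => (e ⟨y, f₁ y⟩).2) U x₀ := by
    refine (ContinuousAt.snd ?_).continuousWithinAt
    exact (e.continuousOn.continuousAt
      (e.open_source.mem_nhds (e.mem_source.mpr hbase))).comp hf₁.continuousAt
  have hf₂' : ContinuousWithinAt (fun y => (e ⟨y, f₂ y⟩).2) U x₀ := by
    refine (ContinuousAt.snd ?_).continuousWithinAt
    exact (e.continuousOn.continuousAt
      (e.open_source.mem_nhds (e.mem_source.mpr hbase))).comp hf₂.continuousAt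
  have hmain : ContinuousWithinAt
      (fun y => u y • (e ⟨y, f₁ y⟩).2 + v y • (e ⟨y, f₂ y⟩).2) U x₀ :=
    ((hu x₀ hx₀).smul hf₁').add ((hv x₀ hx₀).smul hf₂')
  refine hmain.congr_of_eventuallyEq ?_ (hcong x₀ hbase)
  filter_upwards [nhdsWithin_le_nhds (e.open_baseSet.mem_nhds hbase)] with y hy
  exact hcong y hy

/-- Gluing local continuous sections with a partition of unity gives a continuous section. -/
lemma aux_glue_continuous {ι : Type*} {U : ι → Set M} (hUo : ∀ i, IsOpen (U i))
    {s : ι → ∀ x, E x}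
    (hs : ∀ i, ContinuousOn (fun x => (⟨x, s i x⟩ : Bundle.TotalSpace F E)) (U i))
    (ρ : PartitionOfUnity ι M univ) (hρ : ρ.IsSubordinate U) :
    Continuous (fun x => (⟨x, ∑ᶠ i, ρ i x • s i x⟩ : Bundle.TotalSpace F E)) := by
  rw [continuous_iff_continuousAt]
  intro x₀
  rw [FiberBundle.continuousAt_totalSpace]
  refine ⟨continuousAt_id, ?_⟩
  set e := trivializationAt F E x₀ with he
  have hbase : x₀ ∈ e.baseSet := FiberBundle.mem_baseSet_trivializationAt' x₀
  set T := ρ.fintsupport x₀ with hT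
  -- the glued section reads, through `e`, as a finite sum near `x₀`
  have key : ∀ y ∈ e.baseSet, ρ.finsupport y ⊆ T →
      (e ⟨y, ∑ᶠ i, ρ i y • s i y⟩).2 = ∑ i ∈ T, ρ i y • (e ⟨y, s i y⟩).2 := by
    intro y hy hfs
    have hsum : ∑ᶠ i, ρ i y • s i y = ∑ i ∈ T, ρ i y • s i y := by
      refine finsum_eq_sum_of_support_subset _ ?_
      intro i hi
      have : ρ i y ≠ 0 := by
        intro h0
        simp [h0] at hi
      exact hfs ((ρ.mem_finsupport y).mpr this)
    rw [hsum]
    have hl := e.linear ℝ hy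
    have : (e ⟨y, ∑ i ∈ T, ρ i y • s i y⟩).2
        = (IsLinearMap.mk' _ hl) (∑ i ∈ T, ρ i y • s i y) := rfl
    rw [this, map_sum]
    exact Finset.sum_congr rfl fun i _ => by rw [map_smul]; rfl
  have hterm : ∀ i ∈ T, ContinuousAt (fun y => ρ i y • (e ⟨y, s i y⟩).2) x₀ := by
    intro i hi
    have hiU : x₀ ∈ U i := hρ i ((ρ.mem_fintsupport_iff x₀ i).mp hi)
    have : ContinuousOn (fun y => ρ i y • (e ⟨y, s i y⟩).2) (U i ∩ e.baseSet) :=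
      ((ρ i).continuous.continuousOn).smul (aux_snd_continuousOn (hs i) e)
    exact this.continuousAt (((hUo i).inter e.open_baseSet).mem_nhds ⟨hiU, hbase⟩)
  have hmain : ContinuousAt (fun y => ∑ i ∈ T, ρ i y • (e ⟨y, s i y⟩).2) x₀ :=
    tendsto_finset_sum T fun i hi => hterm i hi
  refine hmain.congr_of_eventuallyEq ?_
  filter_upwards [e.open_baseSet.mem_nhds hbase, ρ.eventually_finsupport_subset x₀]
    with y hy hfs
  exact key y hy hfs

end Aux

/-- For continuous sections `f₁, f₂` of a topological vector bundle over a Hausdorff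
paracompact base with a continuous grade `g`, local continuous factorizations of `f₂ − f₁`
through `g^r` near every zero of `g` are equivalent to a global continuous factorization. -/
theorem local_iff_global_contact_factorization_of_sections
    {M : Type*} [TopologicalSpace M] [T2Space M] [ParacompactSpace M]
    (g : M → ℝ) (hg : Continuous g)
    {F : Type*} [NormedAddCommGroup F] [NormedSpace ℝ F]
    (E : M → Type*) [∀ x, AddCommGroup (E x)] [∀ x, Module ℝ (E x)]
    [TopologicalSpace (Bundle.TotalSpace F E)] [∀ x, TopologicalSpace (E x)]
    [FiberBundle F E] [VectorBundle ℝ F E]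
    (r : ℕ) (f₁ f₂ : ∀ x, E x)
    (hf₁ : Continuous fun x => (⟨x, f₁ x⟩ : Bundle.TotalSpace F E))
    (hf₂ : Continuous fun x => (⟨x, f₂ x⟩ : Bundle.TotalSpace F E)) :
    (∀ m₀ : M, g m₀ = 0 → ∃ U : Set M, IsOpen U ∧ m₀ ∈ U ∧
      ∃ δf : ∀ x, E x,
        ContinuousOn (fun x => (⟨x, δf x⟩ : Bundle.TotalSpace F E)) U ∧
        ∀ m ∈ U, f₂ m - f₁ m = g m ^ r • δf m) ↔
    (∃ δf : ∀ x, E x,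
      Continuous (fun x => (⟨x, δf x⟩ : Bundle.TotalSpace F E)) ∧
      ∀ m : M, f₂ m - f₁ m = g m ^ r • δf m) := by
  constructor
  · intro H
    -- local data around every point of `M`
    have key : ∀ m₀ : M, ∃ U : Set M, ∃ s : ∀ x, E x, IsOpen U ∧ m₀ ∈ U ∧
        ContinuousOn (fun x => (⟨x, s x⟩ : Bundle.TotalSpace F E)) U ∧
        ∀ m ∈ U, f₂ m - f₁ m = g m ^ r • s m := by
      intro m₀
      by_cases h : g m₀ = 0
      · obtain ⟨U, hUo, hm, s, hsc, hfac⟩ := H m₀ h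
        exact ⟨U, s, hUo, hm, hsc, hfac⟩
      · refine ⟨{x | g x ≠ 0}, fun x => (g x ^ r)⁻¹ • (f₂ x - f₁ x) + (0 : ℝ) • (f₂ x - f₁ x),
          ?_, h, ?_, ?_⟩
        · exact isOpen_compl_singleton.preimage hg
        · have hd : Continuous fun x => (⟨x, f₂ x - f₁ x⟩ : Bundle.TotalSpace F E) := by
            have := aux_comb_continuousOn (E := E) hf₂ hf₁
              (u := fun _ => (1:ℝ)) (v := fun _ => (-1:ℝ)) (U := univ)
              continuousOn_const continuousOn_const
            rw [← continuousOn_univ]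
            simp only [one_smul, neg_one_smul, ← sub_eq_add_neg] at this
            exact this
          exact aux_comb_continuousOn (E := E) hd hd
            (((hg.pow r).continuousOn).inv₀ fun x hx => pow_ne_zero r hx)
            continuousOn_const
        · intro m hm
          have hgr : g m ^ r ≠ 0 := pow_ne_zero r hm
          show f₂ m - f₁ m
            = g m ^ r • ((g m ^ r)⁻¹ • (f₂ m - f₁ m) + (0 : ℝ) • (f₂ m - f₁ m))
          rw [zero_smul, add_zero, smul_smul, mul_inv_cancel₀ hgr, one_smul]
    choose U s hUo hmem hsc hfac using key
    -- partition of unity subordinate to the cover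
    obtain ⟨ρ, hρ⟩ := PartitionOfUnity.exists_isSubordinate (ι := M) (s := univ)
      isClosed_univ U hUo (fun x _ => mem_iUnion.mpr ⟨x, hmem x⟩)
    refine ⟨fun x => ∑ᶠ i, ρ i x • s i x, aux_glue_continuous hUo hsc ρ hρ, ?_⟩
    intro m
    have hfin : ∑ᶠ i, ρ i m • s i m = ∑ i ∈ ρ.finsupport m, ρ i m • s i m :=
      (ρ.sum_finsupport_smul_eq_finsum (x₀ := m) (fun i _ => s i m)).symm
    show f₂ m - f₁ m = g m ^ r • ∑ᶠ i, ρ i m • s i m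
    rw [hfin, Finset.smul_sum]
    have : ∀ i ∈ ρ.finsupport m, g m ^ r • ρ i m • s i m = ρ i m • (f₂ m - f₁ m) := by
      intro i hi
      have hsupp : m ∈ Function.support (ρ i) := (ρ.mem_finsupport m).mp hi
      have hiU : m ∈ U i := hρ i (subset_tsupport _ hsupp)
      rw [smul_comm, ← hfac i m hiU]
    rw [Finset.sum_congr rfl this, ← Finset.sum_smul, ρ.sum_finsupport (mem_univ m), one_smul]
  · rintro ⟨δf, hc, hfac⟩ m₀ _
    exact ⟨univ, isOpen_univ, mem_univ _, δf, hc.continuousOn, fun m _ => hfac m⟩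
end
end

section
/- Let a > 0, let U ⊆ ℝ^d be open, let k ≥ 2 and r ≥ 1 be natural numbers with r + 1 ≤ k − 1, and let L₁, L₂ : (−a,a) × U → ℝ be of class C^k with L_j(0,x) = 0 for all x ∈ U. Define L̂_j : (−a,a) × U → ℝ by L̂_j(h,x) = L_j(h,x)/h for h ≠ 0 and L̂_j(0,x) = D₁L_j(0,x), where D₁ denotes the partial derivative with respect to h. Suppose there is a continuous function δL : (−a,a) × U → ℝ with L₂(h,x) − L₁(h,x) = h^{r+1}·δL(h,x) for all (h,x). Then: (i) L̂₁ and L̂₂ are of class C^{k−1}; (ii) there is a continuous function δ : (−a,a) × U → ℝ with L̂₂(h,x) − L̂₁(h,x) = h^r·δ(h,x) for all (h,x); and (iii) there is a continuous map δ′ : (−a,a) × U → Hom(ℝ^d, ℝ) with D_x L̂₂(h,x) − D_x L̂₁(h,x) = h^r·δ′(h,x) for all (h,x), where D_x denotes the partial Fréchet derivative with respect to the U-variable. -/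
open Set

noncomputable section

open MeasureTheory intervalIntegral ContinuousLinearMap Filter Topology
open scoped Interval

set_option linter.unusedSectionVars false
set_option linter.unusedVariables false
set_option synthInstance.maxHeartbeats 1000000
set_option maxHeartbeats 4000000

section Aux
variable {E : Type} [NormedAddCommGroup E] [NormedSpace ℝ E] [ProperSpace E]

theorem sliceContOn {F : Type} [NormedAddCommGroup F] {φ : ℝ × E → F} {T : Set ℝ}
    {s : Set E} (hφ : ContinuousOn φ (T ×ˢ s)) {x : E} (hx : x ∈ s) :
    ContinuousOn (fun t => φ (t, x)) T := by
  have h1 : ContinuousOn (fun t : ℝ => ((t, x) : ℝ × E)) T :=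
    (continuous_id.prodMk continuous_const).continuousOn
  exact hφ.comp h1 (fun u hu => ⟨hu, hx⟩)


/-- Smoothness of a parametric interval integral. -/
theorem key_parametric (m : ℕ) :
    ∀ {F : Type} [NormedAddCommGroup F] [NormedSpace ℝ F] [CompleteSpace F]
      (φ : ℝ × E → F) (T : Set ℝ) (s : Set E), IsOpen T → IsOpen s →
      Icc (0:ℝ) 1 ⊆ T → ContDiffOn ℝ m φ (T ×ˢ s) →
      ContDiffOn ℝ m (fun x => ∫ t in (0:ℝ)..1, φ (t, x)) s := by
  induction m with
  | zero =>
    intro F _ _ _ φ T s hT hs hT1 hφ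
    simp only [Nat.cast_zero, contDiffOn_zero] at hφ ⊢
    intro x₀ hx₀
    apply ContinuousAt.continuousWithinAt
    -- choose a closed ball around x₀ inside s
    obtain ⟨ε, εpos, hball⟩ : ∃ ε > 0, Metric.closedBall x₀ ε ⊆ s := by
      rcases (Metric.nhds_basis_closedBall.mem_iff).1 (hs.mem_nhds hx₀) with ⟨ε, εpos, h⟩
      exact ⟨ε, εpos, h⟩
    have hKsub : Icc (0:ℝ) 1 ×ˢ Metric.closedBall x₀ ε ⊆ T ×ˢ s :=
      prod_mono hT1 hball
    have hK : IsCompact (Icc (0:ℝ) 1 ×ˢ Metric.closedBall x₀ ε) :=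
      isCompact_Icc.prod (isCompact_closedBall x₀ ε)
    obtain ⟨C, hC⟩ := hK.exists_bound_of_continuousOn (hφ.mono hKsub)
    have hIsub : Ι (0:ℝ) 1 ⊆ Icc (0:ℝ) 1 := by
      rw [uIoc_of_le zero_le_one]; exact Ioc_subset_Icc_self
    apply continuousAt_of_dominated_interval (bound := fun _ => C)
    · filter_upwards [hs.mem_nhds hx₀] with x hx
      exact (((sliceContOn hφ hx).mono (hIsub.trans hT1)).aestronglyMeasurable
        measurableSet_uIoc)
    · filter_upwards [Metric.closedBall_mem_nhds x₀ εpos] with x hx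
      refine Filter.Eventually.of_forall fun t ht => ?_
      exact hC (t, x) ⟨hIsub ht, hx⟩
    · exact intervalIntegrable_const
    · refine Filter.Eventually.of_forall fun t ht => ?_
      have : ContinuousAt φ (t, x₀) :=
        hφ.continuousAt ((hT.prod hs).mem_nhds ⟨hT1 (hIsub ht), hx₀⟩)
      exact this.comp ((continuous_const.prodMk continuous_id).continuousAt)
  | succ m ih =>
    intro F _ _ _ φ T s hT hs hT1 hφ
    -- the integrand for the derivative
    set ψ : ℝ × E → (E →L[ℝ] F) := fun q => (fderiv ℝ φ q).comp (inr ℝ ℝ E) with hψdef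
    have hψ : ContDiffOn ℝ m ψ (T ×ˢ s) := by
      have : ContDiffOn ℝ m (fderiv ℝ φ) (T ×ˢ s) :=
        hφ.fderiv_of_isOpen (hT.prod hs) (by exact_mod_cast le_refl _)
      exact this.clm_comp contDiffOn_const
    have hIsub : Ι (0:ℝ) 1 ⊆ Icc (0:ℝ) 1 := by
      rw [uIoc_of_le zero_le_one]; exact Ioc_subset_Icc_self
    have hderiv : ∀ x₀ ∈ s, HasFDerivAt (fun x => ∫ t in (0:ℝ)..1, φ (t, x))
        (∫ t in (0:ℝ)..1, ψ (t, x₀)) x₀ := by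
      intro x₀ hx₀
      obtain ⟨ε, εpos, hball⟩ : ∃ ε > 0, Metric.closedBall x₀ ε ⊆ s := by
        rcases (Metric.nhds_basis_closedBall.mem_iff).1 (hs.mem_nhds hx₀) with ⟨ε, εpos, h⟩
        exact ⟨ε, εpos, h⟩
      have hKsub : Icc (0:ℝ) 1 ×ˢ Metric.closedBall x₀ ε ⊆ T ×ˢ s :=
        prod_mono hT1 hball
      have hK : IsCompact (Icc (0:ℝ) 1 ×ˢ Metric.closedBall x₀ ε) :=
        isCompact_Icc.prod (isCompact_closedBall x₀ ε)
      obtain ⟨C, hC⟩ := hK.exists_bound_of_continuousOn ((hψ.continuousOn).mono hKsub)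
      have hdiffφ : ∀ t ∈ Ι (0:ℝ) 1, ∀ x ∈ s, HasFDerivAt (fun x => φ (t, x)) (ψ (t, x)) x := by
        intro t ht x hx
        have h1 : DifferentiableAt ℝ φ (t, x) := by
          have := (hφ.differentiableOn (by exact_mod_cast Nat.succ_ne_zero m)) (t, x)
            ⟨hT1 (hIsub ht), hx⟩
          exact this.differentiableAt ((hT.prod hs).mem_nhds ⟨hT1 (hIsub ht), hx⟩)
        exact h1.hasFDerivAt.comp x (hasFDerivAt_prodMk_right t x)
      have := (intervalIntegral.hasFDerivAt_integral_of_dominated_of_fderiv_le (𝕜 := ℝ)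
        (F := fun x t => φ (t, x)) (F' := fun x t => ψ (t, x)) (bound := fun _ => C)
        (x₀ := x₀) (a := 0) (b := 1) (μ := MeasureTheory.volume)
        (s := Metric.ball x₀ ε) (Metric.ball_mem_nhds x₀ εpos) ?_ ?_ ?_ ?_ ?_ ?_)
      · exact this
      · filter_upwards [hs.mem_nhds hx₀] with x hx
        exact (((sliceContOn hφ.continuousOn hx).mono (hIsub.trans hT1)).aestronglyMeasurable
          measurableSet_uIoc)
      · apply ContinuousOn.intervalIntegrable
        apply (sliceContOn hφ.continuousOn hx₀).mono
        rw [uIcc_of_le zero_le_one]; exact hT1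
      · exact (((sliceContOn hψ.continuousOn hx₀).mono (hIsub.trans hT1)).aestronglyMeasurable
          measurableSet_uIoc)
      · refine Filter.Eventually.of_forall fun t ht => fun x hx => ?_
        exact hC (t, x) ⟨hIsub ht, Metric.ball_subset_closedBall hx⟩
      · exact intervalIntegrable_const
      · refine Filter.Eventually.of_forall fun t ht => fun x hx => ?_
        exact hdiffφ t ht x (hball (Metric.ball_subset_closedBall hx))
    rw [show ((m + 1 : ℕ) : WithTop ℕ∞) = (m : WithTop ℕ∞) + 1 by norm_cast]
    rw [contDiffOn_succ_iff_fderiv_of_isOpen hs]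
    refine ⟨fun x hx => ((hderiv x hx).differentiableAt).differentiableWithinAt, by simp, ?_⟩
    have heq : ∀ x ∈ s, fderiv ℝ (fun x => ∫ t in (0:ℝ)..1, φ (t, x)) x
        = ∫ t in (0:ℝ)..1, ψ (t, x) := fun x hx => (hderiv x hx).fderiv
    exact (ih ψ T s hT hs hT1 hψ).congr heq

/-- The "hat" of a function: `F(h,x)/h` realized as an integral. -/
def hatF (F : ℝ × E → ℝ) : ℝ × E → ℝ :=
  fun p => ∫ t in (0:ℝ)..1, fderiv ℝ F (t * p.1, p.2) (1, 0)

variable {a : ℝ} {U : Set E} {F : ℝ × E → ℝ}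

theorem hat_contDiffOn (ha : 0 < a) (hU : IsOpen U) (n : ℕ) (hn : 1 ≤ n)
    (hF : ContDiffOn ℝ n F (Ioo (-a) a ×ˢ U)) :
    ContDiffOn ℝ (↑(n-1)) (hatF F) (Ioo (-a) a ×ˢ U) := by
  have hSopen : IsOpen (Ioo (-a) a ×ˢ U) := isOpen_Ioo.prod hU
  apply contDiffOn_of_locally_contDiffOn
  rintro ⟨h₀, x₀⟩ ⟨hh₀, hx₀⟩
  have habs : |h₀| < a := abs_lt.2 ⟨hh₀.1, hh₀.2⟩
  set c : ℝ := (|h₀| + a) / 2 with hc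
  have hc0 : 0 < c := by positivity
  have hcs : |h₀| < c := by rw [hc]; linarith
  have hca : c < a := by rw [hc]; linarith
  set ε : ℝ := (a - c) / (2 * c) with hε
  have hε0 : 0 < ε := by apply div_pos <;> [linarith; linarith]
  refine ⟨Ioo (-c) c ×ˢ (univ : Set E), (isOpen_Ioo.prod isOpen_univ), ⟨abs_lt.1 hcs, mem_univ _⟩, ?_⟩
  have hinter : (Ioo (-a) a ×ˢ U) ∩ (Ioo (-c) c ×ˢ (univ : Set E))
      = Ioo (-c) c ×ˢ U := by
    rw [prod_inter_prod, inter_univ, inter_eq_self_of_subset_right]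
    exact Ioo_subset_Ioo (by linarith) (by linarith)
  rw [hinter]
  set T : Set ℝ := Ioo (-ε) (1 + ε) with hT
  have hT1 : Icc (0:ℝ) 1 ⊆ T := fun t ht => ⟨by cases ht; linarith, by cases ht; linarith⟩
  have hmaps : MapsTo (fun q : ℝ × (ℝ × E) => (q.1 * q.2.1, q.2.2))
      (T ×ˢ (Ioo (-c) c ×ˢ U)) (Ioo (-a) a ×ˢ U) := by
    rintro ⟨t, h, x⟩ ⟨⟨ht1, ht2⟩, ⟨hh1, hh2⟩, hx⟩
    refine ⟨abs_lt.1 ?_, hx⟩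
    have h1 : |t| < 1 + ε := abs_lt.2 ⟨by linarith, ht2⟩
    have h2 : |h| < c := abs_lt.2 ⟨hh1, hh2⟩
    calc |t * h| = |t| * |h| := abs_mul t h
    _ < (1 + ε) * c := by
        apply mul_lt_mul' h1.le h2 (abs_nonneg h) (by linarith)
    _ < a := by
        have hεc : ε * c = (a - c) / 2 := by
          rw [hε]; field_simp
        nlinarith
  have hθ : ContDiffOn ℝ (↑(n-1)) (fun q : ℝ × (ℝ × E) => (q.1 * q.2.1, q.2.2))
      (T ×ˢ (Ioo (-c) c ×ˢ U)) :=
    ((contDiff_fst.mul (contDiff_fst.comp contDiff_snd)).prodMk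
      (contDiff_snd.comp contDiff_snd)).contDiffOn
  have hdF : ContDiffOn ℝ (↑(n-1)) (fderiv ℝ F) (Ioo (-a) a ×ˢ U) := by
    apply hF.fderiv_of_isOpen hSopen
    have : (n - 1 : ℕ) + 1 = n := by omega
    exact_mod_cast this.le
  have hφ : ContDiffOn ℝ (↑(n-1))
      (fun q : ℝ × (ℝ × E) => fderiv ℝ F (q.1 * q.2.1, q.2.2) ((1:ℝ), (0:E)))
      (T ×ˢ (Ioo (-c) c ×ˢ U)) :=
    (hdF.comp hθ hmaps).clm_apply contDiffOn_const
  exact key_parametric (n-1)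
    (fun q : ℝ × (ℝ × E) => fderiv ℝ F (q.1 * q.2.1, q.2.2) ((1:ℝ), (0:E)))
    T (Ioo (-c) c ×ˢ U) isOpen_Ioo (isOpen_Ioo.prod hU) hT1 hφ

theorem slice_hasDerivAt (ha : 0 < a) (hU : IsOpen U)
    (hF : ContDiffOn ℝ 1 F (Ioo (-a) a ×ˢ U)) {x : E} (hx : x ∈ U) :
    ∀ u ∈ Ioo (-a) a, HasDerivAt (fun v => F (v, x))
      (fderiv ℝ F (u, x) ((1:ℝ), (0:E))) u := by
  intro u hu
  have hd : DifferentiableAt ℝ F (u, x) :=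
    ((hF.differentiableOn one_ne_zero) (u, x) ⟨hu, hx⟩).differentiableAt
      (((isOpen_Ioo.prod hU)).mem_nhds ⟨hu, hx⟩)
  have hg : HasDerivAt (fun v : ℝ => ((v, x) : ℝ × E)) ((1:ℝ), (0:E)) u :=
    (hasDerivAt_id u).prodMk (hasDerivAt_const u x)
  exact hd.hasFDerivAt.comp_hasDerivAt u hg

theorem slice_deriv_contOn (ha : 0 < a) (hU : IsOpen U)
    (hF : ContDiffOn ℝ 1 F (Ioo (-a) a ×ˢ U)) {x : E} (hx : x ∈ U) :
    ContinuousOn (fun u => fderiv ℝ F (u, x) ((1:ℝ), (0:E))) (Ioo (-a) a) := by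
  have h1 : ContinuousOn (fderiv ℝ F) (Ioo (-a) a ×ˢ U) :=
    hF.continuousOn_fderiv_of_isOpen (isOpen_Ioo.prod hU) le_rfl
  exact (sliceContOn h1 hx).clm_apply continuousOn_const

theorem hat_eq_div (ha : 0 < a) (hU : IsOpen U)
    (hF : ContDiffOn ℝ 1 F (Ioo (-a) a ×ˢ U)) (hF0 : ∀ x ∈ U, F (0, x) = 0)
    {h : ℝ} {x : E} (hmem : (h, x) ∈ Ioo (-a) a ×ˢ U) (hh : h ≠ 0) :
    hatF F (h, x) = F (h, x) / h := by
  obtain ⟨hha, hx⟩ := hmem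
  have hsub : uIcc (0:ℝ) h ⊆ Ioo (-a) a := by
    intro u hu
    rw [mem_uIcc] at hu
    rcases hu with ⟨h3, h4⟩ | ⟨h3, h4⟩ <;>
      exact ⟨by linarith [hha.1, hha.2], by linarith [hha.1, hha.2]⟩
  have hder := slice_hasDerivAt ha hU hF hx
  have hcont := slice_deriv_contOn ha hU hF hx
  have hFTC : ∫ u in (0:ℝ)..h, fderiv ℝ F (u, x) ((1:ℝ), (0:E)) = F (h, x) - F (0, x) := by
    apply integral_eq_sub_of_hasDerivAt (fun u hu => hder u (hsub hu))
    exact (hcont.mono hsub).intervalIntegrable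
  have hsubst : hatF F (h, x)
      = h⁻¹ • ∫ u in (0:ℝ)..h, fderiv ℝ F (u, x) ((1:ℝ), (0:E)) := by
    have := integral_comp_mul_right
      (fun u => fderiv ℝ F (u, x) ((1:ℝ), (0:E))) (a := 0) (b := 1) hh
    simpa [hatF] using this
  rw [hsubst, hFTC, hF0 x hx, sub_zero, smul_eq_mul, inv_mul_eq_div]

theorem hat_zero (F : ℝ × E → ℝ) (x : E) :
    hatF F (0, x) = fderiv ℝ F (0, x) ((1:ℝ), (0:E)) := by
  simp [hatF]

theorem derivWithin_slice (ha : 0 < a) (hU : IsOpen U)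
    (hF : ContDiffOn ℝ 1 F (Ioo (-a) a ×ˢ U)) {x : E} (hx : x ∈ U) :
    derivWithin (fun h => F (h, x)) (Ioo (-a) a) 0
      = fderiv ℝ F (0, x) ((1:ℝ), (0:E)) := by
  have h0 : (0:ℝ) ∈ Ioo (-a) a := by constructor <;> linarith
  exact ((slice_hasDerivAt ha hU hF hx 0 h0).hasDerivWithinAt).derivWithin
    (isOpen_Ioo.uniqueDiffWithinAt h0)

end Aux

/-- If two discrete Lagrangians `L₁, L₂` of class `C^k`, vanishing at `h = 0`, have
order-`h^{r+1}` contact, then their hat versions `L̂_j = L_j/h` (extended at `h = 0` by the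
`h`-derivative) are `C^{k−1}` and have order-`h^r` contact, as do their fiber derivatives in
the `x`-directions. -/
theorem hat_lagrangians_contact_order
    (a : ℝ) (ha : 0 < a) {d : ℕ}
    (U : Set (EuclideanSpace ℝ (Fin d))) (hU : IsOpen U)
    (k r : ℕ) (hk : 2 ≤ k) (hr : 1 ≤ r) (hrk : r + 1 ≤ k - 1)
    (L₁ L₂ : ℝ × EuclideanSpace ℝ (Fin d) → ℝ)
    (hL₁ : ContDiffOn ℝ k L₁ (Ioo (-a) a ×ˢ U))
    (hL₂ : ContDiffOn ℝ k L₂ (Ioo (-a) a ×ˢ U))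
    (hL₁0 : ∀ x ∈ U, L₁ (0, x) = 0) (hL₂0 : ∀ x ∈ U, L₂ (0, x) = 0)
    (Lh₁ Lh₂ : ℝ × EuclideanSpace ℝ (Fin d) → ℝ)
    (hLh₁ : ∀ (h : ℝ) (x : EuclideanSpace ℝ (Fin d)), h ≠ 0 →
      Lh₁ (h, x) = L₁ (h, x) / h)
    (hLh₁0 : ∀ x : EuclideanSpace ℝ (Fin d),
      Lh₁ (0, x) = derivWithin (fun h => L₁ (h, x)) (Ioo (-a) a) 0)
    (hLh₂ : ∀ (h : ℝ) (x : EuclideanSpace ℝ (Fin d)), h ≠ 0 →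
      Lh₂ (h, x) = L₂ (h, x) / h)
    (hLh₂0 : ∀ x : EuclideanSpace ℝ (Fin d),
      Lh₂ (0, x) = derivWithin (fun h => L₂ (h, x)) (Ioo (-a) a) 0)
    (δL : ℝ × EuclideanSpace ℝ (Fin d) → ℝ)
    (hδL : ContinuousOn δL (Ioo (-a) a ×ˢ U))
    (hfac : ∀ h ∈ Ioo (-a) a, ∀ x ∈ U,
      L₂ (h, x) - L₁ (h, x) = h ^ (r + 1) * δL (h, x)) :
    (ContDiffOn ℝ (k - 1 : ℕ) Lh₁ (Ioo (-a) a ×ˢ U) ∧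
      ContDiffOn ℝ (k - 1 : ℕ) Lh₂ (Ioo (-a) a ×ˢ U)) ∧
    (∃ δ : ℝ × EuclideanSpace ℝ (Fin d) → ℝ,
      ContinuousOn δ (Ioo (-a) a ×ˢ U) ∧
      ∀ h ∈ Ioo (-a) a, ∀ x ∈ U, Lh₂ (h, x) - Lh₁ (h, x) = h ^ r * δ (h, x)) ∧
    (∃ δ' : ℝ × EuclideanSpace ℝ (Fin d) → (EuclideanSpace ℝ (Fin d) →L[ℝ] ℝ),
      ContinuousOn δ' (Ioo (-a) a ×ˢ U) ∧
      ∀ h ∈ Ioo (-a) a, ∀ x ∈ U,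
        fderiv ℝ (fun x' => Lh₂ (h, x')) x - fderiv ℝ (fun x' => Lh₁ (h, x')) x =
          h ^ r • δ' (h, x)) := by
  set S := Ioo (-a) a ×ˢ U with hS
  have hSopen : IsOpen S := isOpen_Ioo.prod hU
  have h0Ioo : (0:ℝ) ∈ Ioo (-a) a := ⟨by linarith, ha⟩
  have hL₁C1 : ContDiffOn ℝ 1 L₁ S := hL₁.of_le (show (1 : WithTop ℕ∞) ≤ (k:ℕ) by exact_mod_cast (by omega : 1 ≤ k))
  have hL₂C1 : ContDiffOn ℝ 1 L₂ S := hL₂.of_le (show (1 : WithTop ℕ∞) ≤ (k:ℕ) by exact_mod_cast (by omega : 1 ≤ k))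
  -- Part (i)
  have heq₁ : EqOn Lh₁ (hatF L₁) S := by
    rintro ⟨h, x⟩ ⟨hh, hx⟩
    by_cases h0 : h = 0
    · subst h0
      rw [hLh₁0 x, derivWithin_slice ha hU hL₁C1 hx, hat_zero]
    · rw [hLh₁ h x h0, hat_eq_div ha hU hL₁C1 hL₁0 ⟨hh, hx⟩ h0]
  have heq₂ : EqOn Lh₂ (hatF L₂) S := by
    rintro ⟨h, x⟩ ⟨hh, hx⟩
    by_cases h0 : h = 0
    · subst h0
      rw [hLh₂0 x, derivWithin_slice ha hU hL₂C1 hx, hat_zero]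
    · rw [hLh₂ h x h0, hat_eq_div ha hU hL₂C1 hL₂0 ⟨hh, hx⟩ h0]
  have hC₁ : ContDiffOn ℝ (↑(k-1)) Lh₁ S :=
    (hat_contDiffOn ha hU k (by omega) hL₁).congr (fun p hp => heq₁ hp)
  have hC₂ : ContDiffOn ℝ (↑(k-1)) Lh₂ S :=
    (hat_contDiffOn ha hU k (by omega) hL₂).congr (fun p hp => heq₂ hp)
  -- the difference and its iterated hats
  set G : ℝ × EuclideanSpace ℝ (Fin d) → ℝ := fun p => L₂ p - L₁ p with hGdef
  have hG : ContDiffOn ℝ k G S := hL₂.sub hL₁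
  have hG0 : ∀ x ∈ U, G (0, x) = 0 := by
    intro x hx; simp [hGdef, hL₁0 x hx, hL₂0 x hx]
  set gs : ℕ → (ℝ × EuclideanSpace ℝ (Fin d) → ℝ) := fun i => hatF^[i] G with hgsdef
  have hgs_succ : ∀ i, gs (i+1) = hatF (gs i) := by
    intro i; simp [hgsdef, Function.iterate_succ_apply']
  have hgs0 : gs 0 = G := rfl
  -- zero value at h = 0 for i ≤ r
  have hZ : ∀ i, i ≤ r → ContDiffOn ℝ (↑(k-i)) (gs i) S →
      (∀ h x, (h, x) ∈ S → h ≠ 0 → gs i (h, x) = G (h, x) / h ^ i) →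
      ∀ x ∈ U, gs i (0, x) = 0 := by
    intro i hir hQ1 hQ2 x hx
    set u : ℕ → ℝ := fun n => a / (n + 2) with hu
    have hu0 : ∀ n, 0 < u n := by
      intro n; apply div_pos ha; positivity
    have hua : ∀ n, u n < a := by
      intro n
      rw [hu, div_lt_iff₀ (by positivity)]
      nlinarith [hu0 n, (by positivity : (0:ℝ) < (n:ℝ) + 2)]
    have humem : ∀ n, (u n, x) ∈ S := fun n =>
      ⟨⟨by linarith [hu0 n], hua n⟩, hx⟩
    have hulim : Tendsto u atTop (𝓝 0) := by
      rw [hu]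
      have h1 : Tendsto (fun n : ℕ => ((n:ℝ) + 2)) atTop atTop :=
        tendsto_atTop_add_const_right _ 2 tendsto_natCast_atTop_atTop
      simpa [div_eq_mul_inv] using h1.inv_tendsto_atTop.const_mul a
    have hplim : Tendsto (fun n => ((u n, x) : ℝ × EuclideanSpace ℝ (Fin d))) atTop (𝓝[S] (0, x)) := by
      rw [tendsto_nhdsWithin_iff]
      exact ⟨(hulim.prodMk_nhds tendsto_const_nhds), Eventually.of_forall humem⟩
    have h1 : Tendsto (fun n => gs i (u n, x)) atTop (𝓝 (gs i (0, x))) :=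
      ((hQ1.continuousOn (0, x) ⟨h0Ioo, hx⟩).tendsto).comp hplim
    have h2 : Tendsto (fun n => gs i (u n, x)) atTop (𝓝 0) := by
      have heqn : ∀ n, gs i (u n, x) = (u n) ^ (r + 1 - i) * δL (u n, x) := by
        intro n
        rw [hQ2 _ _ (humem n) (ne_of_gt (hu0 n)), hGdef]
        simp only []
        rw [hfac (u n) ⟨by linarith [hu0 n], hua n⟩ x hx]
        have hsplit : (u n) ^ (r + 1) = (u n) ^ i * (u n) ^ (r + 1 - i) := by
          rw [← pow_add]; congr 1; omega
        rw [hsplit, mul_assoc, mul_comm ((u n) ^ i), mul_div_assoc]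
        rw [div_self (pow_ne_zero i (ne_of_gt (hu0 n))), mul_one]
      have hδlim : Tendsto (fun n => δL (u n, x)) atTop (𝓝 (δL (0, x))) :=
        ((hδL (0, x) ⟨h0Ioo, hx⟩).tendsto).comp hplim
      have hplow : Tendsto (fun n => (u n) ^ (r + 1 - i)) atTop (𝓝 0) := by
        have := hulim.pow (r + 1 - i)
        rwa [zero_pow (by omega : r + 1 - i ≠ 0)] at this
      have := hplow.mul hδlim
      rw [zero_mul] at this
      exact Tendsto.congr (fun n => (heqn n).symm) this
    exact tendsto_nhds_unique h1 h2
  -- main induction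
  have hQ : ∀ i, i ≤ r + 1 → ContDiffOn ℝ (↑(k-i)) (gs i) S ∧
      (∀ h x, (h, x) ∈ S → h ≠ 0 → gs i (h, x) = G (h, x) / h ^ i) := by
    intro i
    induction i with
    | zero =>
      intro _
      exact ⟨by simpa [hgs0] using hG, by intro h x _ _; simp [hgs0]⟩
    | succ i IH =>
      intro hle
      have hir : i ≤ r := by omega
      obtain ⟨hQ1, hQ2⟩ := IH (by omega)
      have hzero : ∀ x ∈ U, gs i (0, x) = 0 := hZ i hir hQ1 hQ2
      have hki : 1 ≤ k - i := by omega
      have hC1 : ContDiffOn ℝ 1 (gs i) S := hQ1.of_le (show (1 : WithTop ℕ∞) ≤ ((k-i:ℕ)) by exact_mod_cast hki)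
      constructor
      · rw [hgs_succ]
        have h1 := hat_contDiffOn ha hU (k-i) hki hQ1
        have hcast : k - i - 1 = k - (i+1) := by omega
        rwa [hcast] at h1
      · intro h x hmem hh
        rw [hgs_succ, hat_eq_div ha hU hC1 hzero hmem hh, hQ2 h x hmem hh,
          div_div, ← pow_succ]
  obtain ⟨hgC, hgdiv⟩ := hQ (r+1) le_rfl
  set g := gs (r+1) with hgdef2
  have hg1 : ContDiffOn ℝ 1 g S :=
    hgC.of_le (show (1 : WithTop ℕ∞) ≤ ((k-(r+1):ℕ)) by exact_mod_cast (by omega : 1 ≤ k - (r+1)))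
  obtain ⟨hQ11, hQ12⟩ := hQ 1 (by omega)
  have hz1 : ∀ x ∈ U, gs 1 (0, x) = 0 := hZ 1 hr hQ11 hQ12
  -- the difference of hats equals h^r * g on S
  have hDiff : EqOn (fun p : ℝ × EuclideanSpace ℝ (Fin d) => Lh₂ p - Lh₁ p) (fun p : ℝ × EuclideanSpace ℝ (Fin d) => p.1 ^ r * g p) S := by
    rintro ⟨h, x⟩ ⟨hh, hx⟩
    by_cases h0 : h = 0
    · subst h0
      have hd1 : DifferentiableAt ℝ L₁ (0, x) :=
        ((hL₁C1.differentiableOn one_ne_zero) (0, x) ⟨h0Ioo, hx⟩).differentiableAt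
          (hSopen.mem_nhds ⟨h0Ioo, hx⟩)
      have hd2 : DifferentiableAt ℝ L₂ (0, x) :=
        ((hL₂C1.differentiableOn one_ne_zero) (0, x) ⟨h0Ioo, hx⟩).differentiableAt
          (hSopen.mem_nhds ⟨h0Ioo, hx⟩)
      have hfsub : fderiv ℝ G (0, x) = fderiv ℝ L₂ (0, x) - fderiv ℝ L₁ (0, x) :=
        fderiv_sub hd2 hd1
      have hgs1 : gs 1 (0, x) = fderiv ℝ G (0, x) ((1:ℝ), (0 : EuclideanSpace ℝ (Fin d))) := by
        rw [hgs_succ 0, hgs0, hat_zero]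
      have hzero1 : fderiv ℝ L₂ (0, x) ((1:ℝ), (0 : EuclideanSpace ℝ (Fin d)))
          - fderiv ℝ L₁ (0, x) ((1:ℝ), (0 : EuclideanSpace ℝ (Fin d))) = 0 := by
        have := hz1 x hx
        rw [hgs1, hfsub] at this
        simpa using this
      have e1 : Lh₂ (0, x) - Lh₁ (0, x) = 0 := by
        rw [hLh₁0 x, hLh₂0 x, derivWithin_slice ha hU hL₁C1 hx,
          derivWithin_slice ha hU hL₂C1 hx]
        exact hzero1
      simpa [zero_pow (by omega : r ≠ 0)] using e1
    · have hgd := hgdiv h x ⟨hh, hx⟩ h0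
      simp only []
      rw [hLh₁ h x h0, hLh₂ h x h0, hgd, hGdef]
      have hpow : h ^ (r + 1) = h ^ r * h := pow_succ h r
      field_simp [hpow]
      ring
  refine ⟨⟨hC₁, hC₂⟩, ⟨g, hg1.continuousOn, ?_⟩, ?_⟩
  · intro h hh x hx
    exact hDiff ⟨hh, hx⟩
  · refine ⟨fun p => (fderiv ℝ g p).comp (inr ℝ ℝ (EuclideanSpace ℝ (Fin d))), ?_, ?_⟩
    · exact (hg1.continuousOn_fderiv_of_isOpen hSopen le_rfl).clm_comp continuousOn_const
    · intro h hh x hx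
      have hmem : (h, x) ∈ S := ⟨hh, hx⟩
      have hnb : S ∈ 𝓝 ((h, x) : ℝ × EuclideanSpace ℝ (Fin d)) := hSopen.mem_nhds hmem
      have h1k : (1 : WithTop ℕ∞) ≤ ↑(k - 1) := by exact_mod_cast (by omega : 1 ≤ k - 1)
      have hd₂ : DifferentiableAt ℝ Lh₂ (h, x) :=
        ((hC₂.differentiableOn (by exact_mod_cast (show k - 1 ≠ 0 by omega))) (h, x) hmem).differentiableAt hnb
      have hd₁ : DifferentiableAt ℝ Lh₁ (h, x) :=
        ((hC₁.differentiableOn (by exact_mod_cast (show k - 1 ≠ 0 by omega))) (h, x) hmem).differentiableAt hnb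
      have hdg : DifferentiableAt ℝ g (h, x) :=
        ((hg1.differentiableOn one_ne_zero) (h, x) hmem).differentiableAt hnb
      have H₂ : HasFDerivAt (fun x' => Lh₂ (h, x'))
          ((fderiv ℝ Lh₂ (h, x)).comp (inr ℝ ℝ (EuclideanSpace ℝ (Fin d)))) x :=
        hd₂.hasFDerivAt.comp x (hasFDerivAt_prodMk_right h x)
      have H₁ : HasFDerivAt (fun x' => Lh₁ (h, x'))
          ((fderiv ℝ Lh₁ (h, x)).comp (inr ℝ ℝ (EuclideanSpace ℝ (Fin d)))) x :=
        hd₁.hasFDerivAt.comp x (hasFDerivAt_prodMk_right h x)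
      have Hsub : HasFDerivAt (fun p : ℝ × EuclideanSpace ℝ (Fin d) => Lh₂ p - Lh₁ p)
          (fderiv ℝ Lh₂ (h, x) - fderiv ℝ Lh₁ (h, x)) (h, x) :=
        hd₂.hasFDerivAt.sub hd₁.hasFDerivAt
      have Hpow : HasFDerivAt (fun p : ℝ × EuclideanSpace ℝ (Fin d) => p.1 ^ r)
          (((r : ℝ) * h ^ (r - 1)) • (fst ℝ ℝ (EuclideanSpace ℝ (Fin d)))) (h, x) :=
        (hasDerivAt_pow r h).comp_hasFDerivAt ((h, x) : ℝ × EuclideanSpace ℝ (Fin d)) hasFDerivAt_fst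
      have Hmul : HasFDerivAt (fun p : ℝ × EuclideanSpace ℝ (Fin d) => p.1 ^ r * g p)
          (h ^ r • fderiv ℝ g (h, x)
            + g (h, x) • (((r : ℝ) * h ^ (r - 1)) • (fst ℝ ℝ (EuclideanSpace ℝ (Fin d))))) (h, x) :=
        Hpow.mul hdg.hasFDerivAt
      have Hmul' : HasFDerivAt (fun p : ℝ × EuclideanSpace ℝ (Fin d) => Lh₂ p - Lh₁ p)
          (h ^ r • fderiv ℝ g (h, x)
            + g (h, x) • (((r : ℝ) * h ^ (r - 1)) • (fst ℝ ℝ (EuclideanSpace ℝ (Fin d))))) (h, x) :=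
        Hmul.congr_of_eventuallyEq (Filter.eventuallyEq_of_mem hnb hDiff)
      have huniq : fderiv ℝ Lh₂ (h, x) - fderiv ℝ Lh₁ (h, x)
          = h ^ r • fderiv ℝ g (h, x)
            + g (h, x) • (((r : ℝ) * h ^ (r - 1)) • (fst ℝ ℝ (EuclideanSpace ℝ (Fin d)))) :=
        Hsub.unique Hmul'
      rw [H₂.fderiv, H₁.fderiv]
      ext v
      have h5 : (fderiv ℝ Lh₂ (h, x) - fderiv ℝ Lh₁ (h, x)) ((0:ℝ), v)
          = (h ^ r • fderiv ℝ g (h, x)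
            + g (h, x) • (((r : ℝ) * h ^ (r - 1)) • (fst ℝ ℝ (EuclideanSpace ℝ (Fin d))))) ((0:ℝ), v) := by
        rw [huniq]
      simp only [ContinuousLinearMap.sub_apply, ContinuousLinearMap.add_apply,
        ContinuousLinearMap.smul_apply, ContinuousLinearMap.coe_fst',
        ContinuousLinearMap.coe_comp', Function.comp_apply, inr_apply,
        smul_eq_mul, mul_zero] at h5 ⊢
      linarith [h5]
end
end
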